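/- arXiv:2008.05059 — 9 statements merged into one kernel-verified Lean document; each statement's English description precedes it below -/
import Mathlib

section
/- Let Q be the uniform distribution on 𝒬 = {x ∈ F_2^3 : x1+x2+x3 = 0}, let V ≤ F_2^n be a linear subspace, let W = v + V^3 be an affine shift with Q^n(W) > 0, let P̃ = Q^n | W, and suppose S ⊆ [n] is a nonempty set such that membership in V is defined by equations x·A = 0 where ∑_{j∈S} A_j = 0 (A_j the rows of a matrix A ∈ F_2^{n×m}). Then for every j ∈ S, the marginal distribution of the j-th column X^j under P̃ is exactly Q (uniform on 𝒬). -/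
open Finset

-- bijection lemma
lemma fiber_card_eq (n m : ℕ) (A : Fin n → Fin m → ZMod 2)
    (v : Fin 3 → Fin n → ZMod 2) (S : Finset (Fin n)) (j : Fin n)
    (hj : j ∈ S)
    (hA : ∀ c : Fin m, ∑ j' ∈ S, A j' c = 0)
    (T : Finset (Fin 3 → Fin n → ZMod 2))
    (hT : T = Finset.univ.filter (fun x =>
      (∀ j' : Fin n, x 0 j' + x 1 j' + x 2 j' = 0) ∧
      (∀ (i : Fin 3) (c : Fin m), ∑ j' : Fin n, (x i j' - v i j') * A j' c = 0)))
    (q q' : Fin 3 → ZMod 2) (hq : q 0 + q 1 + q 2 = 0) (hq' : q' 0 + q' 1 + q' 2 = 0) :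
    (T.filter (fun x => ∀ i : Fin 3, x i j = q i)).card
      = (T.filter (fun x => ∀ i : Fin 3, x i j = q' i)).card := by
  classical
  set d : Fin 3 → ZMod 2 := fun i => q i + q' i with hd
  set φ : (Fin 3 → Fin n → ZMod 2) → (Fin 3 → Fin n → ZMod 2) :=
    fun x i j' => x i j' + (if j' ∈ S then d i else 0) with hφ
  have hφφ : ∀ x, φ (φ x) = x := by
    intro x; funext i j'
    simp only [hφ]
    by_cases h : j' ∈ S <;> simp [h, add_assoc, CharTwo.add_self_eq_zero]
  have key : ∀ (a b : Fin 3 → ZMod 2), a 0 + a 1 + a 2 = 0 → b 0 + b 1 + b 2 = 0 →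
      ∀ x, x ∈ T.filter (fun x => ∀ i : Fin 3, x i j = a i) →
      (fun y i j' => y i j' + (if j' ∈ S then a i + b i else 0)) x
        ∈ T.filter (fun x => ∀ i : Fin 3, x i j = b i) := by
    intro a b ha hb x hx
    rw [hT] at hx ⊢
    simp only [Finset.mem_filter, Finset.mem_univ, true_and] at hx ⊢
    obtain ⟨⟨h1, h2⟩, h3⟩ := hx
    refine ⟨⟨?_, ?_⟩, ?_⟩
    · intro j'
      by_cases h : j' ∈ S
      · simp only [h, if_true]
        have := h1 j'
        linear_combination this + ha + hb
      · simpa [h] using h1 j'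
    · intro i c
      have step : ∀ j' : Fin n,
          (x i j' + (if j' ∈ S then a i + b i else 0) - v i j') * A j' c
            = (x i j' - v i j') * A j' c + (if j' ∈ S then (a i + b i) * A j' c else 0) := by
        intro j'; by_cases h : j' ∈ S <;> simp [h] <;> ring
      rw [Finset.sum_congr rfl (fun j' _ => step j'), Finset.sum_add_distrib, h2 i c,
        zero_add, Finset.sum_ite_mem, Finset.univ_inter, ← Finset.mul_sum, hA, mul_zero]
    · intro i
      simp only [hj, if_true, h3 i]
      have : a i + (a i + b i) = b i := by
        rw [← add_assoc, CharTwo.add_self_eq_zero, zero_add]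
      exact this
  apply Finset.card_bij' (fun x _ => φ x) (fun y _ => φ y)
  · intro x hx; exact key q q' hq hq' x hx
  · intro y hy
    have := key q' q hq' hq y hy
    simpa [hφ, hd, add_comm (q' _) (q _)] using this
  · intro x _; exact hφφ x
  · intro y _; exact hφφ y

/-- Setup: `Q` is the GHZ query distribution on `F₂³` (uniform on triples summing
to `0`), `V = {x : x·A = 0} ≤ F₂ⁿ`, and `P̃ = Qⁿ` conditioned on the affine event
`W = v + V³`.  If `S ⊆ [n]` is nonempty with `∑_{j∈S} A_j = 0`, then for any
`j ∈ S`, the marginal distribution of the `j`-th column under `P̃` is exactly `Q`: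
each query triple `q` with `q₁+q₂+q₃ = 0` has conditional probability `1/4`. -/
theorem stmt_3 (n m : ℕ) (A : Fin n → Fin m → ZMod 2)
    (v : Fin 3 → Fin n → ZMod 2) (S : Finset (Fin n)) (j : Fin n)
    (hS : S.Nonempty) (hj : j ∈ S)
    (hA : ∀ c : Fin m, ∑ j' ∈ S, A j' c = 0)
    -- `T` is the support of `P̃`: matrices with columns in `𝒬` lying in `W = v + V³`
    (T : Finset (Fin 3 → Fin n → ZMod 2))
    (hT : T = Finset.univ.filter (fun x =>
      (∀ j' : Fin n, x 0 j' + x 1 j' + x 2 j' = 0) ∧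
      (∀ (i : Fin 3) (c : Fin m), ∑ j' : Fin n, (x i j' - v i j') * A j' c = 0)))
    (hTne : T.Nonempty) :
    ∀ q : Fin 3 → ZMod 2, q 0 + q 1 + q 2 = 0 →
      ((T.filter (fun x => ∀ i : Fin 3, x i j = q i)).card : ℝ) / (T.card : ℝ)
        = 1 / 4 := by
  intro q hq
  classical
  set Qs : Finset (Fin 3 → ZMod 2) := Finset.univ.filter (fun r => r 0 + r 1 + r 2 = 0) with hQs
  have hQcard : Qs.card = 4 := by decide
  -- fiberwise decomposition
  have hfib : T.card = ∑ r ∈ Qs, (T.filter (fun x => ∀ i : Fin 3, x i j = r i)).card := by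
    have := Finset.card_eq_sum_card_fiberwise (s := T) (t := Qs)
      (f := fun x => fun i => x i j) ?_
    · rw [this]
      refine Finset.sum_congr rfl fun r _ => ?_
      congr 1
      ext x
      simp [Finset.mem_filter, funext_iff]
    · intro x hx
      rw [hT] at hx
      simp only [Finset.mem_coe, Finset.mem_filter, Finset.mem_univ, true_and] at hx
      simp only [Finset.mem_coe, hQs, Finset.mem_filter, Finset.mem_univ, true_and]
      exact hx.1 j
  have heq : ∀ r ∈ Qs, (T.filter (fun x => ∀ i : Fin 3, x i j = r i)).card
      = (T.filter (fun x => ∀ i : Fin 3, x i j = q i)).card := by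
    intro r hr
    simp only [hQs, Finset.mem_filter, Finset.mem_univ, true_and] at hr
    exact fiber_card_eq n m A v S j hj hA T hT r q hr hq
  rw [Finset.sum_congr rfl heq, Finset.sum_const, hQcard, smul_eq_mul] at hfib
  set c := (T.filter (fun x => ∀ i : Fin 3, x i j = q i)).card with hc
  have hcpos : (c : ℝ) ≠ 0 := by
    have : c ≠ 0 := by
      intro h
      have hT0 : T.card = 0 := by rw [hfib, h, mul_zero]
      exact hTne.ne_empty (Finset.card_eq_zero.mp hT0)
    exact_mod_cast this
  rw [hfib]
  push_cast
  field_simp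
end

section
/- With the setup of the previous statement (P̃ = Q^n conditioned on the affine event W = v + V^3, where V = {x : x·A = 0} and ∑_{j∈S}A_j = 0 for a nonempty S ⊆ [n]), fix j ∈ S and let Δ^{(j)} = (X^{j'} − X^{j})_{j'∈S∖{j}}. Then under P̃, the random variables X^j and (Δ^{(j)}, X^{[n]∖S}) are independent. -/
open Finset

/-- Setup as in the affine-conditioning lemma: `P̃ = Qⁿ | (X ∈ W)` where `Q` is the
GHZ query distribution, `W = v + V³`, `V = {x : x·A = 0}`, and `S` is a nonempty set
of coordinates with `∑_{j∈S} A_j = 0`.  For `j ∈ S`, under `P̃` the column `X^j` is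
independent of the data `(Δ^{(j)}, X^{[n]∖S})`, where
`Δ^{(j)} = (X^{j'} − X^{j})_{j'∈S∖{j}}`.  Independence is stated as the product rule
for the uniform distribution on the support `T` of `P̃`, with the data encoded by
`g(x) : Fin n → F₂³`, `g(x)_{j'} = X^{j'} − X^{j}` for `j' ∈ S` and `X^{j'}` else. -/
theorem stmt_4 (n m : ℕ) (A : Fin n → Fin m → ZMod 2)
    (v : Fin 3 → Fin n → ZMod 2) (S : Finset (Fin n)) (j : Fin n)
    (hS : S.Nonempty) (hj : j ∈ S)
    (hA : ∀ c : Fin m, ∑ j' ∈ S, A j' c = 0)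
    (T : Finset (Fin 3 → Fin n → ZMod 2))
    (hT : T = Finset.univ.filter (fun x =>
      (∀ j' : Fin n, x 0 j' + x 1 j' + x 2 j' = 0) ∧
      (∀ (i : Fin 3) (c : Fin m), ∑ j' : Fin n, (x i j' - v i j') * A j' c = 0)))
    (hTne : T.Nonempty)
    (g : (Fin 3 → Fin n → ZMod 2) → Fin n → Fin 3 → ZMod 2)
    (hg : ∀ x j' i, g x j' i = if j' ∈ S then x i j' - x i j else x i j') :
    ∀ (q : Fin 3 → ZMod 2) (b : Fin n → Fin 3 → ZMod 2),
      ((T.filter (fun x => (∀ i : Fin 3, x i j = q i) ∧ g x = b)).card : ℝ) *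
          (T.card : ℝ) =
        ((T.filter (fun x => ∀ i : Fin 3, x i j = q i)).card : ℝ) *
          ((T.filter (fun x => g x = b)).card : ℝ) := by
  intro q b
  have hmem : ∀ x ∈ T, (∀ j' : Fin n, x 0 j' + x 1 j' + x 2 j' = 0) ∧
      (∀ (i : Fin 3) (c : Fin m), ∑ j' : Fin n, (x i j' - v i j') * A j' c = 0) := by
    intro x hx; rw [hT, mem_filter] at hx; exact hx.2
  -- injectivity of x ↦ (x·j, g x) on T
  have hinj : ∀ x, ∀ y, (∀ i, x i j = y i j) → g x = g y → x = y := by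
    intro x y hq hgxy
    funext i j'
    have h1 := hg x j' i
    have h2 := hg y j' i
    have h3 : g x j' i = g y j' i := by rw [hgxy]
    by_cases hs : j' ∈ S
    · rw [if_pos hs] at h1 h2
      rw [h1, h2] at h3
      have hj2 := hq i
      linear_combination h3 + hj2
    · rw [if_neg hs] at h1 h2
      rw [← h1, ← h2, h3]
  -- the shift
  have hshift : ∀ y ∈ T, ∀ q' : Fin 3 → ZMod 2, q' 0 + q' 1 + q' 2 = 0 →
      ∃ z ∈ T, (∀ i, z i j = q' i) ∧ g z = g y := by
    intro y hy q' hq'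
    obtain ⟨hy1, hy2⟩ := hmem y hy
    refine ⟨fun i j' => if j' ∈ S then y i j' + (q' i - y i j) else y i j', ?_, ?_, ?_⟩
    · rw [hT, mem_filter]
      refine ⟨mem_univ _, ?_, ?_⟩
      · intro j'
        by_cases hs : j' ∈ S
        · simp only [if_pos hs]
          linear_combination hy1 j' + hq' - hy1 j
        · simp only [if_neg hs]
          exact hy1 j'
      · intro i c
        have key : ∀ j' : Fin n,
            ((if j' ∈ S then y i j' + (q' i - y i j) else y i j') - v i j') * A j' c
            = (y i j' - v i j') * A j' c + (if j' ∈ S then (q' i - y i j) * A j' c else 0) := by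
          intro j'; by_cases hs : j' ∈ S <;> simp only [if_pos, if_neg, hs, if_true, if_false] <;> ring
        rw [Finset.sum_congr rfl (fun j' _ => key j'), Finset.sum_add_distrib, hy2 i c,
          ← Finset.sum_filter]
        have : Finset.univ.filter (fun j' => j' ∈ S) = S := by
          ext j'; simp
        rw [this, ← Finset.mul_sum, hA c, mul_zero, zero_add]
    · intro i; simp only [if_pos hj]; ring
    · funext j' i
      rw [hg, hg]
      by_cases hs : j' ∈ S
      · simp only [if_pos hs, if_pos hj]; ring
      · simp only [if_neg hs]
  -- the images
  set Qs := T.image (fun x => fun i => x i j) with hQs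
  set Bs := T.image g with hBs
  have hparity : ∀ x ∈ T, ∀ q' : Fin 3 → ZMod 2, (∀ i, x i j = q' i) →
      q' 0 + q' 1 + q' 2 = 0 := by
    intro x hx q' hxq
    have := (hmem x hx).1 j
    rw [hxq 0, hxq 1, hxq 2] at this
    exact this
  -- total count
  have hcardT : T.card = Qs.card * Bs.card := by
    rw [← Finset.card_product]
    apply Finset.card_bij (fun x _ => ((fun i => x i j), g x))
    · intro x hx
      rw [Finset.mem_product]
      exact ⟨Finset.mem_image_of_mem _ hx, Finset.mem_image_of_mem _ hx⟩
    · intro x hx y hy hxy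
      have h1 : ∀ i, x i j = y i j := fun i => congrFun (congrArg Prod.fst hxy) i
      exact hinj x y h1 (congrArg Prod.snd hxy)
    · rintro ⟨q', b'⟩ hqb
      rw [Finset.mem_product] at hqb
      obtain ⟨x', hx', hxq⟩ := Finset.mem_image.mp hqb.1
      obtain ⟨y', hy', hyb⟩ := Finset.mem_image.mp hqb.2
      have hp : q' 0 + q' 1 + q' 2 = 0 :=
        hparity x' hx' q' (fun i => congrFun hxq i)
      obtain ⟨z, hz, hzj, hzg⟩ := hshift y' hy' q' hp
      exact ⟨z, hz, by rw [hzg, hyb]; exact Prod.ext (funext hzj) rfl⟩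
  by_cases hboth : (∃ x ∈ T, (∀ i, x i j = q i)) ∧ (∃ y ∈ T, g y = b)
  · obtain ⟨⟨x, hx, hxq⟩, ⟨y, hy, hgy⟩⟩ := hboth
    have hq0 : q 0 + q 1 + q 2 = 0 := hparity x hx q hxq
    obtain ⟨z, hz, hzj, hzg⟩ := hshift y hy q hq0
    have hgz : g z = b := by rw [hzg, hgy]
    -- combined filter is {z}
    have h1 : (T.filter (fun x => (∀ i : Fin 3, x i j = q i) ∧ g x = b)) = {z} := by
      ext w
      simp only [Finset.mem_filter, Finset.mem_singleton]
      constructor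
      · rintro ⟨hw, hwq, hwb⟩
        exact hinj w z (fun i => by rw [hwq i, hzj i]) (by rw [hwb, hgz])
      · rintro rfl
        exact ⟨hz, hzj, hgz⟩
    -- filter on column = Bs.card
    have h2 : (T.filter (fun x => ∀ i : Fin 3, x i j = q i)).card = Bs.card := by
      apply Finset.card_bij (fun x _ => g x)
      · intro w hw
        exact Finset.mem_image_of_mem _ (Finset.mem_filter.mp hw).1
      · intro w hw w' hw' hww
        have hwq := (Finset.mem_filter.mp hw).2
        have hwq' := (Finset.mem_filter.mp hw').2
        exact hinj w w' (fun i => by rw [hwq i, hwq' i]) hww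
      · intro b' hb'
        obtain ⟨y', hy', hyb⟩ := Finset.mem_image.mp hb'
        obtain ⟨z', hz', hzj', hzg'⟩ := hshift y' hy' q hq0
        exact ⟨z', Finset.mem_filter.mpr ⟨hz', hzj'⟩, by rw [hzg', hyb]⟩
    -- filter on g = Qs.card
    have h3 : (T.filter (fun x => g x = b)).card = Qs.card := by
      apply Finset.card_bij (fun x _ => fun i => x i j)
      · intro w hw
        exact Finset.mem_image_of_mem _ (Finset.mem_filter.mp hw).1
      · intro w hw w' hw' hww
        have hwb := (Finset.mem_filter.mp hw).2
        have hwb' := (Finset.mem_filter.mp hw').2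
        exact hinj w w' (fun i => congrFun hww i) (by rw [hwb, hwb'])
      · intro q' hq'
        obtain ⟨x', hx', hxq⟩ := Finset.mem_image.mp hq'
        have hp : q' 0 + q' 1 + q' 2 = 0 := hparity x' hx' q' (fun i => congrFun hxq i)
        obtain ⟨z', hz', hzj', hzg'⟩ := hshift y hy q' hp
        exact ⟨z', Finset.mem_filter.mpr ⟨hz', by rw [hzg', hgy]⟩, funext hzj'⟩
    rw [h1, h2, h3, hcardT, Finset.card_singleton]
    push_cast
    ring
  · rw [not_and_or] at hboth
    rcases hboth with h | h
    · have e1 : (T.filter (fun x => (∀ i : Fin 3, x i j = q i) ∧ g x = b)) = ∅ := by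
        rw [Finset.filter_eq_empty_iff]
        intro x hx ⟨hxq, _⟩
        exact h ⟨x, hx, hxq⟩
      have e2 : (T.filter (fun x => ∀ i : Fin 3, x i j = q i)) = ∅ := by
        rw [Finset.filter_eq_empty_iff]
        intro x hx hxq
        exact h ⟨x, hx, hxq⟩
      rw [e1, e2]
      simp
    · have e1 : (T.filter (fun x => (∀ i : Fin 3, x i j = q i) ∧ g x = b)) = ∅ := by
        rw [Finset.filter_eq_empty_iff]
        intro x hx ⟨_, hxb⟩
        exact h ⟨x, hx, hxb⟩
      have e2 : (T.filter (fun x => g x = b)) = ∅ := by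
        rw [Finset.filter_eq_empty_iff]
        intro x hx hxb
        exact h ⟨x, hx, hxb⟩
      rw [e1, e2]
      simp
end

section
/- Let Q be the GHZ query distribution (uniform on {x ∈ F_2^3 : x1+x2+x3=0}), let n > m be positive integers, and let W be an affine shift of V^3 for a subspace V ≤ F_2^{1×n} of codimension m with Q^n(W) > 0. Then there exist at least n − m distinct coordinates j ∈ [n] for which Q is locally embeddable in the j-th coordinate of P̃ = Q^n | W. -/
open Finset

open scoped Classical in
/-- `Q` (the GHZ query distribution, uniform on `𝒬 = {q ∈ F₂³ : q₁+q₂+q₃=0}`) is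
locally embeddable in the `j`-th coordinate of the distribution `P̃` uniform on a
support `T ⊆ F₂^{3×n}`: there is a finite shared-randomness distribution `ρ` and
local functions `e₁, e₂, e₃ : F₂ × ℛ → F₂ⁿ` such that for `q ← Q`, `r ← ρ`
independent, the matrix with rows `eᵢ(qᵢ, r)` has law exactly `P̃`, and its `j`-th
column always equals `q`. -/
def LocallyEmbeddable (n : ℕ) (T : Finset (Fin 3 → Fin n → ZMod 2)) (j : Fin n) :
    Prop :=
  ∃ (k : ℕ) (ρ : Fin k → ℝ) (e : Fin 3 → ZMod 2 → Fin k → Fin n → ZMod 2),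
    (∀ r, 0 ≤ ρ r) ∧ (∑ r, ρ r = 1) ∧
    (∀ q : Fin 3 → ZMod 2, q 0 + q 1 + q 2 = 0 → ∀ r i, e i (q i) r j = q i) ∧
    (∀ x : Fin 3 → Fin n → ZMod 2,
      ∑ q ∈ Finset.univ.filter (fun q : Fin 3 → ZMod 2 => q 0 + q 1 + q 2 = 0),
        ∑ r, (if (fun i => e i (q i) r) = x then (1 / 4 : ℝ) * ρ r else 0) =
      if x ∈ T then 1 / (T.card : ℝ) else 0)

open scoped Classical in
private lemma mem_T_shift {n : ℕ} (V : Submodule (ZMod 2) (Fin n → ZMod 2))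
    (v : Fin 3 → Fin n → ZMod 2)
    (T : Finset (Fin 3 → Fin n → ZMod 2))
    (hT : T = Finset.univ.filter (fun x =>
      (∀ j' : Fin n, x 0 j' + x 1 j' + x 2 j' = 0) ∧
      (∀ i : Fin 3, x i - v i ∈ V)))
    {x : Fin 3 → Fin n → ZMod 2} (hx : x ∈ T)
    {w : Fin n → ZMod 2} (hw : w ∈ V)
    {a : Fin 3 → ZMod 2} (ha : a 0 + a 1 + a 2 = 0) :
    (fun i ℓ => x i ℓ + a i * w ℓ) ∈ T := by
  rw [hT] at hx ⊢
  simp only [Finset.mem_filter, Finset.mem_univ, true_and] at hx ⊢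
  refine ⟨fun ℓ => ?_, fun i => ?_⟩
  · have h1 := hx.1 ℓ
    linear_combination h1 + w ℓ * ha
  · have h2 := hx.2 i
    show (fun ℓ => x i ℓ + a i * w ℓ) - v i ∈ V
    have : (fun ℓ => x i ℓ + a i * w ℓ) - v i = (x i - v i) + a i • w := by
      funext ℓ; simp [Pi.sub_apply, Pi.add_apply, smul_eq_mul]; ring
    rw [this]
    exact V.add_mem h2 (V.smul_mem _ hw)

open scoped Classical in
private lemma colsum_j {n : ℕ} (V : Submodule (ZMod 2) (Fin n → ZMod 2))
    (v : Fin 3 → Fin n → ZMod 2)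
    (T : Finset (Fin 3 → Fin n → ZMod 2))
    (hT : T = Finset.univ.filter (fun x =>
      (∀ j' : Fin n, x 0 j' + x 1 j' + x 2 j' = 0) ∧
      (∀ i : Fin 3, x i - v i ∈ V)))
    {x : Fin 3 → Fin n → ZMod 2} (hx : x ∈ T) (j : Fin n) :
    x 0 j + x 1 j + x 2 j = 0 := by
  rw [hT] at hx
  simp only [Finset.mem_filter, Finset.mem_univ, true_and] at hx
  exact hx.1 j

open scoped Classical in
private lemma embed_of_witness {n : ℕ} (V : Submodule (ZMod 2) (Fin n → ZMod 2))
    (v : Fin 3 → Fin n → ZMod 2)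
    (T : Finset (Fin 3 → Fin n → ZMod 2))
    (hT : T = Finset.univ.filter (fun x =>
      (∀ j' : Fin n, x 0 j' + x 1 j' + x 2 j' = 0) ∧
      (∀ i : Fin 3, x i - v i ∈ V)))
    (hTne : T.Nonempty) (j : Fin n) (w : Fin n → ZMod 2)
    (hw : w ∈ V) (hwj : w j = 1) :
    LocallyEmbeddable n T j := by
  have two : (2 : ZMod 2) = 0 := by decide
  have hk0 : (T.card : ℝ) ≠ 0 := by
    have := Finset.card_pos.mpr hTne
    positivity
  set ε : Fin T.card ≃ {x // x ∈ T} := T.equivFin.symm with hε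
  refine ⟨T.card, fun _ => 1 / (T.card : ℝ),
    fun i b r ℓ => (ε r : Fin 3 → Fin n → ZMod 2) i ℓ + (b + (ε r : Fin 3 → Fin n → ZMod 2) i j) * w ℓ,
    fun _ => by positivity, ?_, ?_, ?_⟩
  · rw [Finset.sum_const, Finset.card_univ, Fintype.card_fin, nsmul_eq_mul]
    field_simp
  · intro q hq r i
    show (ε r : Fin 3 → Fin n → ZMod 2) i j + (q i + (ε r : Fin 3 → Fin n → ZMod 2) i j) * w j = q i
    rw [hwj]
    linear_combination (ε r : Fin 3 → Fin n → ZMod 2) i j * two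
  · intro x
    -- fiber counting
    have fiber : ∀ q : Fin 3 → ZMod 2, q 0 + q 1 + q 2 = 0 →
        (T.filter (fun t => (fun i ℓ => t i ℓ + (q i + t i j) * w ℓ) = x)).card
          = if x ∈ T ∧ (∀ i, x i j = q i) then 4 else 0 := by
      intro q hq
      by_cases hcase : x ∈ T ∧ (∀ i, x i j = q i)
      · rw [if_pos hcase]
        have himg : T.filter (fun t => (fun i ℓ => t i ℓ + (q i + t i j) * w ℓ) = x)
            = (Finset.univ.filter (fun a : Fin 3 → ZMod 2 => a 0 + a 1 + a 2 = 0)).image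
                (fun a => fun i ℓ => x i ℓ + a i * w ℓ) := by
          ext t
          simp only [Finset.mem_filter, Finset.mem_image, Finset.mem_univ, true_and]
          constructor
          · rintro ⟨htT, hte⟩
            have hcol := colsum_j V v T hT htT j
            refine ⟨fun i => q i + t i j, by linear_combination hq + hcol, ?_⟩
            funext i ℓ
            have h := congrFun (congrFun hte i) ℓ
            linear_combination -h + (q i + t i j) * w ℓ * two
          · rintro ⟨a, ha, rfl⟩
            refine ⟨mem_T_shift V v T hT hcase.1 hw ha, ?_⟩
            funext i ℓ
            have hxq := hcase.2 i
            show x i ℓ + a i * w ℓ + (q i + (x i j + a i * w j)) * w ℓ = x i ℓ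
            rw [hwj]
            linear_combination (w ℓ) * hxq + (a i * w ℓ + q i * w ℓ) * two
        rw [himg, Finset.card_image_of_injective _ ?_]
        · decide
        · intro a a' h
          funext i
          have h2 : x i j + a i * w j = x i j + a' i * w j := congrFun (congrFun h i) j
          rw [hwj] at h2
          linear_combination h2
      · rw [if_neg hcase, Finset.card_eq_zero, Finset.filter_eq_empty_iff]
        intro t htT hte
        apply hcase
        have hcol := colsum_j V v T hT htT j
        constructor
        · rw [← hte]
          exact mem_T_shift V v T hT htT hw (a := fun i => q i + t i j)
            (by linear_combination hq + hcol)
        · intro i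
          have h := congrFun (congrFun hte i) j
          rw [hwj] at h
          linear_combination -h + t i j * two
    -- rewrite inner sums
    have inner : ∀ q ∈ Finset.univ.filter (fun q : Fin 3 → ZMod 2 => q 0 + q 1 + q 2 = 0),
        (∑ r : Fin T.card, (if (fun i ℓ => (ε r : Fin 3 → Fin n → ZMod 2) i ℓ
              + (q i + (ε r : Fin 3 → Fin n → ZMod 2) i j) * w ℓ) = x
            then (1 / 4 : ℝ) * (1 / (T.card : ℝ)) else 0))
          = (if x ∈ T ∧ (∀ i, x i j = q i) then (4:ℝ) else 0) * ((1/4) * (1/(T.card:ℝ))) := by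
      intro q hq
      simp only [Finset.mem_filter, Finset.mem_univ, true_and] at hq
      have e1 : (∑ r : Fin T.card, (if (fun i ℓ => (ε r : Fin 3 → Fin n → ZMod 2) i ℓ
              + (q i + (ε r : Fin 3 → Fin n → ZMod 2) i j) * w ℓ) = x
            then (1 / 4 : ℝ) * (1 / (T.card : ℝ)) else 0))
          = ∑ t ∈ T, (if (fun i ℓ => t i ℓ + (q i + t i j) * w ℓ) = x
              then (1 / 4 : ℝ) * (1 / (T.card : ℝ)) else 0) := by
        rw [← Finset.sum_coe_sort T]
        exact Fintype.sum_equiv ε _ _ (fun r => rfl)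
      rw [e1, ← Finset.sum_filter, Finset.sum_const, nsmul_eq_mul, fiber q hq]
      split <;> norm_num
    rw [Finset.sum_congr rfl inner]
    by_cases hxT : x ∈ T
    · rw [if_pos hxT]
      have hstep : ∀ q ∈ Finset.univ.filter (fun q : Fin 3 → ZMod 2 => q 0 + q 1 + q 2 = 0),
          (if x ∈ T ∧ (∀ i, x i j = q i) then (4:ℝ) else 0) * ((1/4) * (1/(T.card:ℝ)))
            = if q = (fun i => x i j) then (4:ℝ) * ((1/4) * (1/(T.card:ℝ))) else 0 := by
        intro q hq
        by_cases h : q = fun i => x i j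
        · subst h
          rw [if_pos ⟨hxT, fun i => rfl⟩, if_pos rfl]
        · rw [if_neg, if_neg h, zero_mul]
          rintro ⟨-, hh⟩
          exact h (funext fun i => (hh i).symm)
      rw [Finset.sum_congr rfl hstep, Finset.sum_ite_eq']
      rw [if_pos]
      · field_simp
      · simp only [Finset.mem_filter, Finset.mem_univ, true_and]
        exact colsum_j V v T hT hxT j
    · rw [if_neg hxT]
      apply Finset.sum_eq_zero
      intro q hq
      rw [if_neg, zero_mul]
      rintro ⟨h, -⟩
      exact hxT h

open scoped Classical in
/-- If `W = v + V³` is an affine shift of `V³` for a subspace `V ≤ F₂ⁿ` of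
codimension `m < n` with `Qⁿ(W) > 0`, then there are at least `n − m` coordinates
`j` in which the GHZ query distribution `Q` is locally embeddable into
`P̃ = Qⁿ | W`. -/
theorem stmt_5 (n m : ℕ) (hmn : m < n)
    (V : Submodule (ZMod 2) (Fin n → ZMod 2))
    (hV : Module.finrank (ZMod 2) V = n - m)
    (v : Fin 3 → Fin n → ZMod 2)
    (T : Finset (Fin 3 → Fin n → ZMod 2))
    (hT : T = Finset.univ.filter (fun x =>
      (∀ j' : Fin n, x 0 j' + x 1 j' + x 2 j' = 0) ∧
      (∀ i : Fin 3, x i - v i ∈ V)))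
    (hTne : T.Nonempty) :
    ∃ J : Finset (Fin n), n - m ≤ J.card ∧
      ∀ j ∈ J, LocallyEmbeddable n T j := by
  set J : Finset (Fin n) := Finset.univ.filter (fun j => ∃ w ∈ V, w j = 1) with hJ
  refine ⟨J, ?_, ?_⟩
  · -- dimension bound
    let π : V →ₗ[ZMod 2] ({x // x ∈ J} → ZMod 2) :=
      { toFun := fun u jj => (u : Fin n → ZMod 2) jj.1
        map_add' := fun u u' => rfl
        map_smul' := fun c u => rfl }
    have hker : ∀ u : V, π u = 0 → u = 0 := by
      intro u hu
      apply Subtype.ext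
      funext jj
      rcases (by decide : ∀ z : ZMod 2, z = 0 ∨ z = 1) ((u : Fin n → ZMod 2) jj) with h | h
      · exact h
      · have hjJ : jj ∈ J := by
          rw [hJ]; simp only [Finset.mem_filter, Finset.mem_univ, true_and]
          exact ⟨u, u.2, h⟩
        have := congrFun hu ⟨jj, hjJ⟩
        simp only [Pi.zero_apply] at this
        exact this
    have hinj : Function.Injective π := by
      rw [← LinearMap.ker_eq_bot]
      exact LinearMap.ker_eq_bot'.mpr hker
    calc n - m = Module.finrank (ZMod 2) V := hV.symm
      _ ≤ Module.finrank (ZMod 2) ({x // x ∈ J} → ZMod 2) :=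
          LinearMap.finrank_le_finrank_of_injective hinj
      _ = Fintype.card {x // x ∈ J} := Module.finrank_pi (ZMod 2)
      _ = J.card := Fintype.card_coe J
  · intro j hj
    rw [hJ] at hj
    simp only [Finset.mem_filter, Finset.mem_univ, true_and] at hj
    obtain ⟨w, hw, hwj⟩ := hj
    exact embed_of_witness V v T hT hTne j w hw hwj
end

section
/- Let P and Q be probability distributions on a finite set Ω and let E ⊆ Ω be an event with P(E) > 0 and Q(E) > 0. Then the total variation distance of the conditional distributions satisfies d_TV(P|E, Q|E) ≤ 2·d_TV(P,Q)/P(E). -/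
open Finset

/-- Conditioning nearby distributions on an event `E` keeps them close:
`d_TV(P|E, Q|E) ≤ 2 d_TV(P,Q) / P(E)`. -/
theorem stmt_7 {Ω : Type*} [Fintype Ω] [DecidableEq Ω] (P Q : Ω → ℝ) (E : Finset Ω)
    (hP0 : ∀ ω, 0 ≤ P ω) (hP1 : ∑ ω, P ω = 1)
    (hQ0 : ∀ ω, 0 ≤ Q ω) (hQ1 : ∑ ω, Q ω = 1)
    (hPE : 0 < ∑ ω ∈ E, P ω) (hQE : 0 < ∑ ω ∈ E, Q ω) :
    (1 / 2) * ∑ ω, |(if ω ∈ E then P ω / ∑ ω' ∈ E, P ω' else 0) -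
        (if ω ∈ E then Q ω / ∑ ω' ∈ E, Q ω' else 0)| ≤
      (2 * ((1 / 2) * ∑ ω, |P ω - Q ω|)) / ∑ ω ∈ E, P ω := by
  set p := ∑ ω ∈ E, P ω with hp
  set q := ∑ ω ∈ E, Q ω with hq
  have hpne : p ≠ 0 := ne_of_gt hPE
  have hqne : q ≠ 0 := ne_of_gt hQE
  set S := ∑ ω, |P ω - Q ω| with hS
  have hSE_le : ∑ ω ∈ E, |P ω - Q ω| ≤ S :=
    Finset.sum_le_sum_of_subset_of_nonneg (Finset.subset_univ E)
      (fun _ _ _ => abs_nonneg _)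
  have hqp : |q - p| ≤ ∑ ω ∈ E, |P ω - Q ω| := by
    have h1 : q - p = ∑ ω ∈ E, (Q ω - P ω) := by
      rw [hp, hq, ← Finset.sum_sub_distrib]
    rw [h1]
    calc |∑ ω ∈ E, (Q ω - P ω)| ≤ ∑ ω ∈ E, |Q ω - P ω| :=
          Finset.abs_sum_le_sum_abs _ _
      _ = ∑ ω ∈ E, |P ω - Q ω| := by simp [abs_sub_comm]
  have key : ∑ ω, |(if ω ∈ E then P ω / p else 0) - (if ω ∈ E then Q ω / q else 0)|
      = ∑ ω ∈ E, |P ω / p - Q ω / q| := by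
    have h : ∀ ω, |(if ω ∈ E then P ω / p else 0) - (if ω ∈ E then Q ω / q else 0)|
        = if ω ∈ E then |P ω / p - Q ω / q| else 0 := fun ω => by split <;> simp
    simp only [h, Finset.sum_ite_mem, Finset.univ_inter]
  have termbound : ∀ ω ∈ E, |P ω / p - Q ω / q|
      ≤ |P ω - Q ω| / p + Q ω * |q - p| / (p * q) := by
    intro ω _
    have hid : P ω / p - Q ω / q = (P ω - Q ω) / p + Q ω * (q - p) / (p * q) := by
      field_simp; ring
    rw [hid]
    refine (abs_add_le _ _).trans ?_
    rw [abs_div, abs_div, abs_mul, abs_of_nonneg (hQ0 ω), abs_of_pos hPE,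
      abs_of_pos (mul_pos hPE hQE)]
  have sumbound : ∑ ω ∈ E, |P ω / p - Q ω / q|
      ≤ (∑ ω ∈ E, |P ω - Q ω|) / p + |q - p| / p := by
    calc ∑ ω ∈ E, |P ω / p - Q ω / q|
        ≤ ∑ ω ∈ E, (|P ω - Q ω| / p + Q ω * |q - p| / (p * q)) :=
          Finset.sum_le_sum termbound
      _ = (∑ ω ∈ E, |P ω - Q ω|) / p + q * |q - p| / (p * q) := by
          rw [Finset.sum_add_distrib, ← Finset.sum_div]
          congr 1
          rw [← Finset.sum_div, ← Finset.sum_mul]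
      _ = (∑ ω ∈ E, |P ω - Q ω|) / p + |q - p| / p := by
          congr 1
          field_simp
  rw [key]
  have hfinal : 2 * ((1 / 2) * S) / p = S / p := by ring_nf
  rw [hfinal]
  have h2 : (1 / 2) * ∑ ω ∈ E, |P ω / p - Q ω / q|
      ≤ (1 / 2) * ((∑ ω ∈ E, |P ω - Q ω|) / p + |q - p| / p) := by
    linarith
  refine h2.trans ?_
  rw [← add_div, ← mul_div_assoc]
  gcongr
  linarith
end

section
/- Let W : ℝ⁺ → ℝ⁺ be the inverse of x ↦ x·e^x (the principal branch of the Lambert W function). Then for all y ≥ e, W(y) ≤ ln y − ln ln y + ln(1 + 1/e). -/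
/-- Hoorfar–Hassani bound on the Lambert W function: if `z > 0` satisfies `z·e^z = y`
and `y ≥ e`, then `z ≤ ln y − ln ln y + ln (1 + 1/e)`. -/
theorem stmt_10 (y z : ℝ) (hz : 0 < z) (hzy : z * Real.exp z = y)
    (hy : Real.exp 1 ≤ y) :
    z ≤ Real.log y - Real.log (Real.log y) + Real.log (1 + 1 / Real.exp 1) := by
  have he : (0:ℝ) < Real.exp 1 := Real.exp_pos 1
  have hy0 : 0 < y := lt_of_lt_of_le he hy
  -- log y = z + log z
  have hlogy : Real.log y = z + Real.log z := by
    rw [← hzy, Real.log_mul (ne_of_gt hz) (Real.exp_ne_zero _), Real.log_exp]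
    ring
  -- log z ≤ z / e
  have hlz : Real.log z ≤ z / Real.exp 1 := by
    have h1 : Real.log (z / Real.exp 1) ≤ z / Real.exp 1 - 1 :=
      Real.log_le_sub_one_of_pos (div_pos hz he)
    rw [Real.log_div (ne_of_gt hz) (Real.exp_ne_zero _), Real.log_exp] at h1
    linarith
  -- log y ≤ z * (1 + 1/e)
  have hkey : Real.log y ≤ z * (1 + 1 / Real.exp 1) := by
    rw [hlogy]
    have : z / Real.exp 1 = z * (1 / Real.exp 1) := by ring
    nlinarith [hlz]
  -- log (log y) ≤ log z + log (1 + 1/e)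
  have hpos : (0:ℝ) < 1 + 1 / Real.exp 1 := by positivity
  have hlogyge : (1:ℝ) ≤ Real.log y := by
    calc (1:ℝ) = Real.log (Real.exp 1) := (Real.log_exp 1).symm
    _ ≤ Real.log y := Real.log_le_log he hy
  have h2 : Real.log (Real.log y) ≤ Real.log z + Real.log (1 + 1 / Real.exp 1) := by
    rw [← Real.log_mul (ne_of_gt hz) (ne_of_gt hpos)]
    exact Real.log_le_log (by linarith) hkey
  linarith
end

section
/- Let V be a finite F_2-vector space, let P be uniform on {x ∈ V^3 : x1+x2+x3 = 0}, let U be uniform on V^3, let Y_i = Y_i(X_i) be a 𝒴_i-valued function of the i-th component for i ∈ [3], and let W ≤ V be a subspace. If for all characters χ of W, E_{(x,y)←P_{X,Y}}[ d_TV( P_{χ(X_1) | X ∈ x+W^3, Y_1=y_1}, U_{χ(X_1) | X ∈ x+W^3} ) ] ≤ ε, then E_{x←P_X}[ d_TV( P_{Y | X ∈ x+W^3}, U_{Y | X ∈ x+W^3} ) ] ≤ ε·√(|𝒴_2|·|𝒴_3|). -/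
open Finset
open scoped Classical

namespace S14

noncomputable section

set_option linter.unusedSectionVars false

/-- real sign character on `ZMod 2` -/
def sgn (b : ZMod 2) : ℝ := if b = 0 then 1 else -1

lemma zmod2cases (a : ZMod 2) : a = 0 ∨ a = 1 := by revert a; decide

@[simp] lemma sgn_zero : sgn 0 = 1 := by simp [sgn]

lemma sgn_add (a b : ZMod 2) : sgn (a + b) = sgn a * sgn b := by
  have h2 : (1 : ZMod 2) + 1 = 0 := by decide
  have h1 : (1 : ZMod 2) ≠ 0 := by decide
  rcases zmod2cases a with ha | ha <;> rcases zmod2cases b with hb | hb <;>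
    subst ha <;> subst hb <;>
    simp [sgn, h2, h1]

@[simp] lemma abs_sgn (a : ZMod 2) : |sgn a| = 1 := by
  rcases zmod2cases a with ha | ha <;> subst ha <;>
    norm_num [sgn, show (1 : ZMod 2) ≠ 0 from by decide]

lemma sgn_one_add (b : ZMod 2) : sgn (1 + b) = -sgn b := by
  have h2 : (1 : ZMod 2) + 1 = 0 := by decide
  have h1 : (1 : ZMod 2) ≠ 0 := by decide
  rcases zmod2cases b with hb | hb <;> subst hb <;> simp [sgn, h2, h1]

variable {M : Type*} [AddCommGroup M] [Module (ZMod 2) M] [Fintype M]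

lemma addself (v : M) : v + v = 0 := by
  rw [← two_smul (ZMod 2) v, show (2 : ZMod 2) = 0 from by decide, zero_smul]

lemma negself (v : M) : -v = v := by
  exact neg_eq_of_add_eq_zero_left (addself v)

lemma add_eq_zero_iff' {v w : M} : v + w = 0 ↔ w = v := by
  constructor
  · intro h
    have h2 := neg_eq_of_add_eq_zero_right h
    rw [negself] at h2; exact h2.symm
  · rintro rfl; exact addself _

instance dualFintype : Fintype (Module.Dual (ZMod 2) M) :=
  Fintype.ofEquiv M (Module.finBasis (ZMod 2) M).toDualEquiv.toEquiv

lemma card_dual : Fintype.card (Module.Dual (ZMod 2) M) = Fintype.card M :=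
  (Fintype.card_congr (Module.finBasis (ZMod 2) M).toDualEquiv.toEquiv).symm

lemma sum_sgn_self (ψ : Module.Dual (ZMod 2) M) :
    ∑ w : M, sgn (ψ w) = if ψ = 0 then (Fintype.card M : ℝ) else 0 := by
  split_ifs with h
  · subst h; simp
  · obtain ⟨w₀, hw₀⟩ : ∃ w : M, ψ w ≠ 0 := by
      by_contra hc; push_neg at hc
      exact h (LinearMap.ext fun w => hc w)
    have h1 : ψ w₀ = 1 := by
      rcases zmod2cases (ψ w₀) with h0 | h0
      · exact absurd h0 hw₀
      · exact h0
    have key : ∑ w : M, sgn (ψ w) = -∑ w : M, sgn (ψ w) := by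
      calc ∑ w : M, sgn (ψ w) = ∑ w : M, sgn (ψ (w₀ + w)) :=
            (Equiv.sum_comp (Equiv.addLeft w₀) (fun v => sgn (ψ v))).symm
        _ = -∑ w : M, sgn (ψ w) := by
            rw [← Finset.sum_neg_distrib]
            refine Finset.sum_congr rfl fun w _ => ?_
            rw [map_add, h1, sgn_one_add]
    linarith

lemma sum_sgn_dual (u : M) :
    ∑ ψ : Module.Dual (ZMod 2) M, sgn (ψ u) = if u = 0 then (Fintype.card M : ℝ) else 0 := by
  split_ifs with h
  · subst h; simp [← card_dual (M := M)]
  · obtain ⟨ψ₀, hψ₀⟩ : ∃ ψ : Module.Dual (ZMod 2) M, ψ u ≠ 0 := by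
      by_contra hc; push_neg at hc
      exact h ((Module.forall_dual_apply_eq_zero_iff (ZMod 2) u).1 hc)
    have h1 : ψ₀ u = 1 := by
      rcases zmod2cases (ψ₀ u) with h0 | h0
      · exact absurd h0 hψ₀
      · exact h0
    have key : ∑ ψ : Module.Dual (ZMod 2) M, sgn (ψ u) =
        -∑ ψ : Module.Dual (ZMod 2) M, sgn (ψ u) := by
      calc ∑ ψ : Module.Dual (ZMod 2) M, sgn (ψ u)
          = ∑ ψ : Module.Dual (ZMod 2) M, sgn ((ψ₀ + ψ) u) :=
            (Equiv.sum_comp (Equiv.addLeft ψ₀) (fun χ => sgn (χ u))).symm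
        _ = -∑ ψ : Module.Dual (ZMod 2) M, sgn (ψ u) := by
            rw [← Finset.sum_neg_distrib]
            refine Finset.sum_congr rfl fun ψ _ => ?_
            rw [LinearMap.add_apply, h1, sgn_one_add]
    linarith


variable {Y Y₁ Y₂ Y₃ : Type*} [Fintype Y] [Fintype Y₁] [Fintype Y₂] [Fintype Y₃]

/-- number of `w` with `f w = y` (as a real) -/
def Bf (f : M → Y) (y : Y) : ℝ := ∑ w : M, if f w = y then 1 else 0

/-- Fourier coefficient (times `card M`) of the fibre of `f` over `y` -/
def Ff (f : M → Y) (y : Y) (ψ : Module.Dual (ZMod 2) M) : ℝ :=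
  ∑ w : M, (if f w = y then (1 : ℝ) else 0) * sgn (ψ w)

lemma Bf_nonneg (f : M → Y) (y : Y) : 0 ≤ Bf f y :=
  Finset.sum_nonneg fun w _ => by positivity

lemma one_le_Bf_self (f : M → Y) (w₀ : M) : 1 ≤ Bf f (f w₀) := by
  unfold Bf
  have h := Finset.single_le_sum (f := fun w : M => if f w = f w₀ then (1:ℝ) else 0)
    (fun w _ => by positivity) (Finset.mem_univ w₀)
  simp only [if_pos rfl] at h
  exact h

lemma abs_Ff_le_Bf (f : M → Y) (y : Y) (ψ : Module.Dual (ZMod 2) M) :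
    |Ff f y ψ| ≤ Bf f y := by
  refine (Finset.abs_sum_le_sum_abs _ _).trans ?_
  refine Finset.sum_le_sum fun w _ => ?_
  rw [abs_mul, abs_sgn, mul_one]
  split_ifs <;> norm_num

lemma Ff_zero (f : M → Y) (y : Y) : Ff f y 0 = Bf f y := by
  unfold Ff Bf
  refine Finset.sum_congr rfl fun w _ => ?_
  simp

lemma sum_Bf (f : M → Y) : ∑ y : Y, Bf f y = (Fintype.card M : ℝ) := by
  unfold Bf
  rw [Finset.sum_comm]
  have : ∀ w : M, ∑ y : Y, (if f w = y then (1:ℝ) else 0) = 1 := by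
    intro w
    rw [Finset.sum_ite_eq (Finset.univ) (f w) (fun _ => (1:ℝ))]
    simp
  simp [this, Finset.sum_const, Finset.card_univ]

/-- expansion of a product of two "Fourier sums" over the dual -/
lemma sum_dual_mul2 (a b : M → ℝ) :
    ∑ ψ : Module.Dual (ZMod 2) M,
      (∑ w : M, a w * sgn (ψ w)) * (∑ w : M, b w * sgn (ψ w))
      = (Fintype.card M : ℝ) * ∑ w : M, a w * b w := by
  have expand : ∀ ψ : Module.Dual (ZMod 2) M,
      (∑ w : M, a w * sgn (ψ w)) * (∑ w : M, b w * sgn (ψ w))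
      = ∑ w : M, ∑ w' : M, (a w * b w') * sgn (ψ (w + w')) := by
    intro ψ
    rw [Finset.sum_mul_sum]
    refine Finset.sum_congr rfl fun w _ => Finset.sum_congr rfl fun w' _ => ?_
    rw [map_add, sgn_add]; ring
  calc ∑ ψ : Module.Dual (ZMod 2) M,
        (∑ w : M, a w * sgn (ψ w)) * (∑ w : M, b w * sgn (ψ w))
      = ∑ ψ : Module.Dual (ZMod 2) M, ∑ w : M, ∑ w' : M,
          (a w * b w') * sgn (ψ (w + w')) := Finset.sum_congr rfl fun ψ _ => expand ψ
    _ = ∑ w : M, ∑ w' : M, (a w * b w') *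
          ∑ ψ : Module.Dual (ZMod 2) M, sgn (ψ (w + w')) := by
        rw [Finset.sum_comm]
        refine Finset.sum_congr rfl fun w _ => ?_
        rw [Finset.sum_comm]
        refine Finset.sum_congr rfl fun w' _ => ?_
        rw [Finset.mul_sum]
    _ = (Fintype.card M : ℝ) * ∑ w : M, a w * b w := by
        simp_rw [sum_sgn_dual]
        rw [Finset.mul_sum]
        refine Finset.sum_congr rfl fun w _ => ?_
        have : ∀ w' : M, (a w * b w') * (if w + w' = 0 then (Fintype.card M : ℝ) else 0)
            = if w' = w then (a w * b w') * (Fintype.card M : ℝ) else 0 := by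
          intro w'
          by_cases h : w + w' = 0
          · rw [if_pos h, if_pos (add_eq_zero_iff'.1 h)]
          · rw [if_neg h, if_neg (fun hc => h (by rw [hc]; exact addself w)), mul_zero]
        simp_rw [this]
        rw [Finset.sum_ite_eq' Finset.univ w]
        simp; ring

/-- expansion of a product of three "Fourier sums" over the dual -/
lemma sum_dual_mul3 (a b c : M → ℝ) :
    ∑ ψ : Module.Dual (ZMod 2) M,
      (∑ w : M, a w * sgn (ψ w)) * ((∑ w : M, b w * sgn (ψ w)) * (∑ w : M, c w * sgn (ψ w)))
      = (Fintype.card M : ℝ) * ∑ w₁ : M, ∑ w₂ : M, a w₁ * (b w₂ * c (w₁ + w₂)) := by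
  have expand : ∀ ψ : Module.Dual (ZMod 2) M,
      (∑ w : M, a w * sgn (ψ w)) * ((∑ w : M, b w * sgn (ψ w)) * (∑ w : M, c w * sgn (ψ w)))
      = ∑ w₁ : M, ∑ w₂ : M, ∑ w₃ : M,
          (a w₁ * (b w₂ * c w₃)) * sgn (ψ (w₁ + w₂ + w₃)) := by
    intro ψ
    rw [Finset.sum_mul_sum, Finset.sum_mul_sum]
    refine Finset.sum_congr rfl fun w₁ _ => Finset.sum_congr rfl fun w₂ _ => ?_
    rw [Finset.mul_sum]
    refine Finset.sum_congr rfl fun w₃ _ => ?_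
    rw [map_add, map_add, sgn_add, sgn_add]; ring
  calc ∑ ψ : Module.Dual (ZMod 2) M,
        (∑ w : M, a w * sgn (ψ w)) * ((∑ w : M, b w * sgn (ψ w)) * (∑ w : M, c w * sgn (ψ w)))
      = ∑ ψ : Module.Dual (ZMod 2) M, ∑ w₁ : M, ∑ w₂ : M, ∑ w₃ : M,
          (a w₁ * (b w₂ * c w₃)) * sgn (ψ (w₁ + w₂ + w₃)) :=
        Finset.sum_congr rfl fun ψ _ => expand ψ
    _ = ∑ w₁ : M, ∑ w₂ : M, ∑ w₃ : M, (a w₁ * (b w₂ * c w₃)) *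
          ∑ ψ : Module.Dual (ZMod 2) M, sgn (ψ (w₁ + w₂ + w₃)) := by
        rw [Finset.sum_comm]
        refine Finset.sum_congr rfl fun w₁ _ => ?_
        rw [Finset.sum_comm]
        refine Finset.sum_congr rfl fun w₂ _ => ?_
        rw [Finset.sum_comm]
        refine Finset.sum_congr rfl fun w₃ _ => ?_
        rw [Finset.mul_sum]
    _ = (Fintype.card M : ℝ) * ∑ w₁ : M, ∑ w₂ : M, a w₁ * (b w₂ * c (w₁ + w₂)) := by
        simp_rw [sum_sgn_dual]
        rw [Finset.mul_sum]
        refine Finset.sum_congr rfl fun w₁ _ => ?_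
        rw [Finset.mul_sum]
        refine Finset.sum_congr rfl fun w₂ _ => ?_
        have : ∀ w₃ : M, (a w₁ * (b w₂ * c w₃)) *
              (if w₁ + w₂ + w₃ = 0 then (Fintype.card M : ℝ) else 0)
            = if w₃ = w₁ + w₂ then (a w₁ * (b w₂ * c w₃)) * (Fintype.card M : ℝ) else 0 := by
          intro w₃
          by_cases h : w₁ + w₂ + w₃ = 0
          · rw [if_pos h, if_pos (add_eq_zero_iff'.1 h)]
          · rw [if_neg h, if_neg (fun hc => h (by rw [hc]; exact addself _)), mul_zero]
        simp_rw [this]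
        rw [Finset.sum_ite_eq' Finset.univ (w₁ + w₂)]
        simp; ring

lemma plancherel (f : M → Y) (y : Y) :
    ∑ ψ : Module.Dual (ZMod 2) M, (Ff f y ψ)^2 = (Fintype.card M : ℝ) * Bf f y := by
  have h := sum_dual_mul2 (M := M) (fun w => if f w = y then (1:ℝ) else 0)
    (fun w => if f w = y then (1:ℝ) else 0)
  have h2 : ∀ w : M, (if f w = y then (1:ℝ) else 0) * (if f w = y then (1:ℝ) else 0)
      = if f w = y then (1:ℝ) else 0 := by
    intro w; split_ifs <;> norm_num
  simp_rw [h2] at h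
  unfold Ff Bf
  simpa [sq] using h


/-- indicator of the trivial character -/
def uu (ψ : Module.Dual (ZMod 2) M) : ℝ := if ψ = 0 then 1 else 0

/-- centered Fourier coefficient -/
def Gf (f : M → Y) (y : Y) (ψ : Module.Dual (ZMod 2) M) : ℝ := Ff f y ψ - Bf f y * uu ψ

/-- joint count for the sum constraint -/
def Af (f₁ : M → Y₁) (f₂ : M → Y₂) (f₃ : M → Y₃) (y : Y₁ × Y₂ × Y₃) : ℝ :=
  ∑ w₁ : M, ∑ w₂ : M, (if f₁ w₁ = y.1 then (1 : ℝ) else 0) *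
    ((if f₂ w₂ = y.2.1 then (1 : ℝ) else 0) * (if f₃ (w₁ + w₂) = y.2.2 then (1 : ℝ) else 0))

/-- Fourier weight of `f` at `ψ` -/
def dd (f : M → Y) (ψ : Module.Dual (ZMod 2) M) : ℝ :=
  ∑ y : Y, (Ff f y ψ / (Fintype.card M : ℝ))^2

/-- averaged conditional character bias -/
def dbar (f : M → Y) (ψ : Module.Dual (ZMod 2) M) : ℝ :=
  (∑ y : Y, |Gf f y ψ|) / (2 * (Fintype.card M : ℝ))

lemma cardM_pos : (0 : ℝ) < (Fintype.card M : ℝ) := by exact_mod_cast Fintype.card_pos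

lemma dd_nonneg (f : M → Y) (ψ : Module.Dual (ZMod 2) M) : 0 ≤ dd f ψ :=
  Finset.sum_nonneg fun y _ => sq_nonneg _

lemma dbar_nonneg (f : M → Y) (ψ : Module.Dual (ZMod 2) M) : 0 ≤ dbar f ψ := by
  unfold dbar
  have h1 : (0:ℝ) ≤ ∑ y : Y, |Gf f y ψ| := Finset.sum_nonneg fun y _ => abs_nonneg _
  have h2 := cardM_pos (M := M)
  positivity

lemma sum_dd (f : M → Y) : ∑ ψ : Module.Dual (ZMod 2) M, dd f ψ = 1 := by
  have hn := cardM_pos (M := M)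
  unfold dd
  rw [Finset.sum_comm]
  have h1 : ∀ y : Y, ∑ ψ : Module.Dual (ZMod 2) M, (Ff f y ψ / (Fintype.card M : ℝ))^2
      = Bf f y / (Fintype.card M : ℝ) := by
    intro y
    simp_rw [div_pow]
    rw [← Finset.sum_div, plancherel]
    rw [pow_two]
    field_simp
  simp_rw [h1]
  rw [← Finset.sum_div, sum_Bf]
  field_simp

lemma key_identity (f₁ : M → Y₁) (f₂ : M → Y₂) (f₃ : M → Y₃) (y : Y₁ × Y₂ × Y₃) :
    ∑ ψ : Module.Dual (ZMod 2) M, Ff f₁ y.1 ψ * (Ff f₂ y.2.1 ψ * Ff f₃ y.2.2 ψ)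
    = (Fintype.card M : ℝ) * Af f₁ f₂ f₃ y := by
  exact sum_dual_mul3 (fun w => if f₁ w = y.1 then (1:ℝ) else 0)
    (fun w => if f₂ w = y.2.1 then (1:ℝ) else 0)
    (fun w => if f₃ w = y.2.2 then (1:ℝ) else 0)

lemma sum_Gf_mul (f₁ : M → Y₁) (f₂ : M → Y₂) (f₃ : M → Y₃) (y : Y₁ × Y₂ × Y₃) :
    ∑ ψ : Module.Dual (ZMod 2) M, Gf f₁ y.1 ψ * (Ff f₂ y.2.1 ψ * Ff f₃ y.2.2 ψ)
    = (Fintype.card M : ℝ) * Af f₁ f₂ f₃ y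
      - Bf f₁ y.1 * (Bf f₂ y.2.1 * Bf f₃ y.2.2) := by
  unfold Gf
  simp_rw [sub_mul]
  rw [Finset.sum_sub_distrib, key_identity]
  congr 1
  have h1 : ∀ ψ : Module.Dual (ZMod 2) M,
      Bf f₁ y.1 * uu ψ * (Ff f₂ y.2.1 ψ * Ff f₃ y.2.2 ψ)
      = if ψ = 0 then Bf f₁ y.1 * (Ff f₂ y.2.1 ψ * Ff f₃ y.2.2 ψ) else 0 := by
    intro ψ
    unfold uu
    split_ifs <;> ring
  simp_rw [h1]
  rw [Finset.sum_ite_eq' Finset.univ (0 : Module.Dual (ZMod 2) M)]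
  simp [Ff_zero]

lemma point_eq (f₁ : M → Y₁) (f₂ : M → Y₂) (f₃ : M → Y₃) (y : Y₁ × Y₂ × Y₃) :
    Af f₁ f₂ f₃ y / (Fintype.card M : ℝ)^2
      - Bf f₁ y.1 * (Bf f₂ y.2.1 * Bf f₃ y.2.2) / (Fintype.card M : ℝ)^3
    = (∑ ψ : Module.Dual (ZMod 2) M, Gf f₁ y.1 ψ * (Ff f₂ y.2.1 ψ * Ff f₃ y.2.2 ψ))
        / (Fintype.card M : ℝ)^3 := by
  have hn := cardM_pos (M := M)
  rw [sum_Gf_mul]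
  field_simp

lemma sqrt_dd_eq (f : M → Y) (ψ : Module.Dual (ZMod 2) M) :
    Real.sqrt (∑ y : Y, (Ff f y ψ)^2) = (Fintype.card M : ℝ) * Real.sqrt (dd f ψ) := by
  have hn := cardM_pos (M := M)
  have h1 : ∑ y : Y, (Ff f y ψ)^2 = (Fintype.card M : ℝ)^2 * dd f ψ := by
    unfold dd
    rw [Finset.mul_sum]
    refine Finset.sum_congr rfl fun y _ => ?_
    rw [div_pow]
    field_simp
  rw [h1, Real.sqrt_mul (sq_nonneg _), Real.sqrt_sq hn.le]

lemma cs_Ff (f : M → Y) (ψ ψ' : Module.Dual (ZMod 2) M) :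
    |∑ y : Y, Ff f y ψ * Ff f y ψ'| ≤
      Real.sqrt (∑ y : Y, (Ff f y ψ)^2) * Real.sqrt (∑ y : Y, (Ff f y ψ')^2) := by
  rw [← Real.sqrt_sq_eq_abs, ← Real.sqrt_mul (Finset.sum_nonneg fun y _ => sq_nonneg _)]
  exact Real.sqrt_le_sqrt (Finset.sum_mul_sq_le_sq_mul_sq Finset.univ _ _)

lemma core (f₁ : M → Y₁) (f₂ : M → Y₂) (f₃ : M → Y₃) :
    (1/2) * ∑ y : Y₁ × Y₂ × Y₃,
      |Af f₁ f₂ f₃ y / (Fintype.card M : ℝ)^2 -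
        Bf f₁ y.1 * (Bf f₂ y.2.1 * Bf f₃ y.2.2) / (Fintype.card M : ℝ)^3|
    ≤ Real.sqrt ((Fintype.card Y₂ : ℝ) * (Fintype.card Y₃ : ℝ)) *
      ∑ ψ : Module.Dual (ZMod 2) M, dbar f₁ ψ * ((dd f₂ ψ + dd f₃ ψ)/2) := by
  have hn := cardM_pos (M := M)
  set n : ℝ := (Fintype.card M : ℝ) with hndef
  -- step A : fixed y₁
  have stepA : ∀ y₁ : Y₁,
      ∑ p : Y₂ × Y₃, |∑ ψ : Module.Dual (ZMod 2) M,
          Gf f₁ y₁ ψ * (Ff f₂ p.1 ψ * Ff f₃ p.2 ψ)|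
      ≤ Real.sqrt ((Fintype.card Y₂ : ℝ) * (Fintype.card Y₃ : ℝ)) *
        ∑ ψ : Module.Dual (ZMod 2) M, |Gf f₁ y₁ ψ| *
          (Real.sqrt (∑ y : Y₂, (Ff f₂ y ψ)^2) * Real.sqrt (∑ y : Y₃, (Ff f₃ y ψ)^2)) := by
    intro y₁
    set T : Y₂ × Y₃ → ℝ := fun p => ∑ ψ : Module.Dual (ZMod 2) M,
      Gf f₁ y₁ ψ * (Ff f₂ p.1 ψ * Ff f₃ p.2 ψ) with hT
    set R : ℝ := ∑ ψ : Module.Dual (ZMod 2) M, |Gf f₁ y₁ ψ| *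
      (Real.sqrt (∑ y : Y₂, (Ff f₂ y ψ)^2) * Real.sqrt (∑ y : Y₃, (Ff f₃ y ψ)^2)) with hR
    have hR0 : 0 ≤ R := Finset.sum_nonneg fun ψ _ => by positivity
    have hA2 : ∑ p : Y₂ × Y₃, (T p)^2 ≤ R^2 := by
      have hexp : ∑ p : Y₂ × Y₃, (T p)^2
          = ∑ ψ : Module.Dual (ZMod 2) M, ∑ ψ' : Module.Dual (ZMod 2) M,
            (Gf f₁ y₁ ψ * Gf f₁ y₁ ψ') *
              ((∑ y₂ : Y₂, Ff f₂ y₂ ψ * Ff f₂ y₂ ψ') *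
               (∑ y₃ : Y₃, Ff f₃ y₃ ψ * Ff f₃ y₃ ψ')) := by
        have h1 : ∀ p : Y₂ × Y₃, (T p)^2
            = ∑ q : (Module.Dual (ZMod 2) M) × (Module.Dual (ZMod 2) M),
              (Gf f₁ y₁ q.1 * (Ff f₂ p.1 q.1 * Ff f₃ p.2 q.1)) *
              (Gf f₁ y₁ q.2 * (Ff f₂ p.1 q.2 * Ff f₃ p.2 q.2)) := by
          intro p
          rw [hT, sq, Finset.sum_mul_sum, ← Finset.univ_product_univ]
          exact (Finset.sum_product' Finset.univ Finset.univ (fun i j =>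
            (Gf f₁ y₁ i * (Ff f₂ p.1 i * Ff f₃ p.2 i)) *
            (Gf f₁ y₁ j * (Ff f₂ p.1 j * Ff f₃ p.2 j)))).symm
        calc ∑ p : Y₂ × Y₃, (T p)^2
            = ∑ p : Y₂ × Y₃, ∑ q : (Module.Dual (ZMod 2) M) × (Module.Dual (ZMod 2) M),
              (Gf f₁ y₁ q.1 * (Ff f₂ p.1 q.1 * Ff f₃ p.2 q.1)) *
              (Gf f₁ y₁ q.2 * (Ff f₂ p.1 q.2 * Ff f₃ p.2 q.2)) :=
              Finset.sum_congr rfl fun p _ => h1 p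
          _ = ∑ q : (Module.Dual (ZMod 2) M) × (Module.Dual (ZMod 2) M), ∑ p : Y₂ × Y₃,
              (Gf f₁ y₁ q.1 * (Ff f₂ p.1 q.1 * Ff f₃ p.2 q.1)) *
              (Gf f₁ y₁ q.2 * (Ff f₂ p.1 q.2 * Ff f₃ p.2 q.2)) := Finset.sum_comm
          _ = ∑ q : (Module.Dual (ZMod 2) M) × (Module.Dual (ZMod 2) M),
              (Gf f₁ y₁ q.1 * Gf f₁ y₁ q.2) *
                ((∑ y₂ : Y₂, Ff f₂ y₂ q.1 * Ff f₂ y₂ q.2) *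
                 (∑ y₃ : Y₃, Ff f₃ y₃ q.1 * Ff f₃ y₃ q.2)) := by
              refine Finset.sum_congr rfl fun q _ => ?_
              have hsp : ∑ p : Y₂ × Y₃,
                  (Gf f₁ y₁ q.1 * (Ff f₂ p.1 q.1 * Ff f₃ p.2 q.1)) *
                  (Gf f₁ y₁ q.2 * (Ff f₂ p.1 q.2 * Ff f₃ p.2 q.2))
                  = ∑ y₂ : Y₂, ∑ y₃ : Y₃,
                  (Gf f₁ y₁ q.1 * (Ff f₂ y₂ q.1 * Ff f₃ y₃ q.1)) *
                  (Gf f₁ y₁ q.2 * (Ff f₂ y₂ q.2 * Ff f₃ y₃ q.2)) := by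
                rw [← Finset.univ_product_univ]
                exact Finset.sum_product _ _ _
              rw [hsp, Finset.sum_mul_sum, Finset.mul_sum]
              refine Finset.sum_congr rfl fun y₂ _ => ?_
              rw [Finset.mul_sum]
              refine Finset.sum_congr rfl fun y₃ _ => ?_
              ring
          _ = ∑ ψ : Module.Dual (ZMod 2) M, ∑ ψ' : Module.Dual (ZMod 2) M,
            (Gf f₁ y₁ ψ * Gf f₁ y₁ ψ') *
              ((∑ y₂ : Y₂, Ff f₂ y₂ ψ * Ff f₂ y₂ ψ') *
               (∑ y₃ : Y₃, Ff f₃ y₃ ψ * Ff f₃ y₃ ψ')) := by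
              rw [← Finset.univ_product_univ]
              exact Finset.sum_product _ _ _
      rw [hexp, hR, sq, Finset.sum_mul_sum]
      refine Finset.sum_le_sum fun ψ _ => Finset.sum_le_sum fun ψ' _ => ?_
      have h2 := cs_Ff f₂ ψ ψ'
      have h3 := cs_Ff f₃ ψ ψ'
      calc (Gf f₁ y₁ ψ * Gf f₁ y₁ ψ') *
              ((∑ y₂ : Y₂, Ff f₂ y₂ ψ * Ff f₂ y₂ ψ') *
               (∑ y₃ : Y₃, Ff f₃ y₃ ψ * Ff f₃ y₃ ψ'))
          ≤ |(Gf f₁ y₁ ψ * Gf f₁ y₁ ψ') *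
              ((∑ y₂ : Y₂, Ff f₂ y₂ ψ * Ff f₂ y₂ ψ') *
               (∑ y₃ : Y₃, Ff f₃ y₃ ψ * Ff f₃ y₃ ψ'))| := le_abs_self _
        _ = (|Gf f₁ y₁ ψ| * |Gf f₁ y₁ ψ'|) *
              (|∑ y₂ : Y₂, Ff f₂ y₂ ψ * Ff f₂ y₂ ψ'| *
               |∑ y₃ : Y₃, Ff f₃ y₃ ψ * Ff f₃ y₃ ψ'|) := by
            rw [abs_mul, abs_mul, abs_mul]
        _ ≤ (|Gf f₁ y₁ ψ| * |Gf f₁ y₁ ψ'|) *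
              ((Real.sqrt (∑ y : Y₂, (Ff f₂ y ψ)^2) * Real.sqrt (∑ y : Y₂, (Ff f₂ y ψ')^2)) *
               (Real.sqrt (∑ y : Y₃, (Ff f₃ y ψ)^2) * Real.sqrt (∑ y : Y₃, (Ff f₃ y ψ')^2))) := by
            refine mul_le_mul_of_nonneg_left ?_ (by positivity)
            exact mul_le_mul h2 h3 (abs_nonneg _) (by positivity)
        _ = (|Gf f₁ y₁ ψ| * (Real.sqrt (∑ y : Y₂, (Ff f₂ y ψ)^2) *
                Real.sqrt (∑ y : Y₃, (Ff f₃ y ψ)^2))) *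
            (|Gf f₁ y₁ ψ'| * (Real.sqrt (∑ y : Y₂, (Ff f₂ y ψ')^2) *
                Real.sqrt (∑ y : Y₃, (Ff f₃ y ψ')^2))) := by ring
    have hA1 : (∑ p : Y₂ × Y₃, |T p|)^2 ≤ (Fintype.card (Y₂ × Y₃) : ℝ) * ∑ p : Y₂ × Y₃, (T p)^2 := by
      have h := Finset.sum_mul_sq_le_sq_mul_sq Finset.univ (fun _ : Y₂ × Y₃ => (1:ℝ))
        (fun p => |T p|)
      simpa [sq_abs, Finset.card_univ] using h
    calc ∑ p : Y₂ × Y₃, |T p| = Real.sqrt ((∑ p : Y₂ × Y₃, |T p|)^2) :=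
          (Real.sqrt_sq (Finset.sum_nonneg fun p _ => abs_nonneg _)).symm
      _ ≤ Real.sqrt ((Fintype.card (Y₂ × Y₃) : ℝ) * ∑ p : Y₂ × Y₃, (T p)^2) :=
          Real.sqrt_le_sqrt hA1
      _ ≤ Real.sqrt ((Fintype.card (Y₂ × Y₃) : ℝ) * R^2) := by
          refine Real.sqrt_le_sqrt (mul_le_mul_of_nonneg_left hA2 (by positivity))
      _ = Real.sqrt ((Fintype.card Y₂ : ℝ) * (Fintype.card Y₃ : ℝ)) * R := by
          rw [Real.sqrt_mul (by positivity), Real.sqrt_sq hR0, Fintype.card_prod]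
          push_cast
          ring_nf
  -- reduce the LHS
  have hLHS : (1/2) * ∑ y : Y₁ × Y₂ × Y₃,
      |Af f₁ f₂ f₃ y / n^2 - Bf f₁ y.1 * (Bf f₂ y.2.1 * Bf f₃ y.2.2) / n^3|
      = (1/(2*n^3)) * ∑ y₁ : Y₁, ∑ p : Y₂ × Y₃,
          |∑ ψ : Module.Dual (ZMod 2) M, Gf f₁ y₁ ψ * (Ff f₂ p.1 ψ * Ff f₃ p.2 ψ)| := by
    rw [Fintype.sum_prod_type]
    have h1 : ∀ (y₁ : Y₁) (p : Y₂ × Y₃),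
        |Af f₁ f₂ f₃ (y₁, p) / n^2 - Bf f₁ y₁ * (Bf f₂ p.1 * Bf f₃ p.2) / n^3|
        = |∑ ψ : Module.Dual (ZMod 2) M, Gf f₁ y₁ ψ * (Ff f₂ p.1 ψ * Ff f₃ p.2 ψ)| / n^3 := by
      intro y₁ p
      rw [point_eq f₁ f₂ f₃ (y₁, p), abs_div,
        abs_of_pos (show (0:ℝ) < n^3 from by positivity)]
    simp_rw [h1]
    rw [Finset.mul_sum, Finset.mul_sum]
    refine Finset.sum_congr rfl fun y₁ _ => ?_
    rw [Finset.mul_sum, Finset.mul_sum]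
    refine Finset.sum_congr rfl fun p _ => ?_
    field_simp
  rw [hLHS]
  -- apply step A and reorganize
  have step2 : (1/(2*n^3)) * ∑ y₁ : Y₁, ∑ p : Y₂ × Y₃,
      |∑ ψ : Module.Dual (ZMod 2) M, Gf f₁ y₁ ψ * (Ff f₂ p.1 ψ * Ff f₃ p.2 ψ)|
      ≤ (1/(2*n^3)) * ∑ y₁ : Y₁,
          Real.sqrt ((Fintype.card Y₂ : ℝ) * (Fintype.card Y₃ : ℝ)) *
          ∑ ψ : Module.Dual (ZMod 2) M, |Gf f₁ y₁ ψ| *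
            (Real.sqrt (∑ y : Y₂, (Ff f₂ y ψ)^2) * Real.sqrt (∑ y : Y₃, (Ff f₃ y ψ)^2)) := by
    refine mul_le_mul_of_nonneg_left (Finset.sum_le_sum fun y₁ _ => stepA y₁) (by positivity)
  refine step2.trans ?_
  -- now an exact computation plus AM-GM
  have hre : (1/(2*n^3)) * ∑ y₁ : Y₁,
      Real.sqrt ((Fintype.card Y₂ : ℝ) * (Fintype.card Y₃ : ℝ)) *
      ∑ ψ : Module.Dual (ZMod 2) M, |Gf f₁ y₁ ψ| *
        (Real.sqrt (∑ y : Y₂, (Ff f₂ y ψ)^2) * Real.sqrt (∑ y : Y₃, (Ff f₃ y ψ)^2))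
      = Real.sqrt ((Fintype.card Y₂ : ℝ) * (Fintype.card Y₃ : ℝ)) *
        ∑ ψ : Module.Dual (ZMod 2) M, dbar f₁ ψ *
          (Real.sqrt (dd f₂ ψ) * Real.sqrt (dd f₃ ψ)) := by
    calc (1/(2*n^3)) * ∑ y₁ : Y₁,
        Real.sqrt ((Fintype.card Y₂ : ℝ) * (Fintype.card Y₃ : ℝ)) *
        ∑ ψ : Module.Dual (ZMod 2) M, |Gf f₁ y₁ ψ| *
          (Real.sqrt (∑ y : Y₂, (Ff f₂ y ψ)^2) * Real.sqrt (∑ y : Y₃, (Ff f₃ y ψ)^2))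
        = ∑ y₁ : Y₁, ∑ ψ : Module.Dual (ZMod 2) M, (1/(2*n^3)) *
            (Real.sqrt ((Fintype.card Y₂ : ℝ) * (Fintype.card Y₃ : ℝ)) *
            (|Gf f₁ y₁ ψ| *
              (Real.sqrt (∑ y : Y₂, (Ff f₂ y ψ)^2) * Real.sqrt (∑ y : Y₃, (Ff f₃ y ψ)^2)))) := by
          rw [Finset.mul_sum]
          refine Finset.sum_congr rfl fun y₁ _ => ?_
          rw [Finset.mul_sum, Finset.mul_sum]
      _ = ∑ ψ : Module.Dual (ZMod 2) M, ∑ y₁ : Y₁, (1/(2*n^3)) *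
            (Real.sqrt ((Fintype.card Y₂ : ℝ) * (Fintype.card Y₃ : ℝ)) *
            (|Gf f₁ y₁ ψ| *
              (Real.sqrt (∑ y : Y₂, (Ff f₂ y ψ)^2) * Real.sqrt (∑ y : Y₃, (Ff f₃ y ψ)^2)))) :=
          Finset.sum_comm
      _ = Real.sqrt ((Fintype.card Y₂ : ℝ) * (Fintype.card Y₃ : ℝ)) *
          ∑ ψ : Module.Dual (ZMod 2) M, dbar f₁ ψ *
            (Real.sqrt (dd f₂ ψ) * Real.sqrt (dd f₃ ψ)) := by
          rw [Finset.mul_sum]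
          refine Finset.sum_congr rfl fun ψ _ => ?_
          unfold dbar
          rw [div_mul_eq_mul_div, Finset.sum_mul, Finset.sum_div, Finset.mul_sum]
          refine Finset.sum_congr rfl fun y₁ _ => ?_
          rw [sqrt_dd_eq, sqrt_dd_eq, ← hndef]
          field_simp
  rw [hre]
  refine mul_le_mul_of_nonneg_left (Finset.sum_le_sum fun ψ _ => ?_) (Real.sqrt_nonneg _)
  refine mul_le_mul_of_nonneg_left ?_ (dbar_nonneg f₁ ψ)
  have h2 := Real.sq_sqrt (dd_nonneg f₂ ψ)
  have h3 := Real.sq_sqrt (dd_nonneg f₃ ψ)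
  nlinarith [sq_nonneg (Real.sqrt (dd f₂ ψ) - Real.sqrt (dd f₃ ψ))]


lemma sum_fiber (f : M → Y) (h : Y → ℝ) :
    ∑ w : M, h (f w) = ∑ y : Y, Bf f y * h y := by
  unfold Bf
  have h1 : ∀ y : Y, (∑ w : M, if f w = y then (1:ℝ) else 0) * h y
      = ∑ w : M, if f w = y then h y else 0 := by
    intro y
    rw [Finset.sum_mul]
    refine Finset.sum_congr rfl fun w _ => ?_
    split_ifs <;> norm_num
  simp_rw [h1]
  rw [Finset.sum_comm]
  refine Finset.sum_congr rfl fun w _ => ?_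
  rw [Finset.sum_ite_eq Finset.univ (f w) h]
  simp

lemma Ff_eq_zero_of_Bf_eq_zero {f : M → Y} {y : Y} (h : Bf f y = 0)
    (ψ : Module.Dual (ZMod 2) M) : Ff f y ψ = 0 := by
  have h1 := abs_Ff_le_Bf f y ψ
  rw [h] at h1
  have := abs_nonneg (Ff f y ψ)
  have : |Ff f y ψ| = 0 := le_antisymm h1 this
  exact abs_eq_zero.1 this

lemma Bh_abs (f : M → Y) (y : Y) (ψ : Module.Dual (ZMod 2) M) :
    Bf f y * ((1/2) * |Ff f y ψ / Bf f y - uu ψ|) = (1/2) * |Gf f y ψ| := by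
  rcases eq_or_lt_of_le (Bf_nonneg f y) with hB | hB
  · rw [← hB]
    unfold Gf
    rw [Ff_eq_zero_of_Bf_eq_zero hB.symm ψ, ← hB]
    norm_num
  · unfold Gf
    have hB' : Bf f y ≠ 0 := ne_of_gt hB
    rw [show Bf f y * ((1/2) * |Ff f y ψ / Bf f y - uu ψ|)
        = (1/2) * (|Bf f y| * |Ff f y ψ / Bf f y - uu ψ|) from by
      rw [abs_of_pos hB]; ring]
    rw [← abs_mul]
    congr 2
    field_simp

section Ambient

variable {V : Type*} [AddCommGroup V] [Module (ZMod 2) V] [Fintype V]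
variable (W : Submodule (ZMod 2) V)

/-- restriction of `g` to the coset `v + W` -/
def fb (g : V → Y) (v : V) : ↥W → Y := fun w => g (v + (w : V))

/-- pointwise conditional character bias -/
def dv (g : V → Y) (v : V) (ψ : Module.Dual (ZMod 2) ↥W) : ℝ :=
  (1/2) * |Ff (fb W g v) (g v) ψ / Bf (fb W g v) (g v) - uu ψ|

lemma dv_nonneg (g : V → Y) (v : V) (ψ : Module.Dual (ZMod 2) ↥W) : 0 ≤ dv W g v ψ := by
  unfold dv; positivity

lemma fb_shift_arg (g : V → Y) (v : V) (w₀ w : ↥W) :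
    fb W g (v + (w₀ : V)) (w₀ + w) = fb W g v w := by
  have harg : (v + (w₀:V)) + ((w₀ + w : ↥W) : V) = v + (w : V) := by
    push_cast
    rw [show v + (w₀:V) + ((w₀:V) + (w:V)) = v + (((w₀:V) + (w₀:V)) + (w:V)) from by abel,
      addself, zero_add]
  unfold fb
  exact congrArg g harg

lemma Bf_fb_shift (g : V → Y) (v : V) (w₀ : ↥W) (y : Y) :
    Bf (fb W g (v + (w₀ : V))) y = Bf (fb W g v) y := by
  unfold Bf
  rw [← Equiv.sum_comp (Equiv.addLeft w₀)
    (fun w => if fb W g (v + (w₀:V)) w = y then (1:ℝ) else 0)]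
  refine Finset.sum_congr rfl fun w _ => ?_
  simp only [Equiv.coe_addLeft]
  simp only [fb_shift_arg]

lemma Ff_fb_shift (g : V → Y) (v : V) (w₀ : ↥W) (y : Y) (ψ : Module.Dual (ZMod 2) ↥W) :
    Ff (fb W g (v + (w₀ : V))) y ψ = sgn (ψ w₀) * Ff (fb W g v) y ψ := by
  unfold Ff
  rw [← Equiv.sum_comp (Equiv.addLeft w₀)
    (fun w => (if fb W g (v + (w₀:V)) w = y then (1:ℝ) else 0) * sgn (ψ w))]
  rw [Finset.mul_sum]
  refine Finset.sum_congr rfl fun w _ => ?_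
  simp only [Equiv.coe_addLeft]
  simp only [fb_shift_arg, map_add, sgn_add]
  ring

lemma dv_shift (g : V → Y) (v : V) (w₀ : ↥W) (ψ : Module.Dual (ZMod 2) ↥W) :
    dv W g (v + (w₀ : V)) ψ
      = (1/2) * |Ff (fb W g v) (fb W g v w₀) ψ / Bf (fb W g v) (fb W g v w₀) - uu ψ| := by
  unfold dv
  have hgv : g (v + (w₀ : V)) = fb W g v w₀ := rfl
  rw [hgv, Bf_fb_shift, Ff_fb_shift]
  by_cases hψ : ψ = 0
  · subst hψ; simp
  · unfold uu
    rw [if_neg hψ, sub_zero, sub_zero, mul_div_assoc, abs_mul, abs_sgn, one_mul]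

lemma sum_dv_eq_sum_dbar (g : V → Y) (ψ : Module.Dual (ZMod 2) ↥W) :
    ∑ v : V, dv W g v ψ = ∑ v : V, dbar (fb W g v) ψ := by
  have hn : (0:ℝ) < (Fintype.card ↥W : ℝ) := by exact_mod_cast Fintype.card_pos
  have step2 : ∀ v : V, ∑ w : ↥W, dv W g (v + (w : V)) ψ
      = (Fintype.card ↥W : ℝ) * dbar (fb W g v) ψ := by
    intro v
    have h1 : ∀ w : ↥W, dv W g (v + (w : V)) ψ
        = (fun y => (1/2) * |Ff (fb W g v) y ψ / Bf (fb W g v) y - uu ψ|) (fb W g v w) :=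
      fun w => dv_shift W g v w ψ
    calc ∑ w : ↥W, dv W g (v + (w : V)) ψ
        = ∑ w : ↥W, (fun y => (1/2) * |Ff (fb W g v) y ψ / Bf (fb W g v) y - uu ψ|)
            (fb W g v w) := Finset.sum_congr rfl fun w _ => h1 w
      _ = ∑ y : Y, Bf (fb W g v) y *
            ((1/2) * |Ff (fb W g v) y ψ / Bf (fb W g v) y - uu ψ|) :=
          sum_fiber (fb W g v)
            (fun y => (1/2) * |Ff (fb W g v) y ψ / Bf (fb W g v) y - uu ψ|)
      _ = ∑ y : Y, (1/2) * |Gf (fb W g v) y ψ| :=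
          Finset.sum_congr rfl fun y _ => Bh_abs (fb W g v) y ψ
      _ = (Fintype.card ↥W : ℝ) * dbar (fb W g v) ψ := by
          unfold dbar
          rw [← Finset.mul_sum]
          have hw : (0:ℝ) < (Fintype.card ↥W : ℝ) := by exact_mod_cast Fintype.card_pos
          field_simp
  have step1 : ∑ v : V, ∑ w : ↥W, dv W g (v + (w : V)) ψ
      = (Fintype.card ↥W : ℝ) * ∑ v : V, dv W g v ψ := by
    rw [Finset.sum_comm]
    have h1 : ∀ w : ↥W, ∑ v : V, dv W g (v + (w : V)) ψ = ∑ v : V, dv W g v ψ :=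
      fun w => Equiv.sum_comp (Equiv.addRight ((w : V))) (fun v => dv W g v ψ)
    calc ∑ w : ↥W, ∑ v : V, dv W g (v + (w : V)) ψ
        = ∑ w : ↥W, ∑ v : V, dv W g v ψ := Finset.sum_congr rfl fun w _ => h1 w
      _ = (Fintype.card ↥W : ℝ) * ∑ v : V, dv W g v ψ := by
          rw [Finset.sum_const, Finset.card_univ, nsmul_eq_mul]
  have := step1.symm.trans (Finset.sum_congr rfl fun v (_ : v ∈ Finset.univ) => step2 v)
  -- this : card * ∑ dv = ∑ card * dbar
  rw [← Finset.mul_sum] at this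
  exact mul_left_cancel₀ (ne_of_gt hn) this

end Ambient

lemma ind_eq_sgn (a b : ZMod 2) :
    (if a = b then (1:ℝ) else 0) = (1 + sgn a * sgn b)/2 := by
  rcases zmod2cases a with ha | ha <;> rcases zmod2cases b with hb | hb <;>
    subst ha <;> subst hb <;>
    norm_num [sgn, show (1:ZMod 2) ≠ 0 from by decide, show (0:ZMod 2) ≠ 1 from by decide]

lemma card_filter_and_eq {α : Type*} (s : Finset α) (c q : α → Prop)
    {i1 : DecidablePred fun a => c a ∧ q a} [DecidablePred c] [DecidablePred q] :
    (((@Finset.filter α (fun a => c a ∧ q a) i1 s).card : ℕ) : ℝ)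
      = ∑ a ∈ s.filter c, (if q a then (1:ℝ) else 0) := by
  rw [Finset.sum_filter, Finset.card_filter]
  push_cast
  refine Finset.sum_congr rfl fun a _ => ?_
  by_cases hc : c a <;> by_cases hq : q a <;> simp [hc, hq]

end
end S14

open S14

set_option maxHeartbeats 2000000

open scoped Classical in
/-- If each character `χ` of a subspace `W ≤ V`, applied to `X₁`, is (on average over
`(x,y) ← P_{X,Y}`) close to uniform after conditioning on the coset `X ∈ x + W³` and
on `Y₁ = y₁`, then the joint law of `Y = (Y₁,Y₂,Y₃)` under `P` conditioned on the
coset is close (on average) to its law under the uniform distribution `U` on `V³`,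
with loss `√(|𝒴₂|·|𝒴₃|)`.  Here `P` is uniform on `{x ∈ V³ : x₁+x₂+x₃=0}`, each
`Yᵢ` is a function of `Xᵢ`, and characters of `W` are represented by (affine
extensions of) `F₂`-linear functionals `φ : V → F₂` via `χ = (−1)^φ`. -/
theorem stmt_14 (V : Type) [AddCommGroup V] [Module (ZMod 2) V] [Fintype V]
    (W : Submodule (ZMod 2) V)
    (𝒴₁ 𝒴₂ 𝒴₃ : Type) [Fintype 𝒴₁] [Fintype 𝒴₂] [Fintype 𝒴₃]
    (Y₁ : V → 𝒴₁) (Y₂ : V → 𝒴₂) (Y₃ : V → 𝒴₃) (ε : ℝ)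
    -- `S0` is the support of `P`
    (S0 : Finset (V × V × V))
    (hS0 : S0 = Finset.univ.filter (fun x : V × V × V => x.1 + x.2.1 + x.2.2 = 0))
    -- the coset event `X ∈ x + W³`
    (coset : (V × V × V) → (V × V × V) → Prop)
    (hcoset : ∀ x x', coset x x' ↔
      (x'.1 - x.1 ∈ W ∧ x'.2.1 - x.2.1 ∈ W ∧ x'.2.2 - x.2.2 ∈ W))
    -- hypothesis: for every character of `W`,
    -- `E_{(x,y)←P_{X,Y}}[d_TV(P_{χ(X₁) | X ∈ x+W³, Y₁=y₁}, U_{χ(X₁) | X ∈ x+W³})] ≤ ε`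
    (hchar : ∀ φ : V →ₗ[ZMod 2] ZMod 2,
      ∑ x ∈ S0, (1 / (S0.card : ℝ)) *
        ((1 / 2) * ∑ b : ZMod 2,
          |((S0.filter (fun x' => coset x x' ∧ Y₁ x'.1 = Y₁ x.1 ∧ φ x'.1 = b)).card : ℝ) /
              ((S0.filter (fun x' => coset x x' ∧ Y₁ x'.1 = Y₁ x.1)).card : ℝ) -
            ((Finset.univ.filter (fun x' => coset x x' ∧ φ x'.1 = b)).card : ℝ) /
              ((Finset.univ.filter (fun x' => coset x x')).card : ℝ)|) ≤ ε) :
    -- conclusion: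
    -- `E_{x←P_X}[d_TV(P_{Y | X ∈ x+W³}, U_{Y | X ∈ x+W³})] ≤ ε·√(|𝒴₂|·|𝒴₃|)`
    ∑ x ∈ S0, (1 / (S0.card : ℝ)) *
      ((1 / 2) * ∑ y : 𝒴₁ × 𝒴₂ × 𝒴₃,
        |((S0.filter (fun x' => coset x x' ∧
              Y₁ x'.1 = y.1 ∧ Y₂ x'.2.1 = y.2.1 ∧ Y₃ x'.2.2 = y.2.2)).card : ℝ) /
            ((S0.filter (fun x' => coset x x')).card : ℝ) -
          ((Finset.univ.filter (fun x' => coset x x' ∧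
              Y₁ x'.1 = y.1 ∧ Y₂ x'.2.1 = y.2.1 ∧ Y₃ x'.2.2 = y.2.2)).card : ℝ) /
            ((Finset.univ.filter (fun x' => coset x x')).card : ℝ)|) ≤
      ε * Real.sqrt ((Fintype.card 𝒴₂ : ℝ) * (Fintype.card 𝒴₃ : ℝ)) := by
  have hn : (0:ℝ) < (Fintype.card ↥W : ℝ) := by exact_mod_cast Fintype.card_pos
  have hV : (0:ℝ) < (Fintype.card V : ℝ) := by exact_mod_cast Fintype.card_pos
  -- coset indicator split
  have hind : ∀ (x x' : V × V × V) (q : Prop),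
      (if coset x x' ∧ q then (1:ℝ) else 0)
      = if x'.1 - x.1 ∈ W then (if x'.2.1 - x.2.1 ∈ W then
          (if x'.2.2 - x.2.2 ∈ W then (if q then (1:ℝ) else 0) else 0) else 0) else 0 := by
    intro x x' q
    by_cases h1 : x'.1 - x.1 ∈ W <;> by_cases h2 : x'.2.1 - x.2.1 ∈ W <;>
      by_cases h3 : x'.2.2 - x.2.2 ∈ W <;> simp [hcoset, h1, h2, h3]
  -- summing over a coset of W inside V
  have sum_coset_eq : ∀ (c : V) (F : V → ℝ),
      (∑ v : V, if v - c ∈ W then F v else 0) = ∑ w : ↥W, F (c + (w:V)) := by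
    intro c F
    rw [← Equiv.sum_comp (Equiv.addLeft c) (fun v => if v - c ∈ W then F v else 0)]
    simp only [Equiv.coe_addLeft, add_sub_cancel_left]
    rw [← Finset.sum_filter]
    exact Finset.sum_subtype _ (by simp) _
  have hindF : ∀ (x x' : V × V × V) (r : ℝ),
      (if coset x x' then r else 0)
      = if x'.1 - x.1 ∈ W then (if x'.2.1 - x.2.1 ∈ W then
          (if x'.2.2 - x.2.2 ∈ W then r else 0) else 0) else 0 := by
    intro x x' r
    by_cases h1 : x'.1 - x.1 ∈ W <;> by_cases h2 : x'.2.1 - x.2.1 ∈ W <;>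
      by_cases h3 : x'.2.2 - x.2.2 ∈ W <;> simp [hcoset, h1, h2, h3]
  -- master sum : unconditioned
  have master_univ : ∀ (x : V × V × V) (F : (V × V × V) → ℝ),
      ∑ x' ∈ Finset.univ.filter (fun x' => coset x x'), F x'
      = ∑ w₁ : ↥W, ∑ w₂ : ↥W, ∑ w₃ : ↥W,
          F (x.1 + (w₁:V), x.2.1 + (w₂:V), x.2.2 + (w₃:V)) := by
    intro x F
    rw [Finset.sum_filter, Fintype.sum_prod_type]
    calc ∑ v₁ : V, ∑ x' : V × V, (if coset x (v₁, x') then F (v₁, x') else 0)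
        = ∑ v₁ : V, if v₁ - x.1 ∈ W then (∑ v₂ : V, if v₂ - x.2.1 ∈ W then
            (∑ v₃ : V, if v₃ - x.2.2 ∈ W then F (v₁, v₂, v₃) else 0) else 0) else 0 := by
          refine Finset.sum_congr rfl fun v₁ _ => ?_
          rw [Fintype.sum_prod_type]
          by_cases h1 : v₁ - x.1 ∈ W
          · rw [if_pos h1]
            refine Finset.sum_congr rfl fun v₂ _ => ?_
            by_cases h2 : v₂ - x.2.1 ∈ W
            · rw [if_pos h2]
              refine Finset.sum_congr rfl fun v₃ _ => ?_
              rw [hindF x (v₁, v₂, v₃), if_pos h1, if_pos h2]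
            · rw [if_neg h2]
              refine Finset.sum_eq_zero fun v₃ _ => ?_
              rw [hindF x (v₁, v₂, v₃), if_pos h1, if_neg h2]
          · rw [if_neg h1]
            refine Finset.sum_eq_zero fun v₂ _ => ?_
            refine Finset.sum_eq_zero fun v₃ _ => ?_
            rw [hindF x (v₁, v₂, v₃), if_neg h1]
      _ = ∑ w₁ : ↥W, ∑ w₂ : ↥W, ∑ w₃ : ↥W,
          F (x.1 + (w₁:V), x.2.1 + (w₂:V), x.2.2 + (w₃:V)) := by
          rw [sum_coset_eq x.1]
          refine Finset.sum_congr rfl fun w₁ _ => ?_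
          rw [sum_coset_eq x.2.1]
          refine Finset.sum_congr rfl fun w₂ _ => ?_
          rw [sum_coset_eq x.2.2]
  have hx3 : ∀ x ∈ S0, x.2.2 = x.1 + x.2.1 := by
    intro x hx
    rw [hS0] at hx
    have h := (Finset.mem_filter.1 hx).2
    have h2 : (x.1 + x.2.1) + (x.1 + x.2.1 + x.2.2) = x.2.2 := by
      rw [show (x.1 + x.2.1) + (x.1 + x.2.1 + x.2.2)
          = (x.1 + x.1) + ((x.2.1 + x.2.1) + x.2.2) from by abel,
        addself, addself, zero_add, zero_add]
    rw [h, add_zero] at h2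
    exact h2.symm
  -- master sum : on S0
  have master_S0 : ∀ x ∈ S0, ∀ F : (V × V × V) → ℝ,
      ∑ x' ∈ S0.filter (fun x' => coset x x'), F x'
      = ∑ w₁ : ↥W, ∑ w₂ : ↥W,
          F (x.1 + (w₁:V), x.2.1 + (w₂:V), x.2.2 + ((w₁:V) + (w₂:V))) := by
    intro x hx F
    have hx3' : x.2.2 = x.1 + x.2.1 := hx3 x hx
    rw [Finset.sum_filter, hS0, Finset.sum_filter, Fintype.sum_prod_type]
    calc ∑ v₁ : V, ∑ x' : V × V, (if v₁ + x'.1 + x'.2 = 0 then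
            (if coset x (v₁, x') then F (v₁, x') else 0) else 0)
        = ∑ v₁ : V, ∑ v₂ : V, (if coset x (v₁, v₂, v₁ + v₂) then F (v₁, v₂, v₁ + v₂) else 0) := by
          refine Finset.sum_congr rfl fun v₁ _ => ?_
          rw [Fintype.sum_prod_type]
          refine Finset.sum_congr rfl fun v₂ _ => ?_
          have hc : ∀ v₃ : V, (if v₁ + v₂ + v₃ = 0 then
              (if coset x (v₁, v₂, v₃) then F (v₁, v₂, v₃) else 0) else 0)
              = if v₃ = v₁ + v₂ then
                (if coset x (v₁, v₂, v₃) then F (v₁, v₂, v₃) else 0) else 0 := by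
            intro v₃
            exact if_congr add_eq_zero_iff' rfl rfl
          simp_rw [hc]
          rw [Finset.sum_ite_eq' Finset.univ (v₁ + v₂)
            (fun v₃ => if coset x (v₁, v₂, v₃) then F (v₁, v₂, v₃) else 0)]
          simp
      _ = ∑ v₁ : V, if v₁ - x.1 ∈ W then (∑ v₂ : V, if v₂ - x.2.1 ∈ W then
            F (v₁, v₂, v₁ + v₂) else 0) else 0 := by
          refine Finset.sum_congr rfl fun v₁ _ => ?_
          by_cases h1 : v₁ - x.1 ∈ W
          · rw [if_pos h1]
            refine Finset.sum_congr rfl fun v₂ _ => ?_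
            by_cases h2 : v₂ - x.2.1 ∈ W
            · rw [if_pos h2]
              have h3 : (v₁ + v₂) - x.2.2 ∈ W := by
                have heq : (v₁ + v₂) - x.2.2 = (v₁ - x.1) + (v₂ - x.2.1) := by
                  rw [hx3']; abel
                rw [heq]
                exact W.add_mem h1 h2
              rw [hindF x (v₁, v₂, v₁ + v₂), if_pos h1, if_pos h2, if_pos h3]
            · rw [if_neg h2,
                hindF x (v₁, v₂, v₁ + v₂), if_pos h1, if_neg h2]
          · rw [if_neg h1]
            refine Finset.sum_eq_zero fun v₂ _ => ?_
            rw [hindF x (v₁, v₂, v₁ + v₂), if_neg h1]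
      _ = ∑ w₁ : ↥W, ∑ w₂ : ↥W,
          F (x.1 + (w₁:V), x.2.1 + (w₂:V), x.2.2 + ((w₁:V) + (w₂:V))) := by
          rw [sum_coset_eq x.1]
          refine Finset.sum_congr rfl fun w₁ _ => ?_
          rw [sum_coset_eq x.2.1]
          refine Finset.sum_congr rfl fun w₂ _ => ?_
          have heq : (x.1 + (w₁:V)) + (x.2.1 + (w₂:V)) = x.2.2 + ((w₁:V) + (w₂:V)) := by
            rw [hx3']; abel
          rw [heq]
  -- cardinalities of the coset events
  have hcard_univ : ∀ x : V × V × V,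
      ((Finset.univ.filter (fun x' => coset x x')).card : ℝ) = (Fintype.card ↥W : ℝ)^3 := by
    intro x
    have h0 : ((Finset.univ.filter (fun x' => coset x x')).card : ℝ)
        = ∑ x' ∈ Finset.univ.filter (fun x' => coset x x'), (1:ℝ) := by
      rw [Finset.card_eq_sum_ones]; push_cast; ring
    rw [h0, master_univ x (fun _ => (1:ℝ))]
    simp [Finset.sum_const, Finset.card_univ]
    ring
  have hcard_S0 : ∀ x ∈ S0,
      ((S0.filter (fun x' => coset x x')).card : ℝ) = (Fintype.card ↥W : ℝ)^2 := by
    intro x hx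
    have h0 : ((S0.filter (fun x' => coset x x')).card : ℝ)
        = ∑ x' ∈ S0.filter (fun x' => coset x x'), (1:ℝ) := by
      rw [Finset.card_eq_sum_ones]; push_cast; ring
    rw [h0, master_S0 x hx (fun _ => (1:ℝ))]
    simp [Finset.sum_const, Finset.card_univ]
    ring
  -- reparametrize S0 by V × V
  have hS0sum : ∀ g : (V × V × V) → ℝ,
      ∑ x ∈ S0, g x = ∑ a : V, ∑ b : V, g (a, b, a + b) := by
    intro g
    rw [hS0, Finset.sum_filter, Fintype.sum_prod_type]
    refine Finset.sum_congr rfl fun a _ => ?_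
    rw [Fintype.sum_prod_type]
    refine Finset.sum_congr rfl fun b _ => ?_
    have hc : ∀ c : V, (if a + b + c = 0 then g (a, b, c) else 0)
        = if c = a + b then g (a, b, c) else 0 :=
      fun c => if_congr add_eq_zero_iff' rfl rfl
    simp_rw [hc]
    rw [Finset.sum_ite_eq' Finset.univ (a + b) (fun c => g (a, b, c))]
    simp
  have hS0card : (S0.card : ℝ) = (Fintype.card V : ℝ)^2 := by
    have h1 : ((S0.card : ℕ) : ℝ) = ∑ x ∈ S0, (1:ℝ) := by
      rw [Finset.card_eq_sum_ones]; push_cast; ring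
    rw [h1, hS0sum (fun _ => (1:ℝ))]
    simp [Finset.sum_const, Finset.card_univ]
    ring
  -- conversion of the character hypothesis
  have hdv : ∀ ψ : Module.Dual (ZMod 2) ↥W,
      ∑ x ∈ S0, (1 / (S0.card : ℝ)) * dv W Y₁ x.1 ψ ≤ ε := by
    intro ψ
    obtain ⟨φ, hφ⟩ := LinearMap.exists_extend ψ
    have hφw : ∀ w : ↥W, φ ((w : V)) = ψ w := fun w => by
      have := LinearMap.ext_iff.1 hφ w
      simpa using this
    have hφx : ∀ (v : V) (w : ↥W), φ (v + (w:V)) = φ v + ψ w := by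
      intro v w; rw [map_add, hφw]
    have key : ∀ x ∈ S0, (1 / 2 : ℝ) * ∑ b : ZMod 2,
        |((S0.filter (fun x' => coset x x' ∧ Y₁ x'.1 = Y₁ x.1 ∧ φ x'.1 = b)).card : ℝ) /
            ((S0.filter (fun x' => coset x x' ∧ Y₁ x'.1 = Y₁ x.1)).card : ℝ) -
          ((Finset.univ.filter (fun x' => coset x x' ∧ φ x'.1 = b)).card : ℝ) /
            ((Finset.univ.filter (fun x' => coset x x')).card : ℝ)|
        = dv W Y₁ x.1 ψ := by
      intro x hx
      set n : ℝ := (Fintype.card ↥W : ℝ) with hndef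
      set B : ℝ := Bf (fb W Y₁ x.1) (Y₁ x.1) with hBdef
      set F : ℝ := Ff (fb W Y₁ x.1) (Y₁ x.1) ψ with hFdef
      have hB1 : 1 ≤ B := by
        have h := one_le_Bf_self (fb W Y₁ x.1) 0
        have h0 : fb W Y₁ x.1 (0 : ↥W) = Y₁ x.1 := by simp [fb]
        rw [h0] at h
        exact h
      have hB0 : B ≠ 0 := by linarith
      have hn0 : n ≠ 0 := ne_of_gt hn
      -- the four counts
      have hBsum : B = ∑ w₁ : ↥W, (if Y₁ (x.1 + (w₁:V)) = Y₁ x.1 then (1:ℝ) else 0) := by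
        rw [hBdef]; unfold Bf fb; rfl
      have hFsum : F = ∑ w₁ : ↥W,
          (if Y₁ (x.1 + (w₁:V)) = Y₁ x.1 then (1:ℝ) else 0) * sgn (ψ w₁) := by
        rw [hFdef]; unfold Ff fb; rfl
      have hnum1 : ∀ b : ZMod 2,
          ((S0.filter (fun x' => coset x x' ∧ Y₁ x'.1 = Y₁ x.1 ∧ φ x'.1 = b)).card : ℝ)
          = n * ∑ w₁ : ↥W, (if (Y₁ (x.1 + (w₁:V)) = Y₁ x.1 ∧ φ (x.1 + (w₁:V)) = b)
              then (1:ℝ) else 0) := by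
        intro b
        rw [card_filter_and_eq S0 (fun x' => coset x x')
          (fun x' => Y₁ x'.1 = Y₁ x.1 ∧ φ x'.1 = b)]
        rw [master_S0 x hx (fun x' => if (Y₁ x'.1 = Y₁ x.1 ∧ φ x'.1 = b) then (1:ℝ) else 0)]
        rw [Finset.mul_sum]
        refine Finset.sum_congr rfl fun w₁ _ => ?_
        by_cases hA : (Y₁ (x.1 + (w₁:V)) = Y₁ x.1 ∧ φ (x.1 + (w₁:V)) = b) <;>
          simp [hA, Finset.sum_const, Finset.card_univ, ← hndef]
      have hden1 : ((S0.filter (fun x' => coset x x' ∧ Y₁ x'.1 = Y₁ x.1)).card : ℝ)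
          = n * B := by
        rw [card_filter_and_eq S0 (fun x' => coset x x') (fun x' => Y₁ x'.1 = Y₁ x.1)]
        rw [master_S0 x hx (fun x' => if Y₁ x'.1 = Y₁ x.1 then (1:ℝ) else 0)]
        rw [hBsum, Finset.mul_sum]
        refine Finset.sum_congr rfl fun w₁ _ => ?_
        by_cases hA : (Y₁ (x.1 + (w₁:V)) = Y₁ x.1) <;>
          simp [hA, Finset.sum_const, Finset.card_univ, ← hndef]
      have hnum2 : ∀ b : ZMod 2,
          ((Finset.univ.filter (fun x' => coset x x' ∧ φ x'.1 = b)).card : ℝ)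
          = n^2 * ∑ w₁ : ↥W, (if φ (x.1 + (w₁:V)) = b then (1:ℝ) else 0) := by
        intro b
        rw [card_filter_and_eq Finset.univ (fun x' => coset x x') (fun x' => φ x'.1 = b)]
        rw [master_univ x (fun x' => if φ x'.1 = b then (1:ℝ) else 0)]
        rw [Finset.mul_sum]
        refine Finset.sum_congr rfl fun w₁ _ => ?_
        by_cases hA : (φ (x.1 + (w₁:V)) = b) <;>
          simp [hA, Finset.sum_const, Finset.card_univ, ← hndef] <;> ring
      -- sums in closed form
      have hN : ∀ b : ZMod 2,
          ∑ w₁ : ↥W, (if (Y₁ (x.1 + (w₁:V)) = Y₁ x.1 ∧ φ (x.1 + (w₁:V)) = b)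
              then (1:ℝ) else 0)
          = (B + sgn b * (sgn (φ x.1) * F))/2 := by
        intro b
        have hpt : ∀ w₁ : ↥W, (if (Y₁ (x.1 + (w₁:V)) = Y₁ x.1 ∧ φ (x.1 + (w₁:V)) = b)
              then (1:ℝ) else 0)
            = (if Y₁ (x.1 + (w₁:V)) = Y₁ x.1 then (1:ℝ) else 0) * (1/2)
              + (sgn b * (sgn (φ x.1) * (1/2))) *
                ((if Y₁ (x.1 + (w₁:V)) = Y₁ x.1 then (1:ℝ) else 0) * sgn (ψ w₁)) := by
          intro w₁
          have hsplit : (if (Y₁ (x.1 + (w₁:V)) = Y₁ x.1 ∧ φ (x.1 + (w₁:V)) = b)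
                then (1:ℝ) else 0)
              = (if Y₁ (x.1 + (w₁:V)) = Y₁ x.1 then (1:ℝ) else 0) *
                (if φ (x.1 + (w₁:V)) = b then (1:ℝ) else 0) := by
            by_cases hA : Y₁ (x.1 + (w₁:V)) = Y₁ x.1 <;>
              by_cases hC : φ (x.1 + (w₁:V)) = b <;> simp [hA, hC]
          rw [hsplit, ind_eq_sgn, hφx x.1 w₁, sgn_add]
          ring
        rw [Finset.sum_congr rfl fun w₁ _ => hpt w₁]
        rw [Finset.sum_add_distrib, ← Finset.sum_mul, ← Finset.mul_sum, ← hBsum, ← hFsum]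
        ring
      have hM : ∀ b : ZMod 2,
          ∑ w₁ : ↥W, (if φ (x.1 + (w₁:V)) = b then (1:ℝ) else 0)
          = (n + sgn b * (sgn (φ x.1) * (if ψ = 0 then n else 0)))/2 := by
        intro b
        have hpt : ∀ w₁ : ↥W, (if φ (x.1 + (w₁:V)) = b then (1:ℝ) else 0)
            = (1/2) + (sgn b * (sgn (φ x.1) * (1/2))) * sgn (ψ w₁) := by
          intro w₁
          rw [ind_eq_sgn, hφx x.1 w₁, sgn_add]
          ring
        rw [Finset.sum_congr rfl fun w₁ _ => hpt w₁]
        rw [Finset.sum_add_distrib, ← Finset.mul_sum, sum_sgn_self]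
        simp only [Finset.sum_const, Finset.card_univ, nsmul_eq_mul, ← hndef]
        ring
      -- per-b difference
      have hdiff : ∀ b : ZMod 2,
          |((S0.filter (fun x' => coset x x' ∧ Y₁ x'.1 = Y₁ x.1 ∧ φ x'.1 = b)).card : ℝ) /
              ((S0.filter (fun x' => coset x x' ∧ Y₁ x'.1 = Y₁ x.1)).card : ℝ) -
            ((Finset.univ.filter (fun x' => coset x x' ∧ φ x'.1 = b)).card : ℝ) /
              ((Finset.univ.filter (fun x' => coset x x')).card : ℝ)|
          = |F / B - uu ψ| / 2 := by
        intro b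
        rw [hnum1 b, hden1, hnum2 b, hcard_univ x, hN b, hM b]
        rw [show ((Fintype.card ↥W : ℝ))^3 = n^3 from by rw [hndef]]
        have heq : n * ((B + sgn b * (sgn (φ x.1) * F))/2) / (n * B)
            - n^2 * ((n + sgn b * (sgn (φ x.1) * (if ψ = 0 then n else 0)))/2) / n^3
            = (sgn b * sgn (φ x.1)) * (F / B - uu ψ) / 2 := by
          unfold uu
          split_ifs with hψ
          · field_simp
            ring
          · field_simp
            ring
        rw [heq, abs_div, abs_mul, abs_mul, abs_sgn, abs_sgn]
        norm_num
      rw [Finset.sum_congr rfl fun b _ => hdiff b]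
      rw [Finset.sum_const, Finset.card_univ]
      rw [show (Fintype.card (ZMod 2)) = 2 from rfl]
      unfold dv
      rw [← hBdef, ← hFdef]
      push_cast
      ring
    have h := hchar φ
    refine le_trans (le_of_eq (Finset.sum_congr rfl fun x hx => ?_)) h
    rw [key x hx]
  -- goal side counts
  have hgoalP : ∀ x ∈ S0, ∀ y : 𝒴₁ × 𝒴₂ × 𝒴₃,
      ((S0.filter (fun x' => coset x x' ∧
          Y₁ x'.1 = y.1 ∧ Y₂ x'.2.1 = y.2.1 ∧ Y₃ x'.2.2 = y.2.2)).card : ℝ)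
      = Af (fb W Y₁ x.1) (fb W Y₂ x.2.1) (fb W Y₃ x.2.2) y := by
    intro x hx y
    rw [card_filter_and_eq S0 (fun x' => coset x x')
      (fun x' => Y₁ x'.1 = y.1 ∧ Y₂ x'.2.1 = y.2.1 ∧ Y₃ x'.2.2 = y.2.2)]
    rw [master_S0 x hx (fun x' => if (Y₁ x'.1 = y.1 ∧ Y₂ x'.2.1 = y.2.1 ∧ Y₃ x'.2.2 = y.2.2)
      then (1:ℝ) else 0)]
    unfold Af fb
    refine Finset.sum_congr rfl fun w₁ _ => Finset.sum_congr rfl fun w₂ _ => ?_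
    by_cases h1 : Y₁ (x.1 + (w₁:V)) = y.1 <;>
      by_cases h2 : Y₂ (x.2.1 + (w₂:V)) = y.2.1 <;>
      by_cases h3 : Y₃ (x.2.2 + ((w₁:V) + (w₂:V))) = y.2.2 <;>
      simp [h1, h2, h3, Submodule.coe_add]
  have hgoalU : ∀ (x : V × V × V) (y : 𝒴₁ × 𝒴₂ × 𝒴₃),
      ((Finset.univ.filter (fun x' => coset x x' ∧
          Y₁ x'.1 = y.1 ∧ Y₂ x'.2.1 = y.2.1 ∧ Y₃ x'.2.2 = y.2.2)).card : ℝ)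
      = Bf (fb W Y₁ x.1) y.1 * (Bf (fb W Y₂ x.2.1) y.2.1 * Bf (fb W Y₃ x.2.2) y.2.2) := by
    intro x y
    rw [card_filter_and_eq Finset.univ (fun x' => coset x x')
      (fun x' => Y₁ x'.1 = y.1 ∧ Y₂ x'.2.1 = y.2.1 ∧ Y₃ x'.2.2 = y.2.2)]
    rw [master_univ x (fun x' => if (Y₁ x'.1 = y.1 ∧ Y₂ x'.2.1 = y.2.1 ∧ Y₃ x'.2.2 = y.2.2)
      then (1:ℝ) else 0)]
    calc ∑ w₁ : ↥W, ∑ w₂ : ↥W, ∑ w₃ : ↥W,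
          (if (Y₁ ((x.1 + (w₁:V), x.2.1 + (w₂:V), x.2.2 + (w₃:V)) : V×V×V).1 = y.1 ∧
              Y₂ ((x.1 + (w₁:V), x.2.1 + (w₂:V), x.2.2 + (w₃:V)) : V×V×V).2.1 = y.2.1 ∧
              Y₃ ((x.1 + (w₁:V), x.2.1 + (w₂:V), x.2.2 + (w₃:V)) : V×V×V).2.2 = y.2.2)
            then (1:ℝ) else 0)
        = ∑ w₁ : ↥W, ∑ w₂ : ↥W, ∑ w₃ : ↥W,
          (if Y₁ (x.1 + (w₁:V)) = y.1 then (1:ℝ) else 0) *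
            ((if Y₂ (x.2.1 + (w₂:V)) = y.2.1 then (1:ℝ) else 0) *
             (if Y₃ (x.2.2 + (w₃:V)) = y.2.2 then (1:ℝ) else 0)) := by
          refine Finset.sum_congr rfl fun w₁ _ => Finset.sum_congr rfl fun w₂ _ =>
            Finset.sum_congr rfl fun w₃ _ => ?_
          by_cases h1 : Y₁ (x.1 + (w₁:V)) = y.1 <;>
            by_cases h2 : Y₂ (x.2.1 + (w₂:V)) = y.2.1 <;>
            by_cases h3 : Y₃ (x.2.2 + (w₃:V)) = y.2.2 <;>
            simp [h1, h2, h3]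
      _ = ∑ w₁ : ↥W, (if Y₁ (x.1 + (w₁:V)) = y.1 then (1:ℝ) else 0) *
            ((∑ w₂ : ↥W, if Y₂ (x.2.1 + (w₂:V)) = y.2.1 then (1:ℝ) else 0) *
             (∑ w₃ : ↥W, if Y₃ (x.2.2 + (w₃:V)) = y.2.2 then (1:ℝ) else 0)) := by
          refine Finset.sum_congr rfl fun w₁ _ => ?_
          rw [Finset.sum_mul_sum, Finset.mul_sum]
          refine Finset.sum_congr rfl fun w₂ _ => ?_
          rw [Finset.mul_sum]
      _ = Bf (fb W Y₁ x.1) y.1 * (Bf (fb W Y₂ x.2.1) y.2.1 * Bf (fb W Y₃ x.2.2) y.2.2) := by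
          rw [← Finset.sum_mul]
          rfl
  -- rewrite the goal summand and apply the core inequality
  have hcore : ∀ x ∈ S0,
      (1 / 2 : ℝ) * ∑ y : 𝒴₁ × 𝒴₂ × 𝒴₃,
        |((S0.filter (fun x' => coset x x' ∧
              Y₁ x'.1 = y.1 ∧ Y₂ x'.2.1 = y.2.1 ∧ Y₃ x'.2.2 = y.2.2)).card : ℝ) /
            ((S0.filter (fun x' => coset x x')).card : ℝ) -
          ((Finset.univ.filter (fun x' => coset x x' ∧
              Y₁ x'.1 = y.1 ∧ Y₂ x'.2.1 = y.2.1 ∧ Y₃ x'.2.2 = y.2.2)).card : ℝ) /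
            ((Finset.univ.filter (fun x' => coset x x')).card : ℝ)|
      ≤ Real.sqrt ((Fintype.card 𝒴₂ : ℝ) * (Fintype.card 𝒴₃ : ℝ)) *
        ∑ ψ : Module.Dual (ZMod 2) ↥W, dbar (fb W Y₁ x.1) ψ *
          ((dd (fb W Y₂ x.2.1) ψ + dd (fb W Y₃ x.2.2) ψ)/2) := by
    intro x hx
    have heq : ∀ y : 𝒴₁ × 𝒴₂ × 𝒴₃,
        |((S0.filter (fun x' => coset x x' ∧
              Y₁ x'.1 = y.1 ∧ Y₂ x'.2.1 = y.2.1 ∧ Y₃ x'.2.2 = y.2.2)).card : ℝ) /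
            ((S0.filter (fun x' => coset x x')).card : ℝ) -
          ((Finset.univ.filter (fun x' => coset x x' ∧
              Y₁ x'.1 = y.1 ∧ Y₂ x'.2.1 = y.2.1 ∧ Y₃ x'.2.2 = y.2.2)).card : ℝ) /
            ((Finset.univ.filter (fun x' => coset x x')).card : ℝ)|
        = |Af (fb W Y₁ x.1) (fb W Y₂ x.2.1) (fb W Y₃ x.2.2) y / (Fintype.card ↥W : ℝ)^2 -
            Bf (fb W Y₁ x.1) y.1 * (Bf (fb W Y₂ x.2.1) y.2.1 * Bf (fb W Y₃ x.2.2) y.2.2) /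
              (Fintype.card ↥W : ℝ)^3| := by
      intro y
      rw [hgoalP x hx y, hgoalU x y, hcard_S0 x hx, hcard_univ x]
    rw [Finset.sum_congr rfl fun y _ => heq y]
    exact core (fb W Y₁ x.1) (fb W Y₂ x.2.1) (fb W Y₃ x.2.2)
  -- average bound on the character bias
  have hA2bound : ∀ ψ : Module.Dual (ZMod 2) ↥W,
      ∑ a : V, dbar (fb W Y₁ a) ψ ≤ ε * (Fintype.card V : ℝ) := by
    intro ψ
    have h1 := hdv ψ
    have h2 : ∑ x ∈ S0, (1 / (S0.card : ℝ)) * dv W Y₁ x.1 ψ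
        = (1 / (S0.card : ℝ)) * ((∑ a : V, dv W Y₁ a ψ) * (Fintype.card V : ℝ)) := by
      rw [← Finset.mul_sum, hS0sum (fun x => dv W Y₁ x.1 ψ)]
      congr 1
      rw [Finset.sum_mul]
      refine Finset.sum_congr rfl fun a _ => ?_
      simp only [Finset.sum_const, Finset.card_univ, nsmul_eq_mul]
      ring
    rw [h2, hS0card] at h1
    have h3 : (∑ a : V, dv W Y₁ a ψ) / (Fintype.card V : ℝ) ≤ ε := by
      have hq : ((Fintype.card V : ℝ))^2 ≠ 0 := by positivity
      calc (∑ a : V, dv W Y₁ a ψ) / (Fintype.card V : ℝ)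
          = (1 / ((Fintype.card V : ℝ))^2) * ((∑ a : V, dv W Y₁ a ψ) * (Fintype.card V : ℝ)) := by
            field_simp
        _ ≤ ε := h1
    rw [← sum_dv_eq_sum_dbar]
    exact (div_le_iff₀ hV).1 h3
  -- Plancherel totals
  have hD2 : ∑ ψ : Module.Dual (ZMod 2) ↥W, ∑ b : V, dd (fb W Y₂ b) ψ
      = (Fintype.card V : ℝ) := by
    rw [Finset.sum_comm]
    have h1 : ∀ b : V, ∑ ψ : Module.Dual (ZMod 2) ↥W, dd (fb W Y₂ b) ψ = 1 :=
      fun b => sum_dd (fb W Y₂ b)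
    rw [Finset.sum_congr rfl fun b _ => h1 b]
    rw [Finset.sum_const, Finset.card_univ, nsmul_eq_mul, mul_one]
  have hD3 : ∑ ψ : Module.Dual (ZMod 2) ↥W, ∑ b : V, dd (fb W Y₃ b) ψ
      = (Fintype.card V : ℝ) := by
    rw [Finset.sum_comm]
    have h1 : ∀ b : V, ∑ ψ : Module.Dual (ZMod 2) ↥W, dd (fb W Y₃ b) ψ = 1 :=
      fun b => sum_dd (fb W Y₃ b)
    rw [Finset.sum_congr rfl fun b _ => h1 b]
    rw [Finset.sum_const, Finset.card_univ, nsmul_eq_mul, mul_one]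
  -- assemble
  calc ∑ x ∈ S0, (1 / (S0.card : ℝ)) *
      ((1 / 2) * ∑ y : 𝒴₁ × 𝒴₂ × 𝒴₃,
        |((S0.filter (fun x' => coset x x' ∧
              Y₁ x'.1 = y.1 ∧ Y₂ x'.2.1 = y.2.1 ∧ Y₃ x'.2.2 = y.2.2)).card : ℝ) /
            ((S0.filter (fun x' => coset x x')).card : ℝ) -
          ((Finset.univ.filter (fun x' => coset x x' ∧
              Y₁ x'.1 = y.1 ∧ Y₂ x'.2.1 = y.2.1 ∧ Y₃ x'.2.2 = y.2.2)).card : ℝ) /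
            ((Finset.univ.filter (fun x' => coset x x')).card : ℝ)|)
      ≤ ∑ x ∈ S0, (1 / (S0.card : ℝ)) *
        (Real.sqrt ((Fintype.card 𝒴₂ : ℝ) * (Fintype.card 𝒴₃ : ℝ)) *
          ∑ ψ : Module.Dual (ZMod 2) ↥W, dbar (fb W Y₁ x.1) ψ *
            ((dd (fb W Y₂ x.2.1) ψ + dd (fb W Y₃ x.2.2) ψ)/2)) := by
        refine Finset.sum_le_sum fun x hx => ?_
        refine mul_le_mul_of_nonneg_left (hcore x hx) (by positivity)
    _ = (1 / (S0.card : ℝ)) * (Real.sqrt ((Fintype.card 𝒴₂ : ℝ) * (Fintype.card 𝒴₃ : ℝ)) *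
          ∑ ψ : Module.Dual (ZMod 2) ↥W, (∑ a : V, dbar (fb W Y₁ a) ψ) *
            (((∑ b : V, dd (fb W Y₂ b) ψ) + (∑ b : V, dd (fb W Y₃ b) ψ))/2)) := by
        rw [← Finset.mul_sum]
        congr 1
        rw [← Finset.mul_sum]
        congr 1
        rw [hS0sum (fun x => ∑ ψ : Module.Dual (ZMod 2) ↥W, dbar (fb W Y₁ x.1) ψ *
          ((dd (fb W Y₂ x.2.1) ψ + dd (fb W Y₃ x.2.2) ψ)/2))]
        calc ∑ a : V, ∑ b : V, ∑ ψ : Module.Dual (ZMod 2) ↥W, dbar (fb W Y₁ a) ψ *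
              ((dd (fb W Y₂ b) ψ + dd (fb W Y₃ (a + b)) ψ)/2)
            = ∑ a : V, ∑ ψ : Module.Dual (ZMod 2) ↥W, ∑ b : V, dbar (fb W Y₁ a) ψ *
              ((dd (fb W Y₂ b) ψ + dd (fb W Y₃ (a + b)) ψ)/2) :=
              Finset.sum_congr rfl fun a _ => Finset.sum_comm
          _ = ∑ ψ : Module.Dual (ZMod 2) ↥W, ∑ a : V, ∑ b : V, dbar (fb W Y₁ a) ψ *
              ((dd (fb W Y₂ b) ψ + dd (fb W Y₃ (a + b)) ψ)/2) := Finset.sum_comm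
          _ = ∑ ψ : Module.Dual (ZMod 2) ↥W, (∑ a : V, dbar (fb W Y₁ a) ψ) *
              (((∑ b : V, dd (fb W Y₂ b) ψ) + (∑ b : V, dd (fb W Y₃ b) ψ))/2) := by
              refine Finset.sum_congr rfl fun ψ _ => ?_
              rw [Finset.sum_mul]
              refine Finset.sum_congr rfl fun a _ => ?_
              rw [← Finset.mul_sum]
              congr 1
              rw [← Finset.sum_div]
              congr 1
              rw [Finset.sum_add_distrib]
              congr 1
              exact Equiv.sum_comp (Equiv.addLeft a) (fun b => dd (fb W Y₃ b) ψ)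
    _ ≤ (1 / (S0.card : ℝ)) * (Real.sqrt ((Fintype.card 𝒴₂ : ℝ) * (Fintype.card 𝒴₃ : ℝ)) *
          ∑ ψ : Module.Dual (ZMod 2) ↥W, (ε * (Fintype.card V : ℝ)) *
            (((∑ b : V, dd (fb W Y₂ b) ψ) + (∑ b : V, dd (fb W Y₃ b) ψ))/2)) := by
        refine mul_le_mul_of_nonneg_left ?_ (by positivity)
        refine mul_le_mul_of_nonneg_left ?_ (Real.sqrt_nonneg _)
        refine Finset.sum_le_sum fun ψ _ => ?_
        refine mul_le_mul_of_nonneg_right (hA2bound ψ) ?_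
        have h2 : (0:ℝ) ≤ ∑ b : V, dd (fb W Y₂ b) ψ :=
          Finset.sum_nonneg fun b _ => dd_nonneg _ _
        have h3 : (0:ℝ) ≤ ∑ b : V, dd (fb W Y₃ b) ψ :=
          Finset.sum_nonneg fun b _ => dd_nonneg _ _
        positivity
    _ = ε * Real.sqrt ((Fintype.card 𝒴₂ : ℝ) * (Fintype.card 𝒴₃ : ℝ)) := by
        have hexp : ∑ ψ : Module.Dual (ZMod 2) ↥W, (ε * (Fintype.card V : ℝ)) *
            (((∑ b : V, dd (fb W Y₂ b) ψ) + (∑ b : V, dd (fb W Y₃ b) ψ))/2)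
            = (ε * (Fintype.card V : ℝ)) *
              ((∑ ψ : Module.Dual (ZMod 2) ↥W, ∑ b : V, dd (fb W Y₂ b) ψ)
                + (∑ ψ : Module.Dual (ZMod 2) ↥W, ∑ b : V, dd (fb W Y₃ b) ψ))/2 := by
          rw [← Finset.mul_sum, ← Finset.sum_div, Finset.sum_add_distrib]
          ring
        rw [hexp, hD2, hD3, hS0card]
        field_simp
        ring
end

section
/- Let P = Q_GHZ^n on F_2^{3×n} (uniform on matrices with columns summing to zero in F_2^3), let E be an event with P(E) = e^{−Δ}, and let P̃ = P | E. For any δ > 0 and m ∈ ℤ⁺, there exists an affine partition Π of F_2^{3×n} of codimension at most m·Δ/δ such that E_{π ← P̃_{Π(X)}}[ d_m( P̃_{X | X∈π} ‖ P_{X | X∈π} ) ] ≤ δ. -/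
namespace Stmt15

open Finset Module
open scoped Classical

variable {n m : ℕ}

abbrev G (n : ℕ) := Fin 3 → Fin n → ZMod 2
abbrev Sub (n : ℕ) := Submodule (ZMod 2) (Fin n → ZMod 2)

def rel (V : G n → Sub n) (x y : G n) : Prop := ∀ i : Fin 3, y i - x i ∈ V x

def consistent (V : G n → Sub n) : Prop := ∀ x y, rel V x y → V y = V x

noncomputable def pa (U : Finset (G n)) (V : G n → Sub n) (x : G n) : Finset (G n) :=
  U.filter (fun y => rel V x y)

lemma pa_def (U : Finset (G n)) (V : G n → Sub n) (x : G n) :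
    pa U V x = U.filter (fun y => ∀ i : Fin 3, y i - x i ∈ V x) := by
  ext y; rw [pa, Finset.mem_filter, Finset.mem_filter]; rfl

lemma mem_pa {U : Finset (G n)} {V : G n → Sub n} {x y : G n} :
    y ∈ pa U V x ↔ y ∈ U ∧ rel V x y := by
  rw [pa, Finset.mem_filter]

variable {V V₁ V₂ : G n → Sub n}

lemma rel_refl (V : G n → Sub n) (x : G n) : rel V x x := fun i => by simp

lemma rel_symm (hc : consistent V) {x y : G n} (h : rel V x y) : rel V y x := by
  intro i
  rw [hc x y h]
  have : x i - y i = -(y i - x i) := by ring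
  rw [this]
  exact neg_mem (h i)

lemma rel_trans (hc : consistent V) {x y z : G n} (h1 : rel V x y) (h2 : rel V y z) :
    rel V x z := by
  intro i
  have : z i - x i = (z i - y i) + (y i - x i) := by ring
  rw [this]
  exact add_mem (by rw [← hc x y h1]; exact h2 i) (h1 i)

lemma rel_class (hc : consistent V) {x y : G n} (h : rel V x y) (w : G n) :
    rel V y w ↔ rel V x w :=
  ⟨fun h2 => rel_trans hc h h2, fun h2 => rel_trans hc (rel_symm hc h) h2⟩

lemma pa_congr (hc : consistent V) {x y : G n} (h : rel V x y) (U : Finset (G n)) :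
    pa U V y = pa U V x :=
  Finset.filter_congr fun w _ => rel_class hc h w

lemma mem_pa_self {U : Finset (G n)} {x : G n} (hx : x ∈ U) (V : G n → Sub n) :
    x ∈ pa U V x := mem_pa.2 ⟨hx, rel_refl V x⟩

lemma pa_card_pos {U : Finset (G n)} {x : G n} (hx : x ∈ U) (V : G n → Sub n) :
    0 < ((pa U V x).card : ℝ) := by
  have : 0 < (pa U V x).card := Finset.card_pos.2 ⟨x, mem_pa_self hx V⟩
  exact_mod_cast this

lemma pa_subset {U₁ U₂ : Finset (G n)} (h : U₁ ⊆ U₂) (V : G n → Sub n) (x : G n) :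
    pa U₁ V x ⊆ pa U₂ V x := Finset.filter_subset_filter _ h

/-- The swap trick: summing `g` over each class weighted by inverse class size
recovers the plain sum. -/
lemma sum_classes (hc : consistent V) (U : Finset (G n)) (g : G n → ℝ) :
    ∑ x ∈ U, (1 / ((pa U V x).card : ℝ)) * ∑ y ∈ pa U V x, g y = ∑ x ∈ U, g x := by
  have h1 : ∀ x : G n, (1 / ((pa U V x).card : ℝ)) * ∑ y ∈ pa U V x, g y
      = ∑ y ∈ U, if rel V x y then (1 / ((pa U V x).card : ℝ)) * g y else 0 := by
    intro x
    rw [Finset.mul_sum, pa, Finset.sum_filter]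
  rw [Finset.sum_congr rfl fun x _ => h1 x, Finset.sum_comm]
  apply Finset.sum_congr rfl
  intro y hy
  have h2 : ∀ x ∈ U, (if rel V x y then (1 / ((pa U V x).card : ℝ)) * g y else 0)
      = if rel V y x then (1 / ((pa U V y).card : ℝ)) * g y else 0 := by
    intro x _
    by_cases h : rel V x y
    · rw [if_pos h, if_pos (rel_symm hc h), pa_congr hc h]
    · rw [if_neg h, if_neg (fun h' => h (rel_symm hc h'))]
  rw [Finset.sum_congr rfl h2, ← Finset.sum_filter]
  rw [show U.filter (fun x => rel V y x) = pa U V y from rfl, Finset.sum_const, nsmul_eq_mul]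
  have hA : ((pa U V y).card : ℝ) ≠ 0 := (pa_card_pos hy V).ne'
  field_simp

lemma sum_log_ratio_nonneg {α : Type*} (U : Finset α) (p q : α → ℝ)
    (hp : ∀ y ∈ U, 0 < p y) (hq : ∀ y ∈ U, 0 < q y)
    (hsum : ∑ y ∈ U, q y / p y ≤ (U.card : ℝ)) :
    0 ≤ ∑ y ∈ U, Real.log (p y / q y) := by
  have h1 : ∑ y ∈ U, Real.log (q y / p y) ≤ ∑ y ∈ U, (q y / p y - 1) :=
    Finset.sum_le_sum fun y hy =>
      Real.log_le_sub_one_of_pos (div_pos (hq y hy) (hp y hy))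
  rw [Finset.sum_sub_distrib, Finset.sum_const, nsmul_eq_mul, mul_one] at h1
  have h2 : ∑ y ∈ U, Real.log (p y / q y) = -∑ y ∈ U, Real.log (q y / p y) := by
    rw [← Finset.sum_neg_distrib]
    apply Finset.sum_congr rfl
    intro y hy
    rw [← Real.log_inv, inv_div]
  rw [h2]
  linarith


noncomputable def Dd (T S : Finset (G n)) (V : G n → Sub n) : ℝ :=
  ∑ x ∈ T, (1 / (T.card : ℝ)) *
    Real.log ((((pa T V x).card : ℝ) / (T.card : ℝ)) /
      (((pa S V x).card : ℝ) / (S.card : ℝ)))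

lemma log_ratio_sub {a b c d e f : ℝ} (ha : 0 < a) (hb : 0 < b) (hc : 0 < c) (hd : 0 < d)
    (he : 0 < e) (hf : 0 < f) :
    Real.log ((a / e) / (b / f)) - Real.log ((c / e) / (d / f)) =
      Real.log ((a / c) / (b / d)) := by
  rw [Real.log_div (div_pos ha he).ne' (div_pos hb hf).ne',
    Real.log_div (div_pos hc he).ne' (div_pos hd hf).ne',
    Real.log_div (div_pos ha hc).ne' (div_pos hb hd).ne',
    Real.log_div ha.ne' he.ne', Real.log_div hb.ne' hf.ne',
    Real.log_div hc.ne' he.ne', Real.log_div hd.ne' hf.ne',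
    Real.log_div ha.ne' hc.ne', Real.log_div hb.ne' hd.ne']
  ring

lemma key_sum_le (hc1 : consistent V₁) (hc2 : consistent V₂) (h12 : ∀ x, V₂ x ≤ V₁ x)
    {T S : Finset (G n)} (hTS : T ⊆ S) (x : G n) :
    ∑ y ∈ pa T V₁ x, ((pa S V₂ y).card : ℝ) / ((pa T V₂ y).card : ℝ)
      ≤ ((pa S V₁ x).card : ℝ) := by
  have lift : ∀ a b : G n, rel V₂ a b → rel V₁ a b := fun a b h i => h12 a (h i)
  have expand : ∀ y : G n, ((pa S V₂ y).card : ℝ) / ((pa T V₂ y).card : ℝ)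
      = ∑ w ∈ S, if rel V₂ y w then 1 / ((pa T V₂ y).card : ℝ) else 0 := by
    intro y
    rw [pa, Finset.card_filter]
    push_cast
    rw [Finset.sum_div]
    apply Finset.sum_congr rfl
    intro w _
    split <;> simp
  rw [Finset.sum_congr rfl fun y _ => expand y, Finset.sum_comm]
  have bound : ∀ w ∈ S,
      (∑ y ∈ pa T V₁ x, if rel V₂ y w then 1 / ((pa T V₂ y).card : ℝ) else 0)
        ≤ if rel V₁ x w then (1 : ℝ) else 0 := by
    intro w _
    by_cases hw : ∃ y₀ ∈ pa T V₁ x, rel V₂ y₀ w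
    · obtain ⟨y₀, hy₀U, hy₀w⟩ := hw
      have hy₀T : y₀ ∈ T := (mem_pa.1 hy₀U).1
      have h1 : rel V₁ x w := rel_trans hc1 (mem_pa.1 hy₀U).2 (lift _ _ hy₀w)
      rw [if_pos h1, ← Finset.sum_filter]
      have hconst : ∀ y ∈ (pa T V₁ x).filter (fun y => rel V₂ y w),
          1 / ((pa T V₂ y).card : ℝ) = 1 / ((pa T V₂ y₀).card : ℝ) := by
        intro y hy
        obtain ⟨hyU, hyw⟩ := Finset.mem_filter.1 hy
        have hrel : rel V₂ y₀ y := rel_trans hc2 hy₀w (rel_symm hc2 hyw)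
        rw [pa_congr hc2 hrel T]
      rw [Finset.sum_congr rfl hconst, Finset.sum_const, nsmul_eq_mul]
      have hsub : (pa T V₁ x).filter (fun y => rel V₂ y w) ⊆ pa T V₂ y₀ := by
        intro y hy
        obtain ⟨hyU, hyw⟩ := Finset.mem_filter.1 hy
        exact mem_pa.2 ⟨(mem_pa.1 hyU).1, rel_trans hc2 hy₀w (rel_symm hc2 hyw)⟩
      have hcard : (((pa T V₁ x).filter (fun y => rel V₂ y w)).card : ℝ)
          ≤ ((pa T V₂ y₀).card : ℝ) := by
        exact_mod_cast Finset.card_le_card hsub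
      have hpos := pa_card_pos hy₀T V₂
      calc (((pa T V₁ x).filter (fun y => rel V₂ y w)).card : ℝ)
            * (1 / ((pa T V₂ y₀).card : ℝ))
          ≤ ((pa T V₂ y₀).card : ℝ) * (1 / ((pa T V₂ y₀).card : ℝ)) :=
            mul_le_mul_of_nonneg_right hcard (by positivity)
        _ = 1 := by field_simp
    · push_neg at hw
      have hz : ∀ y ∈ pa T V₁ x,
          (if rel V₂ y w then 1 / ((pa T V₂ y).card : ℝ) else 0) = 0 := by
        intro y hy; rw [if_neg (hw y hy)]
      rw [Finset.sum_congr rfl hz, Finset.sum_const, smul_zero]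
      split <;> norm_num
  refine le_trans (Finset.sum_le_sum bound) (le_of_eq ?_)
  rw [← Finset.sum_filter, Finset.sum_const, nsmul_eq_mul, mul_one]
  rfl

lemma D_mono (hc1 : consistent V₁) (hc2 : consistent V₂) (h12 : ∀ x, V₂ x ≤ V₁ x)
    {T S : Finset (G n)} (hTS : T ⊆ S) (hT : T.Nonempty) :
    Dd T S V₁ ≤ Dd T S V₂ := by
  have hTpos : (0:ℝ) < T.card := by exact_mod_cast Finset.card_pos.2 hT
  have hSpos : (0:ℝ) < S.card := by exact_mod_cast Finset.card_pos.2 (hT.mono hTS)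
  set c : G n → ℝ := fun y =>
    Real.log ((((pa T V₂ y).card : ℝ) / ((pa T V₁ y).card : ℝ)) /
      (((pa S V₂ y).card : ℝ) / ((pa S V₁ y).card : ℝ))) with hcdef
  have hdiff : Dd T S V₂ - Dd T S V₁ = (1 / (T.card : ℝ)) * ∑ x ∈ T, c x := by
    rw [Dd, Dd, ← Finset.sum_sub_distrib, Finset.mul_sum]
    apply Finset.sum_congr rfl
    intro x hx
    have hxS : x ∈ S := hTS hx
    rw [← mul_sub]
    congr 1
    exact log_ratio_sub (pa_card_pos hx V₂) (pa_card_pos hxS V₂) (pa_card_pos hx V₁)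
      (pa_card_pos hxS V₁) hTpos hSpos
  have hnn : 0 ≤ ∑ x ∈ T, c x := by
    rw [← sum_classes hc1 T c]
    apply Finset.sum_nonneg
    intro x hx
    have hxS : x ∈ S := hTS hx
    apply mul_nonneg (by positivity)
    have hrw : ∀ y ∈ pa T V₁ x, c y =
        Real.log (((((pa T V₂ y).card : ℝ) / ((pa T V₁ x).card : ℝ))) /
          ((((pa S V₂ y).card : ℝ) / ((pa S V₁ x).card : ℝ)))) := by
      intro y hy
      have hrel := (mem_pa.1 hy).2
      rw [hcdef]
      simp only
      rw [pa_congr hc1 hrel T, pa_congr hc1 hrel S]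
    rw [Finset.sum_congr rfl hrw]
    apply sum_log_ratio_nonneg (pa T V₁ x)
      (fun y => ((pa T V₂ y).card : ℝ) / ((pa T V₁ x).card : ℝ))
      (fun y => ((pa S V₂ y).card : ℝ) / ((pa S V₁ x).card : ℝ))
    · intro y hy
      exact div_pos (pa_card_pos (mem_pa.1 hy).1 V₂) (pa_card_pos hx V₁)
    · intro y hy
      exact div_pos (pa_card_pos (hTS (mem_pa.1 hy).1) V₂) (pa_card_pos hxS V₁)
    · have hq : ∀ y ∈ pa T V₁ x,
          (((pa S V₂ y).card : ℝ) / ((pa S V₁ x).card : ℝ)) /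
            (((pa T V₂ y).card : ℝ) / ((pa T V₁ x).card : ℝ))
          = (((pa T V₁ x).card : ℝ) / ((pa S V₁ x).card : ℝ)) *
              (((pa S V₂ y).card : ℝ) / ((pa T V₂ y).card : ℝ)) := by
        intro y hy
        have h1 := pa_card_pos (mem_pa.1 hy).1 V₂
        have h2 := pa_card_pos hx V₁
        have h3 := pa_card_pos hxS V₁
        have h4 := pa_card_pos (hTS (mem_pa.1 hy).1) V₂
        field_simp
      rw [Finset.sum_congr rfl hq, ← Finset.mul_sum]
      have hkey := key_sum_le hc1 hc2 h12 hTS (T := T) (S := S) x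
      have h2 := pa_card_pos hx V₁
      have h3 := pa_card_pos hxS V₁
      calc (((pa T V₁ x).card : ℝ) / ((pa S V₁ x).card : ℝ)) *
            ∑ y ∈ pa T V₁ x, ((pa S V₂ y).card : ℝ) / ((pa T V₂ y).card : ℝ)
          ≤ (((pa T V₁ x).card : ℝ) / ((pa S V₁ x).card : ℝ)) * ((pa S V₁ x).card : ℝ) :=
            mul_le_mul_of_nonneg_left hkey (by positivity)
        _ = ((pa T V₁ x).card : ℝ) := by field_simp
  linarith [mul_nonneg (by positivity : (0:ℝ) ≤ 1 / (T.card : ℝ)) hnn]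



noncomputable def KLsum (m : ℕ) (T S : Finset (G n)) (V : G n → Sub n)
    (σ : G n → ((Fin n → ZMod 2) →ₗ[ZMod 2] (Fin m → ZMod 2))) : ℝ :=
  ∑ x ∈ T, (1 / (T.card : ℝ)) *
    (∑ z : Fin 3 → Fin m → ZMod 2,
      ((T.filter (fun y => (∀ i, y i - x i ∈ V x) ∧ ∀ i, σ x (y i) = z i)).card : ℝ) /
          ((T.filter (fun y => ∀ i, y i - x i ∈ V x)).card : ℝ) *
        Real.log
          (((T.filter (fun y => (∀ i, y i - x i ∈ V x) ∧ ∀ i, σ x (y i) = z i)).card : ℝ) /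
              ((T.filter (fun y => ∀ i, y i - x i ∈ V x)).card : ℝ) /
            (((S.filter (fun y => (∀ i, y i - x i ∈ V x) ∧ ∀ i, σ x (y i) = z i)).card : ℝ) /
              ((S.filter (fun y => ∀ i, y i - x i ∈ V x)).card : ℝ))))

lemma pa_eq_filter (U : Finset (G n)) (V : G n → Sub n) (x : G n) :
    U.filter (fun y => ∀ i, y i - x i ∈ V x) = pa U V x := (pa_def U V x).symm

lemma pa_inf_ker (hc : consistent V)
    {σ : G n → ((Fin n → ZMod 2) →ₗ[ZMod 2] (Fin m → ZMod 2))}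
    (hσ : ∀ x y, rel V x y → σ y = σ x)
    {x y : G n} (hxy : rel V x y) (U : Finset (G n)) :
    pa U (fun a => V a ⊓ LinearMap.ker (σ a)) y
      = U.filter (fun w => (∀ i, w i - x i ∈ V x) ∧ ∀ i, σ x (w i) = σ x (y i)) := by
  have hVy : V y = V x := hc x y hxy
  have hσy : σ y = σ x := hσ x y hxy
  rw [pa]
  apply Finset.filter_congr
  intro w _
  have e1 : (∀ i : Fin 3, w i - y i ∈ V y) ↔ (∀ i : Fin 3, w i - x i ∈ V x) :=
    rel_class hc hxy w
  have e2 : (∀ i : Fin 3, σ y (w i - y i) = 0) ↔ (∀ i : Fin 3, σ x (w i) = σ x (y i)) := by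
    rw [hσy]
    exact forall_congr' fun i => by rw [map_sub, sub_eq_zero]
  simp only [rel, Submodule.mem_inf, LinearMap.mem_ker, forall_and]
  rw [e1, e2]

lemma chain (hc : consistent V)
    (σ : G n → ((Fin n → ZMod 2) →ₗ[ZMod 2] (Fin m → ZMod 2)))
    (hσ : ∀ x y, rel V x y → σ y = σ x)
    {T S : Finset (G n)} (hTS : T ⊆ S) (hT : T.Nonempty) :
    Dd T S (fun a => V a ⊓ LinearMap.ker (σ a)) = Dd T S V + KLsum m T S V σ := by
  have hTpos : (0:ℝ) < T.card := by exact_mod_cast Finset.card_pos.2 hT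
  have hSpos : (0:ℝ) < S.card := by exact_mod_cast Finset.card_pos.2 (hT.mono hTS)
  set V'' : G n → Sub n := fun a => V a ⊓ LinearMap.ker (σ a) with hV''
  set g : G n → ℝ := fun y =>
    Real.log ((((pa T V'' y).card : ℝ) / ((pa T V y).card : ℝ)) /
      (((pa S V'' y).card : ℝ) / ((pa S V y).card : ℝ))) with hgdef
  have h1 : Dd T S V'' = Dd T S V + ∑ x ∈ T, (1 / (T.card : ℝ)) * g x := by
    rw [Dd, Dd, ← Finset.sum_add_distrib]
    apply Finset.sum_congr rfl
    intro x hx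
    rw [← mul_add]
    congr 1
    have hls := log_ratio_sub (pa_card_pos hx V'') (pa_card_pos (hTS hx) V'')
      (pa_card_pos hx V) (pa_card_pos (hTS hx) V) hTpos hSpos
    rw [hgdef]
    simp only
    linarith [hls]
  have h2 : KLsum m T S V σ = ∑ x ∈ T, (1 / (T.card : ℝ)) * g x := by
    rw [KLsum, ← Finset.mul_sum, ← Finset.mul_sum]
    congr 1
    rw [← sum_classes hc T g]
    apply Finset.sum_congr rfl
    intro x hx
    rw [pa_eq_filter T V x, pa_eq_filter S V x]
    rw [← Finset.sum_fiberwise (pa T V x) (fun y => (fun i => σ x (y i))) g, Finset.mul_sum]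
    apply Finset.sum_congr rfl
    intro z _
    have hFz : (pa T V x).filter (fun y => (fun i : Fin 3 => σ x (y i)) = z)
        = T.filter (fun y => (∀ i, y i - x i ∈ V x) ∧ ∀ i, σ x (y i) = z i) := by
      rw [pa, Finset.filter_filter]
      apply Finset.filter_congr
      intro y _
      simp only [rel, funext_iff]
    have hgy : ∀ y ∈ T.filter (fun y => (∀ i, y i - x i ∈ V x) ∧ ∀ i, σ x (y i) = z i),
        g y = Real.log
          ((((T.filter (fun y => (∀ i, y i - x i ∈ V x) ∧ ∀ i, σ x (y i) = z i)).card : ℝ) /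
              ((pa T V x).card : ℝ)) /
            (((S.filter (fun y => (∀ i, y i - x i ∈ V x) ∧ ∀ i, σ x (y i) = z i)).card : ℝ) /
              ((pa S V x).card : ℝ))) := by
      intro y hy
      have h := Finset.mem_filter.1 hy
      have hrel : rel V x y := h.2.1
      have hyz : ∀ i : Fin 3, σ x (y i) = z i := h.2.2
      have eT : pa T V'' y
          = T.filter (fun w => (∀ i, w i - x i ∈ V x) ∧ ∀ i, σ x (w i) = z i) := by
        rw [hV'', pa_inf_ker hc hσ hrel T]
        apply Finset.filter_congr
        intro w _
        exact and_congr_right fun _ => forall_congr' fun i => by rw [hyz i]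
      have eS : pa S V'' y
          = S.filter (fun w => (∀ i, w i - x i ∈ V x) ∧ ∀ i, σ x (w i) = z i) := by
        rw [hV'', pa_inf_ker hc hσ hrel S]
        apply Finset.filter_congr
        intro w _
        exact and_congr_right fun _ => forall_congr' fun i => by rw [hyz i]
      rw [hgdef]
      simp only
      rw [eT, eS, pa_congr hc hrel T, pa_congr hc hrel S]
    rw [hFz, Finset.sum_congr rfl hgy, Finset.sum_const, nsmul_eq_mul]
    ring
  rw [h1, h2]



lemma D_le {T S : Finset (G n)} (hTS : T ⊆ S) (hT : T.Nonempty) (V : G n → Sub n) :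
    Dd T S V ≤ Real.log ((S.card : ℝ) / (T.card : ℝ)) := by
  have hTpos : (0:ℝ) < T.card := by exact_mod_cast Finset.card_pos.2 hT
  have hSpos : (0:ℝ) < S.card := by exact_mod_cast Finset.card_pos.2 (hT.mono hTS)
  have hbound : ∀ x ∈ T, (1 / (T.card : ℝ)) *
      Real.log ((((pa T V x).card : ℝ) / (T.card : ℝ)) /
        (((pa S V x).card : ℝ) / (S.card : ℝ)))
      ≤ (1 / (T.card : ℝ)) * Real.log ((S.card : ℝ) / (T.card : ℝ)) := by
    intro x hx
    have hA := pa_card_pos hx V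
    have hB := pa_card_pos (hTS hx) V
    apply mul_le_mul_of_nonneg_left _ (by positivity)
    apply Real.log_le_log (by positivity)
    have hAB : ((pa T V x).card : ℝ) ≤ ((pa S V x).card : ℝ) := by
      exact_mod_cast Finset.card_le_card (pa_subset hTS V x)
    have heq : (((pa T V x).card : ℝ) / (T.card : ℝ)) / (((pa S V x).card : ℝ) / (S.card : ℝ))
        = (((pa T V x).card : ℝ) / ((pa S V x).card : ℝ)) * ((S.card : ℝ) / (T.card : ℝ)) := by
      field_simp
    rw [heq]
    calc (((pa T V x).card : ℝ) / ((pa S V x).card : ℝ)) * ((S.card : ℝ) / (T.card : ℝ))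
        ≤ 1 * ((S.card : ℝ) / (T.card : ℝ)) :=
          mul_le_mul_of_nonneg_right ((div_le_one hB).2 hAB) (by positivity)
      _ = (S.card : ℝ) / (T.card : ℝ) := one_mul _
  calc Dd T S V ≤ ∑ x ∈ T, (1 / (T.card : ℝ)) * Real.log ((S.card : ℝ) / (T.card : ℝ)) :=
        Finset.sum_le_sum hbound
    _ = Real.log ((S.card : ℝ) / (T.card : ℝ)) := by
        rw [Finset.sum_const, nsmul_eq_mul]
        field_simp

lemma D_top {T S : Finset (G n)} (hTS : T ⊆ S) (hT : T.Nonempty) :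
    Dd T S (fun _ => (⊤ : Sub n)) = 0 := by
  have hTpos : (0:ℝ) < T.card := by exact_mod_cast Finset.card_pos.2 hT
  have hSpos : (0:ℝ) < S.card := by exact_mod_cast Finset.card_pos.2 (hT.mono hTS)
  rw [Dd]
  apply Finset.sum_eq_zero
  intro x _
  have h1 : pa T (fun _ => (⊤ : Sub n)) x = T :=
    Finset.filter_true_of_mem fun y _ => fun i => Submodule.mem_top
  have h2 : pa S (fun _ => (⊤ : Sub n)) x = S :=
    Finset.filter_true_of_mem fun y _ => fun i => Submodule.mem_top
  rw [h1, h2, div_self hTpos.ne', div_self hSpos.ne']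
  norm_num

lemma KL_bot {T S : Finset (G n)} (hTS : T ⊆ S) (V : G n → Sub n)
    (hbot : ∀ x, V x = ⊥)
    (σ : G n → ((Fin n → ZMod 2) →ₗ[ZMod 2] (Fin m → ZMod 2))) :
    KLsum m T S V σ = 0 := by
  rw [KLsum]
  apply Finset.sum_eq_zero
  intro x hx
  have hmem : ∀ y : G n, (∀ i : Fin 3, y i - x i ∈ V x) ↔ y = x := by
    intro y
    rw [hbot x]
    simp only [Submodule.mem_bot, sub_eq_zero]
    rw [funext_iff]
  have hTx : T.filter (fun y => ∀ i, y i - x i ∈ V x) = {x} := by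
    ext y
    simp only [Finset.mem_filter, hmem, Finset.mem_singleton]
    exact ⟨fun h => h.2, fun h => ⟨h ▸ hx, h⟩⟩
  have hSx : S.filter (fun y => ∀ i, y i - x i ∈ V x) = {x} := by
    ext y
    simp only [Finset.mem_filter, hmem, Finset.mem_singleton]
    exact ⟨fun h => h.2, fun h => ⟨h ▸ hTS hx, h⟩⟩
  have hz0 : ∀ z : Fin 3 → Fin m → ZMod 2,
      ((T.filter (fun y => (∀ i, y i - x i ∈ V x) ∧ ∀ i, σ x (y i) = z i)).card : ℝ) /
          ((T.filter (fun y => ∀ i, y i - x i ∈ V x)).card : ℝ) *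
        Real.log
          (((T.filter (fun y => (∀ i, y i - x i ∈ V x) ∧ ∀ i, σ x (y i) = z i)).card : ℝ) /
              ((T.filter (fun y => ∀ i, y i - x i ∈ V x)).card : ℝ) /
            (((S.filter (fun y => (∀ i, y i - x i ∈ V x) ∧ ∀ i, σ x (y i) = z i)).card : ℝ) /
              ((S.filter (fun y => ∀ i, y i - x i ∈ V x)).card : ℝ))) = 0 := by
    intro z
    by_cases hzx : ∀ i : Fin 3, σ x (x i) = z i
    · have hfT : T.filter (fun y => (∀ i, y i - x i ∈ V x) ∧ ∀ i, σ x (y i) = z i) = {x} := by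
        ext y
        simp only [Finset.mem_filter, hmem, Finset.mem_singleton]
        constructor
        · exact fun h => h.2.1
        · rintro rfl
          exact ⟨hx, rfl, hzx⟩
      have hfS : S.filter (fun y => (∀ i, y i - x i ∈ V x) ∧ ∀ i, σ x (y i) = z i) = {x} := by
        ext y
        simp only [Finset.mem_filter, hmem, Finset.mem_singleton]
        constructor
        · exact fun h => h.2.1
        · rintro rfl
          exact ⟨hTS hx, rfl, hzx⟩
      rw [hfT, hfS, hTx, hSx]
      norm_num
    · have hfT : T.filter (fun y => (∀ i, y i - x i ∈ V x) ∧ ∀ i, σ x (y i) = z i) = ∅ := by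
        apply Finset.filter_false_of_mem
        intro y _
        rintro ⟨h1, h2⟩
        rw [hmem] at h1
        subst h1
        exact hzx h2
      rw [hfT]
      norm_num
  rw [Finset.sum_congr rfl fun z _ => hz0 z]
  simp

lemma rank_inf_ker (W : Sub n) (φ : (Fin n → ZMod 2) →ₗ[ZMod 2] (Fin m → ZMod 2)) :
    finrank (ZMod 2) W ≤ finrank (ZMod 2) ↥(W ⊓ LinearMap.ker φ) + m := by
  have h := LinearMap.finrank_range_add_finrank_ker (φ.domRestrict W)
  have hker : LinearMap.ker (φ.domRestrict W)
      = Submodule.comap W.subtype (W ⊓ LinearMap.ker φ) := by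
    rw [LinearMap.ker_domRestrict]
    ext v
    simp only [Submodule.mem_comap, Submodule.mem_inf]
    exact ⟨fun hv => ⟨v.2, hv⟩, fun hv => hv.2⟩
  have he : finrank (ZMod 2) (Submodule.comap W.subtype (W ⊓ LinearMap.ker φ))
      = finrank (ZMod 2) ↥(W ⊓ LinearMap.ker φ) :=
    (Submodule.comapSubtypeEquivOfLe inf_le_left).finrank_eq
  have hr : finrank (ZMod 2) (LinearMap.range (φ.domRestrict W)) ≤ m := by
    have h2 := Submodule.finrank_le (LinearMap.range (φ.domRestrict W))
    simpa [Module.finrank_pi] using h2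
  rw [hker, he] at h
  omega

lemma exists_sub (W : Sub n) :
    ∀ k, k ≤ finrank (ZMod 2) W → ∃ U : Sub n, U ≤ W ∧ finrank (ZMod 2) U = k := by
  intro k
  induction k with
  | zero => exact fun _ => ⟨⊥, bot_le, finrank_bot _ _⟩
  | succ k ih =>
    intro hk
    obtain ⟨U, hUW, hU⟩ := ih (Nat.le_of_succ_le hk)
    have hlt : U < W := by
      apply Submodule.lt_of_le_of_finrank_lt_finrank hUW
      omega
    obtain ⟨v, hvW, hvU⟩ := SetLike.exists_of_lt hlt
    have hv0 : v ≠ 0 := fun h => hvU (h ▸ U.zero_mem)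
    have hdisj : U ⊓ (Submodule.span (ZMod 2) {v}) = ⊥ := by
      rw [eq_bot_iff]
      intro w hw
      rw [Submodule.mem_inf] at hw
      obtain ⟨hwU, hwv⟩ := hw
      obtain ⟨c, rfl⟩ := Submodule.mem_span_singleton.1 hwv
      rcases eq_or_ne c 0 with rfl | hc
      · simp
      · exact absurd (by simpa [smul_smul, inv_mul_cancel₀ hc] using U.smul_mem c⁻¹ hwU) hvU
    have hsum := Submodule.finrank_sup_add_finrank_inf_eq U ((Submodule.span (ZMod 2) {v}))
    rw [hdisj, finrank_bot, finrank_span_singleton hv0, hU] at hsum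
    exact ⟨U ⊔ (Submodule.span (ZMod 2) {v}),
      sup_le hUW ((Submodule.span_singleton_le_iff_mem _ _).2 hvW), by omega⟩

noncomputable def pick (k : ℕ) (W : Sub n) : Sub n :=
  if h : k ≤ finrank (ZMod 2) W then (exists_sub W k h).choose else ⊥

lemma pick_le (k : ℕ) (W : Sub n) : pick k W ≤ W := by
  rw [pick]
  split
  · exact (exists_sub W k (by assumption)).choose_spec.1
  · exact bot_le

lemma pick_rank {k : ℕ} {W : Sub n} (h : k ≤ finrank (ZMod 2) W) :
    finrank (ZMod 2) (pick k W) = k := by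
  rw [pick, dif_pos h]
  exact (exists_sub W k h).choose_spec.2



lemma main_rec (T S : Finset (G n)) (hTS : T ⊆ S) (hT : T.Nonempty)
    (m : ℕ) (hm : 0 < m) (δ : ℝ) (hδ : 0 < δ) :
    ∀ d (V : G n → Sub n), consistent V → (∀ x, finrank (ZMod 2) (V x) = d) →
      ((n : ℝ) - d) * δ ≤ m * Dd T S V →
      ∃ (d' : ℕ) (V' : G n → Sub n), (∀ x, finrank (ZMod 2) (V' x) = d') ∧ consistent V' ∧
        ((n : ℝ) - d') * δ ≤ m * Dd T S V' ∧
        ∀ σ : G n → ((Fin n → ZMod 2) →ₗ[ZMod 2] (Fin m → ZMod 2)),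
          (∀ x y, rel V' x y → σ y = σ x) → KLsum m T S V' σ ≤ δ := by
  intro d
  induction d using Nat.strong_induction_on with
  | _ d ih =>
    intro V hc hdim hD
    by_cases hviol : ∃ σ : G n → ((Fin n → ZMod 2) →ₗ[ZMod 2] (Fin m → ZMod 2)),
        (∀ x y, rel V x y → σ y = σ x) ∧ δ < KLsum m T S V σ
    · obtain ⟨σ, hσ, hKL⟩ := hviol
      have hd0 : d ≠ 0 := by
        rintro rfl
        have hb : ∀ x, V x = ⊥ := by
          intro x
          have := hdim x
          exact Submodule.finrank_eq_zero.1 this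
        rw [KL_bot hTS V hb σ] at hKL
        linarith
      have hrk : ∀ x, d - m ≤ finrank (ZMod 2) ↥(V x ⊓ LinearMap.ker (σ x)) := by
        intro x
        have h := rank_inf_ker (V x) (σ x)
        rw [hdim x] at h
        omega
      set V'' : G n → Sub n := fun a => V a ⊓ LinearMap.ker (σ a) with hV''
      have hc'' : consistent V'' := by
        intro x y h
        have hxy : rel V x y := fun i => ((Submodule.mem_inf).1 (h i)).1
        rw [hV'']
        simp only
        rw [hc x y hxy, hσ x y hxy]
      set d' := d - m with hd'
      set V' : G n → Sub n := fun x => pick d' (V'' x) with hV'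
      have hdim' : ∀ x, finrank (ZMod 2) (V' x) = d' := fun x => pick_rank (hrk x)
      have hle' : ∀ x, V' x ≤ V'' x := fun x => pick_le d' (V'' x)
      have hc' : consistent V' := by
        intro x y h
        have h2 : rel V'' x y := fun i => hle' x (h i)
        have h3 := hc'' x y h2
        rw [hV']
        simp only
        rw [h3]
      have hDchain : Dd T S V'' = Dd T S V + KLsum m T S V σ := chain hc σ hσ hTS hT
      have hmono : Dd T S V'' ≤ Dd T S V' := D_mono hc'' hc' hle' hTS hT
      have hmR : (0:ℝ) < m := by exact_mod_cast hm
      have hdm : (d : ℝ) ≤ (d' : ℝ) + m := by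
        have : d ≤ d' + m := by omega
        exact_mod_cast this
      have hD' : ((n : ℝ) - d') * δ ≤ m * Dd T S V' := by
        have e1 : ((n : ℝ) - d') * δ ≤ ((n : ℝ) - d) * δ + m * δ := by nlinarith
        have e2 : (m : ℝ) * δ ≤ m * KLsum m T S V σ := by nlinarith
        nlinarith
      exact ih d' (by omega) V' hc' hdim' hD'
    · push_neg at hviol
      exact ⟨d, V, hdim, hc, hD, fun σ hσ => hviol σ hσ⟩

end Stmt15

open Finset

open scoped Classical in
/-- Decomposition into pseudorandom affine components.  `P = Q_GHZ^n` is uniform on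
matrices in `F₂^{3×n}` whose columns sum to zero (support `S0`), `E` is an event of
probability `e^{−Δ}`, and `P̃ = P | E`.  For any `δ > 0`, `m ≥ 1` there is an affine
partition `Π` of `F₂^{3×n}` — encoded by a map `Vsp` assigning to each point the
subspace `V(x) ≤ F₂ⁿ` (all of dimension `d`, the part of `x` being `x + V(x)³`) —
of codimension `n − d ≤ m·Δ/δ` such that
`E_{π←P̃_{Π(X)}}[ d_m(P̃_{X|X∈π} ‖ P_{X|X∈π}) ] ≤ δ`, where `d_m` is the supremum
over linear maps `φ : F₂ⁿ → F₂^m` (chosen per part, i.e. over selections `σ`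
constant on parts) of the KL divergence between the pushforwards under
`φ³ = φ × φ × φ`. -/
theorem stmt_15 (n m : ℕ) (hm : 0 < m) (δ Δ : ℝ) (hδ : 0 < δ)
    (S0 : Finset (Fin 3 → Fin n → ZMod 2))
    (hS0 : S0 = Finset.univ.filter (fun x => ∀ j : Fin n, x 0 j + x 1 j + x 2 j = 0))
    (E : Finset (Fin 3 → Fin n → ZMod 2))
    (hΔ : ((S0 ∩ E).card : ℝ) / (S0.card : ℝ) = Real.exp (-Δ)) :
    ∃ (d : ℕ) (Vsp : (Fin 3 → Fin n → ZMod 2) → Submodule (ZMod 2) (Fin n → ZMod 2)),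
      (∀ x, Module.finrank (ZMod 2) (Vsp x) = d) ∧
      -- the sets `x + Vsp(x)³` form a partition
      (∀ x y, (∀ i : Fin 3, y i - x i ∈ Vsp x) → Vsp y = Vsp x) ∧
      -- codimension bound
      ((n : ℝ) - d ≤ m * Δ / δ) ∧
      -- pseudorandomness: for every per-part choice of a linear map `φ = σ(π)`
      (∀ σ : (Fin 3 → Fin n → ZMod 2) →
          ((Fin n → ZMod 2) →ₗ[ZMod 2] (Fin m → ZMod 2)),
        (∀ x y, (∀ i : Fin 3, y i - x i ∈ Vsp x) → σ y = σ x) →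
        ∑ x ∈ S0 ∩ E, (1 / ((S0 ∩ E).card : ℝ)) *
          (∑ z : Fin 3 → Fin m → ZMod 2,
            (((S0 ∩ E).filter (fun y => (∀ i, y i - x i ∈ Vsp x) ∧
                  ∀ i, σ x (y i) = z i)).card : ℝ) /
                (((S0 ∩ E).filter (fun y => ∀ i, y i - x i ∈ Vsp x)).card : ℝ) *
              Real.log
                ((((S0 ∩ E).filter (fun y => (∀ i, y i - x i ∈ Vsp x) ∧
                      ∀ i, σ x (y i) = z i)).card : ℝ) /
                    (((S0 ∩ E).filter (fun y => ∀ i, y i - x i ∈ Vsp x)).card : ℝ) /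
                  ((((S0.filter (fun y => (∀ i, y i - x i ∈ Vsp x) ∧
                        ∀ i, σ x (y i) = z i)).card : ℝ)) /
                    ((S0.filter (fun y => ∀ i, y i - x i ∈ Vsp x)).card : ℝ)))) ≤ δ) :=
  by 
  set T := S0 ∩ E with hTdef
  have hTS : T ⊆ S0 := Finset.inter_subset_left
  have hT : T.Nonempty := by
    rw [Finset.nonempty_iff_ne_empty]
    intro h
    rw [h] at hΔ
    simp only [Finset.card_empty, Nat.cast_zero, zero_div] at hΔ
    exact (Real.exp_pos (-Δ)).ne' hΔ.symm
  have hS : S0.Nonempty := hT.mono hTS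
  have hTpos : (0:ℝ) < T.card := by exact_mod_cast Finset.card_pos.2 hT
  have hSpos : (0:ℝ) < S0.card := by exact_mod_cast Finset.card_pos.2 hS
  have hΔeq : Real.log ((S0.card : ℝ) / (T.card : ℝ)) = Δ := by
    have h1 : (T.card : ℝ) / (S0.card : ℝ) = Real.exp (-Δ) := hΔ
    have h2 : (S0.card : ℝ) / (T.card : ℝ) = Real.exp Δ := by
      rw [Real.exp_neg] at h1
      field_simp at h1 ⊢
      rw [mul_comm]
      linarith [h1]
    rw [h2, Real.log_exp]
  have hctop : Stmt15.consistent (n := n) (fun _ => ⊤) := fun x y _ => rfl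
  have hdimtop : ∀ x : Stmt15.G n, Module.finrank (ZMod 2) ((fun _ => (⊤ : Stmt15.Sub n)) x) = n := by
    intro x
    simp only
    rw [finrank_top]
    simp [Module.finrank_pi]
  have hbase : ((n : ℝ) - (n : ℕ)) * δ ≤ m * Stmt15.Dd T S0 (fun _ => ⊤) := by
    rw [Stmt15.D_top hTS hT]
    simp
  obtain ⟨d', V', hdim', hc', hD', hKL'⟩ :=
    Stmt15.main_rec T S0 hTS hT m hm δ hδ n (fun _ => ⊤) hctop hdimtop hbase
  refine ⟨d', V', hdim', hc', ?_, ?_⟩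
  · have hDle := Stmt15.D_le hTS hT V'
    rw [hΔeq] at hDle
    have hmR : (0:ℝ) ≤ m := by positivity
    rw [le_div_iff₀ hδ]
    nlinarith
  · intro σ hσ
    exact hKL' σ hσ
end

section
/- Let P be a probability distribution on a finite set, X a random variable, Π an affine partition (or any finite partition), and define the potential Φ(Π) = E_{π ← P̃_{Π(X)}}[ d_KL(P̃_{X|X∈π} ‖ P_{X|X∈π}) ] where P̃ = P|E for an event E with P(E) = e^{−Δ}. If Π' refines Π by intersecting each part with level sets of a function φ, then Φ(Π') ≤ Φ(Π) − d_KL(P̃_{φ(X)|Π(X)} ‖ P_{φ(X)|Π(X)}). In particular, for the trivial partition Π_0 = {Ω}, Φ(Π_0) = Δ. -/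
open Finset

/-- Conditional KL divergence of the law of `f(X)` given the part `c(X)` of a
partition (parts = fibers of `c`), between distributions `Pt` and `P`:
`∑_i Pt(c=i) · d_KL(Pt_{f(X)|c=i} ‖ P_{f(X)|c=i})`.
With `f` the identity this is the potential `Φ(Π)` of the partition `c`. -/
noncomputable def condKL {Ω I J : Type*} [Fintype Ω] [Fintype I] [Fintype J]
    [DecidableEq I] [DecidableEq J] (Pt P : Ω → ℝ) (c : Ω → I) (f : Ω → J) : ℝ :=
  ∑ i : I, (∑ ω, if c ω = i then Pt ω else 0) *
    ∑ j : J,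
      ((∑ ω, if c ω = i ∧ f ω = j then Pt ω else 0) /
          (∑ ω, if c ω = i then Pt ω else 0)) *
        Real.log
          (((∑ ω, if c ω = i ∧ f ω = j then Pt ω else 0) /
              (∑ ω, if c ω = i then Pt ω else 0)) /
            ((∑ ω, if c ω = i ∧ f ω = j then P ω else 0) /
              (∑ ω, if c ω = i then P ω else 0)))

section aux

variable {Ω I J : Type*} [Fintype Ω] [Fintype I] [Fintype J]
  [DecidableEq Ω] [DecidableEq I] [DecidableEq J]

lemma aux_sum_point (f : Ω → ℝ) (p : Ω → Prop) [DecidablePred p] (j : Ω) :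
    (∑ ω, if p ω ∧ ω = j then f ω else 0) = if p j then f j else 0 := by
  rw [Finset.sum_eq_single j]
  · simp
  · intro b _ hb; simp [hb]
  · simp

lemma aux_nonneg (f : Ω → ℝ) (hf : ∀ ω, 0 ≤ f ω) (p : Ω → Prop) [DecidablePred p] :
    0 ≤ ∑ ω, if p ω then f ω else 0 :=
  Finset.sum_nonneg fun ω _ => by split <;> simp [hf ω]

lemma aux_pos (Pt P : Ω → ℝ) (hP0 : ∀ ω, 0 ≤ P ω)
    (hpos : ∀ ω, Pt ω ≠ 0 → 0 < P ω)
    (p : Ω → Prop) [DecidablePred p]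
    (h : 0 < ∑ ω, if p ω then Pt ω else 0) :
    0 < ∑ ω, if p ω then P ω else 0 := by
  obtain ⟨ω, -, hω⟩ := Finset.exists_ne_zero_of_sum_ne_zero h.ne'
  have hpω : p ω := by by_contra hp; simp [hp] at hω
  rw [if_pos hpω] at hω
  have : 0 < P ω := hpos ω hω
  calc (0:ℝ) < P ω := this
    _ = (if p ω then P ω else 0) := by rw [if_pos hpω]
    _ ≤ _ := Finset.single_le_sum (f := fun ω => if p ω then P ω else 0)
        (fun ω _ => by split <;> simp [hP0 ω]) (Finset.mem_univ ω)

lemma aux_fiber (g : Ω → ℝ) (c : Ω → I) (φ : Ω → J) (i : I) :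
    (∑ j, ∑ ω, if c ω = i ∧ φ ω = j then g ω else 0) =
      ∑ ω, if c ω = i then g ω else 0 := by
  rw [Finset.sum_comm]
  refine Finset.sum_congr rfl fun ω _ => ?_
  by_cases hc : c ω = i
  · simp [hc, Finset.sum_ite_eq]
  · simp [hc]

lemma condKL_id (Pt P : Ω → ℝ) (Δ : ℝ) (hP0 : ∀ ω, 0 ≤ P ω) (hPt0 : ∀ ω, 0 ≤ Pt ω)
    (hrel : ∀ ω, Pt ω ≠ 0 → Pt ω = Real.exp Δ * P ω) (c : Ω → I) :
    condKL Pt P c (fun ω => ω) =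
      ∑ i, (∑ ω, if c ω = i then Pt ω else 0) *
        (Δ + Real.log (∑ ω, if c ω = i then P ω else 0)
           - Real.log (∑ ω, if c ω = i then Pt ω else 0)) := by
  have hpos : ∀ ω, Pt ω ≠ 0 → 0 < P ω := by
    intro ω h
    have h1 := hrel ω h
    rcases (hP0 ω).lt_or_eq with h2 | h2
    · exact h2
    · exfalso; rw [h1, ← h2, mul_zero] at h; exact h rfl
  unfold condKL
  refine Finset.sum_congr rfl fun i _ => ?_
  have hnum : ∀ g : Ω → ℝ, ∀ j : Ω,
      (∑ ω, if c ω = i ∧ ω = j then g ω else 0) = if c j = i then g j else 0 :=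
    fun g j => aux_sum_point g _ j
  simp only [hnum]
  set Qi := ∑ ω, if c ω = i then Pt ω else 0 with hQ
  set Ri := ∑ ω, if c ω = i then P ω else 0 with hR
  rcases (aux_nonneg Pt hPt0 (fun ω => c ω = i)).lt_or_eq with hQpos | h0
  · have hRpos : 0 < Ri := aux_pos Pt P hP0 hpos _ hQpos
    have key : ∀ j : Ω, (if c j = i then Pt j else 0) / Qi *
        Real.log (((if c j = i then Pt j else 0) / Qi) / ((if c j = i then P j else 0) / Ri))
        = (if c j = i then Pt j else 0) / Qi * (Δ + Real.log Ri - Real.log Qi) := by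
      intro j
      by_cases hc : c j = i
      · simp only [if_pos hc]
        by_cases hj : Pt j = 0
        · simp [hj]
        · have hPj : 0 < P j := hpos j hj
          have hPtj : Pt j = Real.exp Δ * P j := hrel j hj
          congr 1
          have heq : Pt j / Qi / (P j / Ri) = Real.exp Δ * Ri / Qi := by
            rw [hPtj]; field_simp
          rw [heq, Real.log_div (by positivity) hQpos.ne',
            Real.log_mul (Real.exp_ne_zero Δ) hRpos.ne', Real.log_exp]
      · simp [hc]
    rw [Finset.sum_congr rfl fun j _ => key j, ← Finset.sum_mul, ← Finset.sum_div, ← hQ,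
      div_self hQpos.ne', one_mul]
  · rw [hQ, ← h0, zero_mul, zero_mul]

lemma condKL_phi (Pt P : Ω → ℝ) (hP0 : ∀ ω, 0 ≤ P ω) (hPt0 : ∀ ω, 0 ≤ Pt ω)
    (hpos : ∀ ω, Pt ω ≠ 0 → 0 < P ω) (c : Ω → I) (φ : Ω → J) :
    condKL Pt P c φ = ∑ i, ∑ j,
      (∑ ω, if c ω = i ∧ φ ω = j then Pt ω else 0) *
        (Real.log (∑ ω, if c ω = i ∧ φ ω = j then Pt ω else 0)
          - Real.log (∑ ω, if c ω = i then Pt ω else 0)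
          - Real.log (∑ ω, if c ω = i ∧ φ ω = j then P ω else 0)
          + Real.log (∑ ω, if c ω = i then P ω else 0)) := by
  unfold condKL
  refine Finset.sum_congr rfl fun i _ => ?_
  set Qi := ∑ ω, if c ω = i then Pt ω else 0 with hQ
  set Ri := ∑ ω, if c ω = i then P ω else 0 with hR
  rcases (aux_nonneg Pt hPt0 (fun ω => c ω = i)).lt_or_eq with hQpos | h0
  · have hRpos : 0 < Ri := aux_pos Pt P hP0 hpos _ hQpos
    rw [Finset.mul_sum]
    refine Finset.sum_congr rfl fun j _ => ?_
    set Qij := ∑ ω, if c ω = i ∧ φ ω = j then Pt ω else 0 with hQij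
    set Rij := ∑ ω, if c ω = i ∧ φ ω = j then P ω else 0 with hRij
    rcases (aux_nonneg Pt hPt0 (fun ω => c ω = i ∧ φ ω = j)).lt_or_eq with hQijpos | h1
    · have hRijpos : 0 < Rij := aux_pos Pt P hP0 hpos _ hQijpos
      rw [← mul_assoc, mul_comm Qi (Qij / Qi), div_mul_cancel₀ _ hQpos.ne']
      congr 1
      rw [Real.log_div (by positivity) (by positivity), Real.log_div hQijpos.ne' hQpos.ne',
        Real.log_div hRijpos.ne' hRpos.ne']
      ring
    · rw [hQij, ← h1]; simp
  · have hz : ∀ j : J, (∑ ω, if c ω = i ∧ φ ω = j then Pt ω else 0) = 0 := by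
      intro j
      have hle : (∑ ω, if c ω = i ∧ φ ω = j then Pt ω else 0) ≤ Qi := by
        rw [hQ]
        refine Finset.sum_le_sum fun ω _ => ?_
        by_cases hc : c ω = i
        · by_cases hf : φ ω = j <;> simp [hc, hf, hPt0 ω]
        · simp [hc]
      exact le_antisymm (h0 ▸ hle) (aux_nonneg Pt hPt0 _)
    rw [hQ, ← h0, zero_mul]
    exact (Finset.sum_eq_zero fun j _ => by rw [hz j, zero_mul]).symm

end aux

/-- Chain rule for the partition potential: with `P̃ = P|E`, `P(E) = e^{−Δ}`,
`Φ(Π) = E_{π←P̃_{Π(X)}}[d_KL(P̃_{X|X∈π} ‖ P_{X|X∈π})]`, refining the partition `Π`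
(fibers of `c`) by the level sets of `φ` gives
`Φ(Π') ≤ Φ(Π) − d_KL(P̃_{φ(X)|Π(X)} ‖ P_{φ(X)|Π(X)})`; moreover for the trivial
partition `Π₀` one has `Φ(Π₀) = Δ`. -/
theorem stmt_16 {Ω I J : Type*} [Fintype Ω] [Fintype I] [Fintype J]
    [DecidableEq Ω] [DecidableEq I] [DecidableEq J]
    (P : Ω → ℝ) (E : Finset Ω) (Δ : ℝ)
    (hP0 : ∀ ω, 0 ≤ P ω) (hP1 : ∑ ω, P ω = 1)
    (hΔ : ∑ ω ∈ E, P ω = Real.exp (-Δ))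
    (Pt : Ω → ℝ)
    (hPt : ∀ ω, Pt ω = if ω ∈ E then P ω / ∑ ω' ∈ E, P ω' else 0)
    (c : Ω → I) (φ : Ω → J) :
    condKL Pt P (fun ω => (c ω, φ ω)) (fun ω => ω) ≤
        condKL Pt P c (fun ω => ω) - condKL Pt P c φ ∧
      condKL Pt P (fun _ => ()) (fun ω => ω) = Δ := by
  have hs : (0:ℝ) < ∑ ω ∈ E, P ω := by rw [hΔ]; exact Real.exp_pos _
  have hPt0 : ∀ ω, 0 ≤ Pt ω := by
    intro ω; rw [hPt ω]
    split
    · exact div_nonneg (hP0 ω) hs.le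
    · exact le_refl 0
  have hrel : ∀ ω, Pt ω ≠ 0 → Pt ω = Real.exp Δ * P ω := by
    intro ω h
    rw [hPt ω] at h ⊢
    have hE : ω ∈ E := by by_contra hE; simp [hE] at h
    rw [if_pos hE, hΔ, Real.exp_neg, div_eq_mul_inv, inv_inv, mul_comm]
  have hpos : ∀ ω, Pt ω ≠ 0 → 0 < P ω := by
    intro ω h
    have h1 := hrel ω h
    rcases (hP0 ω).lt_or_eq with h2 | h2
    · exact h2
    · exfalso; rw [h1, ← h2, mul_zero] at h; exact h rfl
  have hPtsum : ∑ ω, Pt ω = 1 := by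
    simp only [hPt]
    rw [Finset.sum_ite_mem, Finset.univ_inter, ← Finset.sum_div, div_self hs.ne']
  constructor
  · have e1 : condKL Pt P (fun ω => (c ω, φ ω)) (fun ω => ω) =
        ∑ i, ∑ j, (∑ ω, if c ω = i ∧ φ ω = j then Pt ω else 0) *
          (Δ + Real.log (∑ ω, if c ω = i ∧ φ ω = j then P ω else 0)
             - Real.log (∑ ω, if c ω = i ∧ φ ω = j then Pt ω else 0)) := by
      rw [condKL_id Pt P Δ hP0 hPt0 hrel (fun ω => (c ω, φ ω)), Fintype.sum_prod_type]
      simp [Prod.mk.injEq]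
    rw [e1, condKL_id Pt P Δ hP0 hPt0 hrel c, condKL_phi Pt P hP0 hPt0 hpos c φ,
      ← Finset.sum_sub_distrib]
    refine le_of_eq (Finset.sum_congr rfl fun i _ => ?_)
    rw [show (∑ ω, if c ω = i then Pt ω else 0) =
        ∑ j, ∑ ω, if c ω = i ∧ φ ω = j then Pt ω else 0 from (aux_fiber Pt c φ i).symm,
      Finset.sum_mul, ← Finset.sum_sub_distrib]
    exact Finset.sum_congr rfl fun j _ => by ring
  · rw [condKL_id Pt P Δ hP0 hPt0 hrel (fun _ => ())]
    simp [hPtsum, hP1]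
end

section
/- Let G = (𝒳, 𝒴, Q, W) be a k-player game with finite question alphabet 𝒳 and answer alphabet 𝒴, let P = Q^n. Suppose ρ : ℤ⁺ → ℝ satisfies ρ(n) ≥ e^{−O(n)} and ε > 0 is a constant such that for every product event E = E_1 × ⋯ × E_k ⊆ (𝒳^n)^k with P(E) ≥ ρ(n), there exists a coordinate j with v^j(G^n | (P|E)) ≤ 1 − ε. Then the value of the n-fold parallel repetition satisfies v(G^n) ≤ ρ(n)^{Ω(1)}. -/
open Finset

namespace Stmt17

variable {𝒳 𝒴 : Type} [Fintype 𝒳] [Fintype 𝒴] {k n : ℕ}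

open Classical in
noncomputable def mw (Q : (Fin k → 𝒳) → ℝ) (W : (Fin n → Fin k → 𝒳) → Prop) : ℝ :=
  ∑ x : Fin n → Fin k → 𝒳, if W x then ∏ j, Q (x j) else 0

lemma mw_eq_sum (Q : (Fin k → 𝒳) → ℝ) (W : (Fin n → Fin k → 𝒳) → Prop) [DecidablePred W] :
    mw Q W = ∑ x : Fin n → Fin k → 𝒳, if W x then ∏ j, Q (x j) else 0 := by
  unfold mw
  exact Finset.sum_congr rfl fun x _ => by by_cases h : W x <;> simp [h]

lemma mw_congr {Q : (Fin k → 𝒳) → ℝ} {W W' : (Fin n → Fin k → 𝒳) → Prop}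
    (h : ∀ x, W x ↔ W' x) : mw Q W = mw Q W' := by
  unfold mw
  exact Finset.sum_congr rfl fun x _ => by
    by_cases hx : W x
    · rw [if_pos hx, if_pos ((h x).mp hx)]
    · rw [if_neg hx, if_neg (fun hx' => hx ((h x).mpr hx'))]

lemma mw_nonneg {Q : (Fin k → 𝒳) → ℝ} (hQ0 : ∀ q, 0 ≤ Q q)
    (W : (Fin n → Fin k → 𝒳) → Prop) : 0 ≤ mw Q W := by
  unfold mw
  refine Finset.sum_nonneg fun x _ => ?_
  split
  · exact Finset.prod_nonneg fun j _ => hQ0 _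
  · exact le_refl 0

lemma mw_mono {Q : (Fin k → 𝒳) → ℝ} (hQ0 : ∀ q, 0 ≤ Q q)
    {W W' : (Fin n → Fin k → 𝒳) → Prop} (h : ∀ x, W x → W' x) : mw Q W ≤ mw Q W' := by
  unfold mw
  refine Finset.sum_le_sum fun x _ => ?_
  by_cases hx : W x
  · rw [if_pos hx, if_pos (h x hx)]
  · rw [if_neg hx]
    split
    · exact Finset.prod_nonneg fun j _ => hQ0 _
    · exact le_refl 0

lemma mw_true {Q : (Fin k → 𝒳) → ℝ} (hQ1 : ∑ q, Q q = 1)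
    {W : (Fin n → Fin k → 𝒳) → Prop} (h : ∀ x, W x) : mw Q W = 1 := by
  unfold mw
  rw [Finset.sum_congr rfl (fun x _ => if_pos (h x))]
  rw [← Fintype.piFinset_univ, ← Finset.prod_univ_sum]
  simp [hQ1]

lemma mw_decomp {Q : (Fin k → 𝒳) → ℝ} {I : Type} [Fintype I]
    (W : (Fin n → Fin k → 𝒳) → Prop) (pc : I → (Fin n → Fin k → 𝒳) → Prop)
    (huniq : ∀ x m m', pc m x → pc m' x → m = m')
    (hex : ∀ x, W x → ∃ m, pc m x) :
    mw Q W = ∑ m, mw Q (fun x => W x ∧ pc m x) := by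
  classical
  unfold mw
  rw [Finset.sum_comm]
  refine Finset.sum_congr rfl fun x _ => ?_
  by_cases hx : W x
  · obtain ⟨m0, hm0⟩ := hex x hx
    rw [if_pos hx, Finset.sum_eq_single m0]
    · rw [if_pos ⟨hx, hm0⟩]
    · intro m _ hm
      rw [if_neg (fun hc => hm (huniq x m m0 hc.2 hm0))]
    · intro hm; exact absurd (Finset.mem_univ m0) hm
  · rw [if_neg hx]
    exact (Finset.sum_eq_zero fun m _ => if_neg (fun hc : W x ∧ pc m x => hx hc.1)).symm

end Stmt17
namespace Stmt17

lemma select {I : Type} [Fintype I] [Nonempty I] (A B : I → ℝ)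
    (hA : ∀ m, 0 ≤ A m) (hB : ∀ m, 0 ≤ B m) {ε : ℝ} (hε : 0 < ε) (hε2 : ε ≤ 1) :
    ∃ m : I, (ε / 2) * (∑ m', A m') ≤ (Fintype.card I : ℝ) * A m ∧
      (1 - ε / 2) * (∑ m', A m') * B m ≤ A m * (∑ m', B m') := by
  classical
  set T := ∑ m', A m' with hT
  set U := ∑ m', B m' with hU
  have hT0 : 0 ≤ T := Finset.sum_nonneg fun m _ => hA m
  have hU0 : 0 ≤ U := Finset.sum_nonneg fun m _ => hB m
  set good : Finset I := univ.filter (fun m => (1 - ε / 2) * T * B m ≤ A m * U) with hgood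
  -- sum of A over good is at least (ε/2) T
  have hgoodA : (ε / 2) * T ≤ ∑ m ∈ good, A m := by
    have hbad : ∑ m ∈ univ \ good, A m * U ≤ (1 - ε / 2) * T * U := by
      calc ∑ m ∈ univ \ good, A m * U
          ≤ ∑ m ∈ univ \ good, (1 - ε / 2) * T * B m := by
            refine Finset.sum_le_sum fun m hm => ?_
            simp only [hgood, Finset.mem_sdiff, Finset.mem_filter, Finset.mem_univ,
              true_and, not_le] at hm
            exact le_of_lt hm
        _ = (1 - ε / 2) * T * ∑ m ∈ univ \ good, B m := (Finset.mul_sum _ _ _).symm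
        _ ≤ (1 - ε / 2) * T * U := by
            refine mul_le_mul_of_nonneg_left ?_ ?_
            · exact Finset.sum_le_sum_of_subset_of_nonneg (Finset.sdiff_subset)
                (fun m _ _ => hB m)
            · have : 0 ≤ 1 - ε / 2 := by linarith
              exact mul_nonneg this hT0
    rcases eq_or_lt_of_le hU0 with hU1 | hU1
    · -- U = 0 : all B m = 0, so good = univ
      have hBz : ∀ m, B m = 0 := by
        intro m
        have := Finset.sum_eq_zero_iff_of_nonneg (fun m _ => hB m) |>.mp hU1.symm
        exact this m (Finset.mem_univ m)
      have : good = univ := by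
        refine Finset.eq_univ_iff_forall.mpr fun m => ?_
        simp only [hgood, Finset.mem_filter, Finset.mem_univ, true_and, hBz m, mul_zero]
        exact mul_nonneg (hA m) hU0
      rw [this]
      nlinarith
    · -- U > 0
      have hbadA : ∑ m ∈ univ \ good, A m ≤ (1 - ε / 2) * T := by
        have := hbad
        rw [← Finset.sum_mul] at this
        nlinarith
      have hsplit : (∑ m ∈ univ \ good, A m) + ∑ m ∈ good, A m = T := by
        rw [hT]
        exact Finset.sum_sdiff (Finset.subset_univ good)
      linarith
  -- good is nonempty
  have hgoodne : good.Nonempty := by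
    rcases Finset.eq_empty_or_nonempty good with hge | hge
    · exfalso
      rw [hge, Finset.sum_empty] at hgoodA
      have hTz : T = 0 := by nlinarith
      have hAz : ∀ m, A m = 0 := fun m =>
        (Finset.sum_eq_zero_iff_of_nonneg (fun m _ => hA m)).mp hTz m (Finset.mem_univ m)
      obtain ⟨m⟩ := ‹Nonempty I›
      have : m ∈ good := by
        simp only [hgood, Finset.mem_filter, Finset.mem_univ, true_and, hTz, hAz m]
        simp
      rw [hge] at this
      exact absurd this (Finset.notMem_empty m)
    · exact hge
  -- pick the max of A over good
  obtain ⟨m0, hm0g, hm0max⟩ := Finset.exists_max_image good A hgoodne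
  refine ⟨m0, ?_, ?_⟩
  · calc (ε / 2) * T ≤ ∑ m ∈ good, A m := hgoodA
      _ ≤ ∑ _m ∈ good, A m0 := Finset.sum_le_sum fun m hm => hm0max m hm
      _ = (good.card : ℝ) * A m0 := by rw [Finset.sum_const, nsmul_eq_mul]
      _ ≤ (Fintype.card I : ℝ) * A m0 := by
          refine mul_le_mul_of_nonneg_right ?_ (hA m0)
          exact_mod_cast Finset.card_le_card (Finset.subset_univ good)
  · have := Finset.mem_filter.mp (hgood ▸ hm0g)
    exact this.2

section Main

variable {𝒳 𝒴 : Type} [Fintype 𝒳] [Fintype 𝒴] [DecidableEq 𝒳] [DecidableEq 𝒴]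
  [Nonempty 𝒳] [Nonempty 𝒴] {k n : ℕ}

variable (Win : (Fin k → 𝒳) → (Fin k → 𝒴) → Bool) (f : Fin k → (Fin n → 𝒳) → Fin n → 𝒴)

/-- answers at coordinate `j` -/
def ans (x : Fin n → Fin k → 𝒳) (j : Fin n) : Fin k → 𝒴 :=
  fun i => f i (fun j' => x j' i) j

/-- product event -/
def predE (E : Fin k → Finset (Fin n → 𝒳)) (x : Fin n → Fin k → 𝒳) : Prop :=
  ∀ i, (fun j => x j i) ∈ E i

/-- win at coordinate `j` -/
def winAt (j : Fin n) (x : Fin n → Fin k → 𝒳) : Prop :=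
  Win (x j) (ans f x j) = true

/-- win everywhere -/
def Wall (x : Fin n → Fin k → 𝒳) : Prop := ∀ j, winAt Win f j x

/-- restricted product event -/
def restr (E : Fin k → Finset (Fin n → 𝒳)) (j : Fin n) (q : Fin k → 𝒳) (a : Fin k → 𝒴) :
    Fin k → Finset (Fin n → 𝒳) :=
  fun i => (E i).filter (fun y => y j = q i ∧ f i y j = a i)

lemma predE_restr (E : Fin k → Finset (Fin n → 𝒳)) (j : Fin n) (q : Fin k → 𝒳)
    (a : Fin k → 𝒴) (x : Fin n → Fin k → 𝒳) :
    predE (restr f E j q a) x ↔ predE E x ∧ (x j = q ∧ ans f x j = a) := by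
  unfold predE restr ans
  constructor
  · intro h
    refine ⟨fun i => (Finset.mem_filter.mp (h i)).1, ?_, ?_⟩
    · funext i; exact ((Finset.mem_filter.mp (h i)).2).1
    · funext i; exact ((Finset.mem_filter.mp (h i)).2).2
  · rintro ⟨h1, h2, h3⟩ i
    refine Finset.mem_filter.mpr ⟨h1 i, congrFun h2 i, congrFun h3 i⟩

set_option maxHeartbeats 1000000 in
lemma mw_exists_of_pos {Q : (Fin k → 𝒳) → ℝ} {W : (Fin n → Fin k → 𝒳) → Prop}
    (h : 0 < mw Q W) : ∃ x, W x := by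
  by_contra hc
  push_neg at hc
  have : mw Q W = 0 := by
    unfold mw
    exact Finset.sum_eq_zero fun x _ => if_neg (hc x)
  rw [this] at h
  exact lt_irrefl 0 h

set_option maxHeartbeats 1000000 in
lemma iterate (Q : (Fin k → 𝒳) → ℝ) (hQ0 : ∀ q, 0 ≤ Q q) (hQ1 : ∑ q, Q q = 1)
    (Win : (Fin k → 𝒳) → (Fin k → 𝒴) → Bool) (f : Fin k → (Fin n → 𝒳) → Fin n → 𝒴)
    {ε r M γ : ℝ} (hε : 0 < ε) (hε2 : ε ≤ 1/2) (hr : 0 < r)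
    (hM : M = (Fintype.card ((Fin k → 𝒳) × (Fin k → 𝒴)) : ℝ)) (hM1 : 1 ≤ M)
    (hγ : γ = (1 - ε/2)/(1-ε))
    (Hc : ∀ E : Fin k → Finset (Fin n → 𝒳), r ≤ mw Q (predE E) →
      ∃ j : Fin n, mw Q (fun x => predE E x ∧ winAt Win f j x) ≤ (1-ε) * mw Q (predE E))
    (s : ℕ) :
    (∃ E : Fin k → Finset (Fin n → 𝒳),
      γ^s * mw Q (Wall Win f) * mw Q (predE E)
          ≤ mw Q (fun x => Wall Win f x ∧ predE E x) ∧
      (ε/(2*M))^s * mw Q (Wall Win f)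
          ≤ mw Q (fun x => Wall Win f x ∧ predE E x)) ∨
    mw Q (Wall Win f) ≤ (2*M/ε)^s * r := by
  have hM0 : (0:ℝ) < M := lt_of_lt_of_le one_pos hM1
  have h1ε : (0:ℝ) < 1 - ε := by linarith
  have hD1 : (1:ℝ) ≤ 2*M/ε := by
    rw [le_div_iff₀ hε]; linarith
  have hv0 : 0 ≤ mw Q (Wall Win f) := mw_nonneg hQ0 _
  induction s with
  | zero =>
    left
    refine ⟨fun _ => univ, ?_, ?_⟩
    · have he : mw Q (predE (fun _ => (univ : Finset (Fin n → 𝒳)))) = 1 :=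
        mw_true hQ1 (fun x i => Finset.mem_univ _)
      have hw : mw Q (fun x => Wall Win f x ∧ predE (fun _ => (univ : Finset (Fin n → 𝒳))) x)
          = mw Q (Wall Win f) :=
        mw_congr fun x => ⟨fun h => h.1, fun h => ⟨h, fun i => Finset.mem_univ _⟩⟩
      rw [he, hw, pow_zero, one_mul, mul_one]
    · have hw : mw Q (fun x => Wall Win f x ∧ predE (fun _ => (univ : Finset (Fin n → 𝒳))) x)
          = mw Q (Wall Win f) :=
        mw_congr fun x => ⟨fun h => h.1, fun h => ⟨h, fun i => Finset.mem_univ _⟩⟩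
      rw [hw, pow_zero, one_mul]
  | succ s IH =>
    rcases IH with ⟨E, h1, h2⟩ | hle
    swap
    · right
      calc mw Q (Wall Win f) ≤ (2*M/ε)^s * r := hle
        _ ≤ (2*M/ε)^(s+1) * r := by
            refine mul_le_mul_of_nonneg_right ?_ (le_of_lt hr)
            exact pow_le_pow_right₀ hD1 (Nat.le_succ s)
    rcases le_or_gt (mw Q (Wall Win f)) 0 with hv | hv
    · right
      have : 0 ≤ (2*M/ε)^(s+1) * r := by positivity
      linarith
    -- v > 0
    set v := mw Q (Wall Win f) with hvdef
    set B := mw Q (predE E) with hBdef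
    set A := mw Q (fun x => Wall Win f x ∧ predE E x) with hAdef
    have hA0 : 0 ≤ A := mw_nonneg hQ0 _
    have hB0 : 0 ≤ B := mw_nonneg hQ0 _
    have hAB : A ≤ B := mw_mono hQ0 fun x hx => hx.2
    rcases lt_or_ge B r with hBr | hBr
    · right
      -- v ≤ (2M/ε)^s * B ≤ (2M/ε)^(s+1) * r
      have hpow : (2*M/ε)^s * (ε/(2*M))^s = 1 := by
        rw [← mul_pow]
        have : (2*M/ε) * (ε/(2*M)) = 1 := by field_simp
        rw [this, one_pow]
      have step1 : v ≤ (2*M/ε)^s * A := by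
        have := mul_le_mul_of_nonneg_left h2 (le_of_lt (by positivity : (0:ℝ) < (2*M/ε)^s))
        calc v = (2*M/ε)^s * (ε/(2*M))^s * v := by rw [hpow, one_mul]
          _ = (2*M/ε)^s * ((ε/(2*M))^s * v) := by ring
          _ ≤ (2*M/ε)^s * A := this
      have step2 : (2*M/ε)^s * A ≤ (2*M/ε)^s * r := by
        refine mul_le_mul_of_nonneg_left ?_ (by positivity)
        linarith
      have step3 : (2*M/ε)^s * r ≤ (2*M/ε)^(s+1) * r :=
        mul_le_mul_of_nonneg_right (pow_le_pow_right₀ hD1 (Nat.le_succ s)) (le_of_lt hr)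
      linarith
    -- B ≥ r : apply the criterion
    obtain ⟨j, hj⟩ := Hc E hBr
    -- decompose into pieces
    set pc : ((Fin k → 𝒳) × (Fin k → 𝒴)) → (Fin n → Fin k → 𝒳) → Prop :=
      fun m x => x j = m.1 ∧ ans f x j = m.2 with hpc
    have huniq : ∀ x m m', pc m x → pc m' x → m = m' := by
      rintro x m m' ⟨ha, hb⟩ ⟨ha', hb'⟩
      exact Prod.ext (ha ▸ ha') (hb ▸ hb')
    have hexist : ∀ (P : (Fin n → Fin k → 𝒳) → Prop) x, P x → ∃ m, pc m x :=
      fun P x _ => ⟨(x j, ans f x j), rfl, rfl⟩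
    set A' : ((Fin k → 𝒳) × (Fin k → 𝒴)) → ℝ :=
      fun m => mw Q (fun x => (Wall Win f x ∧ predE E x) ∧ pc m x) with hA'
    set B' : ((Fin k → 𝒳) × (Fin k → 𝒴)) → ℝ :=
      fun m => mw Q (fun x => (predE E x ∧ winAt Win f j x) ∧ pc m x) with hB'
    have hsumA : ∑ m, A' m = A :=
      (mw_decomp _ pc huniq (hexist _)).symm
    have hsumB : ∑ m, B' m = mw Q (fun x => predE E x ∧ winAt Win f j x) :=
      (mw_decomp _ pc huniq (hexist _)).symm
    obtain ⟨m0, hsel1, hsel2⟩ := select A' B'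
      (fun m => mw_nonneg hQ0 _) (fun m => mw_nonneg hQ0 _) hε (by linarith)
    rw [hsumA] at hsel1
    rw [hsumA, hsumB] at hsel2
    rw [← hM] at hsel1
    -- A' m0 is positive
    have hApos : 0 < A := lt_of_lt_of_le (by positivity) h2
    have hA'pos : 0 < A' m0 := by nlinarith
    -- the chosen piece is winning
    have hWinm0 : Win m0.1 m0.2 = true := by
      obtain ⟨x, hx⟩ := mw_exists_of_pos hA'pos
      have hwj : winAt Win f j x := hx.1.1 j
      unfold winAt at hwj
      rw [hx.2.1, hx.2.2] at hwj
      exact hwj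
    -- the new product event
    refine Or.inl ⟨restr f E j m0.1 m0.2, ?_, ?_⟩
    · -- ratio invariant
      have hBeq : mw Q (predE (restr f E j m0.1 m0.2)) = B' m0 := by
        refine mw_congr fun x => ?_
        rw [predE_restr]
        constructor
        · rintro ⟨hE, hq, ha⟩
          refine ⟨⟨hE, ?_⟩, hq, ha⟩
          unfold winAt
          rw [hq, ha]
          exact hWinm0
        · rintro ⟨⟨hE, _⟩, hq, ha⟩
          exact ⟨hE, hq, ha⟩
      have hAeq : mw Q (fun x => Wall Win f x ∧ predE (restr f E j m0.1 m0.2) x) = A' m0 := by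
        refine mw_congr fun x => ?_
        rw [predE_restr]
        tauto
      rw [hBeq, hAeq]
      have hB'0 : 0 ≤ B' m0 := mw_nonneg hQ0 _
      have key : (1 - ε/2) * (γ^s * v * B) * B' m0 ≤ A' m0 * ((1-ε) * B) := by
        have h120 : (0:ℝ) ≤ (1 - ε/2) := by linarith
        have k1 : (1 - ε/2) * (γ^s * v * B) * B' m0 ≤ (1 - ε/2) * A * B' m0 :=
          mul_le_mul_of_nonneg_right (mul_le_mul_of_nonneg_left h1 h120) hB'0
        have k2 : A' m0 * mw Q (fun x => predE E x ∧ winAt Win f j x)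
            ≤ A' m0 * ((1-ε) * B) :=
          mul_le_mul_of_nonneg_left hj (le_of_lt hA'pos)
        linarith
      have hγpos : 0 < γ := by rw [hγ]; exact div_pos (by linarith) h1ε
      have hfac : γ^(s+1) * v * B' m0 * ((1-ε) * B) = (1 - ε/2) * (γ^s * v * B) * B' m0 := by
        rw [pow_succ, hγ]
        field_simp
      have hBpos : 0 < B := lt_of_lt_of_le hr hBr
      have : γ^(s+1) * v * B' m0 * ((1-ε) * B) ≤ A' m0 * ((1-ε) * B) := by
        rw [hfac]; exact key
      exact le_of_mul_le_mul_right this (by positivity)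
    · -- mass invariant
      have hAeq : mw Q (fun x => Wall Win f x ∧ predE (restr f E j m0.1 m0.2) x) = A' m0 := by
        refine mw_congr fun x => ?_
        rw [predE_restr]
        tauto
      rw [hAeq]
      have hfac : M * ((ε/(2*M))^(s+1) * v) = (ε/2) * ((ε/(2*M))^s * v) := by
        rw [pow_succ]
        field_simp
      have step : M * ((ε/(2*M))^(s+1) * v) ≤ M * A' m0 := by
        rw [hfac]
        calc (ε/2) * ((ε/(2*M))^s * v) ≤ (ε/2) * A :=
              mul_le_mul_of_nonneg_left h2 (by positivity)
          _ ≤ M * A' m0 := hsel1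
      exact le_of_mul_le_mul_left step hM0

end Main

end Stmt17

set_option maxHeartbeats 1600000 in
/-- Parallel repetition criterion.  `G = (𝒳, 𝒴, Q, Win)` is a `k`-player game with
query distribution `Q` and winning predicate `Win`.  For the `n`-fold repetition,
questions are `x : Fin n → (Fin k → 𝒳)` with weight `∏ⱼ Q(xⱼ)`, and a (product)
strategy is `f : Fin k → (Fin n → 𝒳) → (Fin n → 𝒴)`.  Suppose `ρ(n) ≥ e^{−O(n)}`
and `ε > 0` are such that for every `n ≥ 1` and every product event
`E = E₁ × ⋯ × E_k` with `Qⁿ(E) ≥ ρ(n)`, some coordinate `j` has conditioned value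
`v^j(Gⁿ | (Qⁿ|E)) ≤ 1 − ε`.  Then `v(Gⁿ) ≤ K·ρ(n)^c` for constants `K, c > 0`,
i.e. `v(Gⁿ) ≤ ρ(n)^{Ω(1)}`. -/
theorem stmt_17 (𝒳 𝒴 : Type) [Fintype 𝒳] [Fintype 𝒴] [DecidableEq 𝒳] [DecidableEq 𝒴]
    [Nonempty 𝒳] [Nonempty 𝒴] (k : ℕ)
    (Q : (Fin k → 𝒳) → ℝ) (hQ0 : ∀ q, 0 ≤ Q q) (hQ1 : ∑ q, Q q = 1)
    (Win : (Fin k → 𝒳) → (Fin k → 𝒴) → Bool)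
    (ρ : ℕ → ℝ) (ε : ℝ) (hε : 0 < ε)
    (hρ : ∃ C : ℝ, 0 < C ∧ ∀ n : ℕ, 1 ≤ n → Real.exp (-(C * n)) ≤ ρ n)
    (hcrit : ∀ n : ℕ, 1 ≤ n → ∀ E : Fin k → Finset (Fin n → 𝒳),
      ρ n ≤ (∑ x : Fin n → Fin k → 𝒳,
        if ∀ i : Fin k, (fun j => x j i) ∈ E i then ∏ j, Q (x j) else 0) →
      ∃ j : Fin n, ∀ f : Fin k → (Fin n → 𝒳) → Fin n → 𝒴,
        (∑ x : Fin n → Fin k → 𝒳,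
            if (∀ i : Fin k, (fun j' => x j' i) ∈ E i) ∧
                Win (x j) (fun i => f i (fun j' => x j' i) j) = true
            then ∏ j', Q (x j') else 0) /
          (∑ x : Fin n → Fin k → 𝒳,
            if ∀ i : Fin k, (fun j' => x j' i) ∈ E i then ∏ j', Q (x j') else 0)
          ≤ 1 - ε) :
    ∃ c K : ℝ, 0 < c ∧ 0 < K ∧ ∀ n : ℕ, 1 ≤ n →
      ∀ f : Fin k → (Fin n → 𝒳) → Fin n → 𝒴,
        (∑ x : Fin n → Fin k → 𝒳,
          if ∀ j : Fin n, Win (x j) (fun i => f i (fun j' => x j' i) j) = true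
          then ∏ j, Q (x j) else 0) ≤ K * ρ n ^ c := by
  obtain ⟨C, hC0, hρC⟩ := hρ
  set ε' : ℝ := min ε (1/2) with hε'def
  have hε'0 : 0 < ε' := lt_min hε (by norm_num)
  have hε'2 : ε' ≤ 1/2 := min_le_right _ _
  have hε'le : ε' ≤ ε := min_le_left _ _
  set M : ℝ := (Fintype.card ((Fin k → 𝒳) × (Fin k → 𝒴)) : ℝ) with hMdef
  have hM1 : 1 ≤ M := by
    have h := Fintype.card_pos (α := (Fin k → 𝒳) × (Fin k → 𝒴))
    rw [hMdef]
    exact_mod_cast h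
  have hM0 : 0 < M := lt_of_lt_of_le one_pos hM1
  set γ : ℝ := (1 - ε'/2)/(1 - ε') with hγdef
  have h1ε' : 0 < 1 - ε' := by linarith
  have hγ1 : 1 < γ := by rw [hγdef, lt_div_iff₀ h1ε']; linarith
  have hγ0 : 0 < γ := lt_trans one_pos hγ1
  have hD1 : 1 < 2*M/ε' := by rw [lt_div_iff₀ hε'0]; linarith
  have hD0 : 0 < 2*M/ε' := lt_trans one_pos hD1
  set β : ℝ := Real.log (2*M/ε') / Real.log γ with hβdef
  have hlogγ : 0 < Real.log γ := Real.log_pos hγ1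
  have hlogD : 0 < Real.log (2*M/ε') := Real.log_pos hD1
  have hβ0 : 0 < β := div_pos hlogD hlogγ
  have h1β : (0:ℝ) < 1 + β := by linarith
  refine ⟨(1+β)⁻¹, (2*M/ε') * (2*M/ε'), by positivity, by positivity, ?_⟩
  intro n hn f
  have hr : 0 < ρ n := lt_of_lt_of_le (Real.exp_pos _) (hρC n hn)
  have hrpow : 0 < ρ n ^ ((1+β)⁻¹ : ℝ) := Real.rpow_pos_of_pos hr _
  have hbridge : (∑ x : Fin n → Fin k → 𝒳,
      if ∀ j : Fin n, Win (x j) (fun i => f i (fun j' => x j' i) j) = true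
      then ∏ j, Q (x j) else 0) = Stmt17.mw Q (Stmt17.Wall Win f) := by
    unfold Stmt17.mw Stmt17.Wall Stmt17.winAt Stmt17.ans
    refine Finset.sum_congr rfl fun x _ => ?_
    by_cases h : ∀ j : Fin n, Win (x j) (fun i => f i (fun j' => x j' i) j) = true <;>
      simp [h]
  rw [hbridge]
  set v := Stmt17.mw Q (Stmt17.Wall Win f) with hvdef
  have hv0 : 0 ≤ v := Stmt17.mw_nonneg hQ0 _
  have hv1 : v ≤ 1 := by
    calc v ≤ Stmt17.mw Q (fun _ => True) := Stmt17.mw_mono hQ0 (fun x _ => trivial)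
      _ = 1 := Stmt17.mw_true hQ1 (fun _ => trivial)
  rcases le_or_gt v 0 with hvle | hv
  · have : 0 < (2*M/ε') * (2*M/ε') * ρ n ^ ((1+β)⁻¹ : ℝ) := by positivity
    linarith
  -- derive the abstract criterion
  have Hc : ∀ E : Fin k → Finset (Fin n → 𝒳), ρ n ≤ Stmt17.mw Q (Stmt17.predE E) →
      ∃ j : Fin n, Stmt17.mw Q (fun x => Stmt17.predE E x ∧ Stmt17.winAt Win f j x)
        ≤ (1 - ε') * Stmt17.mw Q (Stmt17.predE E) := by
    intro E hE
    have hden : (∑ x : Fin n → Fin k → 𝒳,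
        if ∀ i : Fin k, (fun j => x j i) ∈ E i then ∏ j, Q (x j) else 0)
        = Stmt17.mw Q (Stmt17.predE E) := by
      unfold Stmt17.mw Stmt17.predE
      refine Finset.sum_congr rfl fun x _ => ?_
      by_cases h : ∀ i : Fin k, (fun j => x j i) ∈ E i <;> simp [h]
    obtain ⟨j, hj⟩ := hcrit n hn E (by rw [hden]; exact hE)
    refine ⟨j, ?_⟩
    have hnum : (∑ x : Fin n → Fin k → 𝒳,
        if (∀ i : Fin k, (fun j' => x j' i) ∈ E i) ∧
            Win (x j) (fun i => f i (fun j' => x j' i) j) = true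
        then ∏ j', Q (x j') else 0)
        = Stmt17.mw Q (fun x => Stmt17.predE E x ∧ Stmt17.winAt Win f j x) := by
      unfold Stmt17.mw Stmt17.predE Stmt17.winAt Stmt17.ans
      refine Finset.sum_congr rfl fun x _ => ?_
      by_cases h : (∀ i : Fin k, (fun j' => x j' i) ∈ E i) ∧
          Win (x j) (fun i => f i (fun j' => x j' i) j) = true <;> simp [h]
    have hdenpos : 0 < Stmt17.mw Q (Stmt17.predE E) := lt_of_lt_of_le hr hE
    have hjf := hj f
    rw [hnum, hden, div_le_iff₀ hdenpos] at hjf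
    calc Stmt17.mw Q (fun x => Stmt17.predE E x ∧ Stmt17.winAt Win f j x)
        ≤ (1 - ε) * Stmt17.mw Q (Stmt17.predE E) := hjf
      _ ≤ (1 - ε') * Stmt17.mw Q (Stmt17.predE E) :=
          mul_le_mul_of_nonneg_right (by linarith) hdenpos.le
  -- choose the number of steps
  set s : ℕ := ⌈Real.log (1/v) / Real.log γ⌉₊ + 1 with hsdef
  have hlogv0 : 0 ≤ Real.log (1/v) := Real.log_nonneg (one_le_one_div hv hv1)
  have hsx : Real.log (1/v) / Real.log γ ≤ (⌈Real.log (1/v) / Real.log γ⌉₊ : ℝ) :=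
    Nat.le_ceil _
  have hslb : Real.log (1/v) < (s:ℝ) * Real.log γ := by
    have h1 : (Real.log (1/v) / Real.log γ) * Real.log γ = Real.log (1/v) :=
      div_mul_cancel₀ _ (ne_of_gt hlogγ)
    have h2 : (Real.log (1/v) / Real.log γ) * Real.log γ
        ≤ (⌈Real.log (1/v) / Real.log γ⌉₊ : ℝ) * Real.log γ :=
      mul_le_mul_of_nonneg_right hsx hlogγ.le
    have h3 : (s:ℝ) = (⌈Real.log (1/v) / Real.log γ⌉₊ : ℝ) + 1 := by
      rw [hsdef]; push_cast; ring
    rw [h3]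
    nlinarith
  have hγs : 1 < γ^s * v := by
    have e1 : (γ:ℝ)^s = Real.exp ((s:ℝ) * Real.log γ) := by
      rw [← Real.log_pow, Real.exp_log (pow_pos hγ0 s)]
    have e2 : 1/v = Real.exp (Real.log (1/v)) := (Real.exp_log (by positivity)).symm
    have h2 : 1/v < γ^s := by
      rw [e1, e2]; exact Real.exp_lt_exp.mpr hslb
    calc 1 = (1/v) * v := by field_simp
      _ < γ^s * v := mul_lt_mul_of_pos_right h2 hv
  rcases Stmt17.iterate Q hQ0 hQ1 Win f hε'0 hε'2 hr hMdef hM1 hγdef Hc s with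
    ⟨E, h1, h2⟩ | hvD
  · -- impossible: conditional probability exceeds one
    exfalso
    have hA0 : 0 ≤ Stmt17.mw Q (fun x => Stmt17.Wall Win f x ∧ Stmt17.predE E x) :=
      Stmt17.mw_nonneg hQ0 _
    have hAB : Stmt17.mw Q (fun x => Stmt17.Wall Win f x ∧ Stmt17.predE E x)
        ≤ Stmt17.mw Q (Stmt17.predE E) := Stmt17.mw_mono hQ0 fun x hx => hx.2
    have hApos : 0 < Stmt17.mw Q (fun x => Stmt17.Wall Win f x ∧ Stmt17.predE E x) :=
      lt_of_lt_of_le (by positivity) h2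
    have hBpos : 0 < Stmt17.mw Q (Stmt17.predE E) := lt_of_lt_of_le hApos hAB
    have := mul_lt_mul_of_pos_right hγs hBpos
    rw [one_mul] at this
    nlinarith
  · -- the main bound
    have hsub : (s:ℝ) ≤ Real.log (1/v)/Real.log γ + 2 := by
      have hceil : (⌈Real.log (1/v) / Real.log γ⌉₊ : ℝ) < Real.log (1/v)/Real.log γ + 1 :=
        Nat.ceil_lt_add_one (by positivity)
      have h3 : (s:ℝ) = (⌈Real.log (1/v) / Real.log γ⌉₊ : ℝ) + 1 := by
        rw [hsdef]; push_cast; ring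
      linarith
    have hDs : (2*M/ε')^s ≤ Real.exp ((Real.log (1/v)/Real.log γ + 2) * Real.log (2*M/ε')) := by
      have e1 : (2*M/ε')^s = Real.exp ((s:ℝ) * Real.log (2*M/ε')) := by
        rw [← Real.log_pow, Real.exp_log (pow_pos hD0 s)]
      rw [e1]
      exact Real.exp_le_exp.mpr (mul_le_mul_of_nonneg_right hsub hlogD.le)
    have hexp_split : (Real.log (1/v)/Real.log γ + 2) * Real.log (2*M/ε')
        = β * Real.log (1/v) + 2 * Real.log (2*M/ε') := by
      rw [hβdef]; field_simp
    have hexp2 : Real.exp (2 * Real.log (2*M/ε')) = (2*M/ε') * (2*M/ε') := by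
      rw [two_mul, Real.exp_add, Real.exp_log hD0]
    have hvD2 : v ≤ Real.exp (β * Real.log (1/v)) * ((2*M/ε') * (2*M/ε')) * ρ n := by
      calc v ≤ (2*M/ε')^s * ρ n := hvD
        _ ≤ Real.exp ((Real.log (1/v)/Real.log γ + 2) * Real.log (2*M/ε')) * ρ n :=
            mul_le_mul_of_nonneg_right hDs hr.le
        _ = Real.exp (β * Real.log (1/v)) * ((2*M/ε') * (2*M/ε')) * ρ n := by
            rw [hexp_split, Real.exp_add, hexp2]
    have hloginv : Real.log (1/v) = - Real.log v := by
      rw [one_div, Real.log_inv]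
    have hcancel : Real.exp (β * Real.log (1/v)) * Real.exp (β * Real.log v) = 1 := by
      rw [← Real.exp_add, hloginv]
      ring_nf
      exact Real.exp_zero
    have hkey : v ^ ((1:ℝ)+β) ≤ (2*M/ε') * (2*M/ε') * ρ n := by
      have hm := mul_le_mul_of_nonneg_right hvD2 (Real.exp_pos (β * Real.log v)).le
      have hlhs : v * Real.exp (β * Real.log v) = v ^ ((1:ℝ)+β) := by
        rw [Real.rpow_def_of_pos hv]
        rw [mul_comm (Real.log v) ((1:ℝ)+β), add_mul, one_mul, Real.exp_add,
          Real.exp_log hv]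
      have hrhs : Real.exp (β * Real.log (1/v)) * ((2*M/ε') * (2*M/ε')) * ρ n
          * Real.exp (β * Real.log v) = (2*M/ε') * (2*M/ε') * ρ n := by
        calc Real.exp (β * Real.log (1/v)) * ((2*M/ε') * (2*M/ε')) * ρ n
              * Real.exp (β * Real.log v)
            = (Real.exp (β * Real.log (1/v)) * Real.exp (β * Real.log v))
              * ((2*M/ε') * (2*M/ε') * ρ n) := by ring
          _ = (2*M/ε') * (2*M/ε') * ρ n := by rw [hcancel, one_mul]
      rw [hlhs, hrhs] at hm
      exact hm
    have hvrw : (v ^ ((1:ℝ)+β)) ^ ((1+β)⁻¹ : ℝ) = v := by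
      rw [← Real.rpow_mul hv0, mul_inv_cancel₀ (ne_of_gt h1β), Real.rpow_one]
    calc v = (v ^ ((1:ℝ)+β)) ^ ((1+β)⁻¹ : ℝ) := hvrw.symm
      _ ≤ ((2*M/ε') * (2*M/ε') * ρ n) ^ ((1+β)⁻¹ : ℝ) :=
          Real.rpow_le_rpow (Real.rpow_nonneg hv0 _) hkey (by positivity)
      _ = ((2*M/ε') * (2*M/ε')) ^ ((1+β)⁻¹ : ℝ) * ρ n ^ ((1+β)⁻¹ : ℝ) :=
          Real.mul_rpow (by positivity) hr.le
      _ ≤ ((2*M/ε') * (2*M/ε')) * ρ n ^ ((1+β)⁻¹ : ℝ) := by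
          refine mul_le_mul_of_nonneg_right ?_ (Real.rpow_nonneg hr.le _)
          have hc1 : ((1+β)⁻¹:ℝ) ≤ 1 := by
            rw [inv_le_one_iff₀]
            right
            linarith
          calc ((2*M/ε') * (2*M/ε')) ^ ((1+β)⁻¹:ℝ)
                ≤ ((2*M/ε') * (2*M/ε')) ^ (1:ℝ) :=
              Real.rpow_le_rpow_of_exponent_le (by nlinarith) hc1
            _ = (2*M/ε') * (2*M/ε') := Real.rpow_one _
end
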